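/- arXiv:1611.08748 — 5 statements merged into one kernel-verified Lean document; each statement's English description precedes it below -/
import Mathlib

section
/- Suppose x₀ ∈ [0,1] is an isolated point of local maximum of m, i.e. there exists ε₀ > 0 such that m(x₀) > m(y) for every y ∈ ((x₀ − ε₀, x₀ + ε₀) ∩ [0,1]) \ {x₀}. Then limsup_{s→∞} λ₁ᴺ(s) ≤ c(x₀). -/
open MeasureTheory Filter Set

/-- The Neumann principal eigenvalue of `-φ'' - 2 s m' φ' + c φ = λ φ` on `(0,1)`,
via its variational characterization. -/
noncomputable def lambdaN (m c : ℝ → ℝ) (s : ℝ) : ℝ :=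
  sInf {l : ℝ | ∃ φ : ℝ → ℝ, ContDiff ℝ 1 φ ∧
    (∫ x in (0:ℝ)..1, Real.exp (2 * s * m x) * (φ x) ^ 2) = 1 ∧
    l = ∫ x in (0:ℝ)..1, Real.exp (2 * s * m x) * ((deriv φ x) ^ 2 + c x * (φ x) ^ 2)}

set_option maxHeartbeats 2000000 in
/-- If `x₀ ∈ [0,1]` is an isolated point of local maximum of `m`, then
`limsup_{s→∞} λ₁ᴺ(s) ≤ c x₀`. -/
theorem limsup_lambdaN_le_of_isolated_local_max
    (m c : ℝ → ℝ) (hm : ContDiff ℝ 2 m) (hc : Continuous c)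
    (x₀ : ℝ) (hx₀ : x₀ ∈ Set.Icc (0:ℝ) 1)
    (hmax : ∃ ε₀ > (0:ℝ),
      ∀ y ∈ (Set.Ioo (x₀ - ε₀) (x₀ + ε₀) ∩ Set.Icc (0:ℝ) 1) \ {x₀}, m y < m x₀) :
    Filter.limsup (lambdaN m c) Filter.atTop ≤ c x₀ := by
  obtain ⟨ε₀, hε₀, hmax⟩ := hmax
  have hmc : Continuous m := hm.continuous
  -- minimum of c on [0,1]
  obtain ⟨xm, hxm, hxmle'⟩ := isCompact_Icc.exists_isMinOn
    (⟨0, by norm_num⟩ : (Set.Icc (0:ℝ) 1).Nonempty) hc.continuousOn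
  have hxmle : ∀ x ∈ Set.Icc (0:ℝ) 1, c xm ≤ c x := fun x hx => hxmle' hx
  -- the lower bound: every element of the Rayleigh set is ≥ c xm
  have hlb : ∀ s : ℝ, ∀ l ∈ {l : ℝ | ∃ φ : ℝ → ℝ, ContDiff ℝ 1 φ ∧
      (∫ x in (0:ℝ)..1, Real.exp (2 * s * m x) * (φ x) ^ 2) = 1 ∧
      l = ∫ x in (0:ℝ)..1, Real.exp (2 * s * m x) *
        ((deriv φ x) ^ 2 + c x * (φ x) ^ 2)}, c xm ≤ l := by
    rintro s l ⟨φ, hφ, hφn, rfl⟩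
    have hcφ : Continuous φ := hφ.continuous
    have hcd : Continuous (deriv φ) := hφ.continuous_deriv le_rfl
    have hce : Continuous fun x => Real.exp (2 * s * m x) :=
      Real.continuous_exp.comp ((continuous_const.mul hmc))
    have h1 : (∫ x in (0:ℝ)..1, c xm * (Real.exp (2 * s * m x) * (φ x) ^ 2)) = c xm := by
      rw [intervalIntegral.integral_const_mul, hφn, mul_one]
    rw [← h1]
    apply intervalIntegral.integral_mono_on (by norm_num)
    · exact ((continuous_const.mul (hce.mul (hcφ.pow 2)))).intervalIntegrable _ _
    · exact (hce.mul ((hcd.pow 2).add (hc.mul (hcφ.pow 2)))).intervalIntegrable _ _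
    · intro x hx
      have hcc : c xm ≤ c x := hxmle x hx
      nlinarith [Real.exp_pos (2 * s * m x), sq_nonneg (deriv φ x), sq_nonneg (φ x),
        mul_nonneg (mul_nonneg (Real.exp_pos (2 * s * m x)).le (sub_nonneg.mpr hcc))
          (sq_nonneg (φ x))]
  refine le_of_forall_pos_le_add fun η hη => ?_
  -- continuity of c at x₀
  obtain ⟨ε₁, hε₁, hcε⟩ := Metric.continuousAt_iff.mp hc.continuousAt (η/2) (by positivity)
  set ε : ℝ := min (min (ε₀/2) (ε₁/2)) (4⁻¹ : ℝ) with hεdef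
  have hεpos : 0 < ε := by
    apply lt_min (lt_min (by linarith) (by linarith)); norm_num
  have hεε₀ : ε < ε₀ := lt_of_le_of_lt ((min_le_left _ _).trans (min_le_left _ _)) (by linarith)
  have hεε₁ : ε < ε₁ := lt_of_le_of_lt ((min_le_left _ _).trans (min_le_right _ _)) (by linarith)
  have hε1 : ε ≤ 4⁻¹ := min_le_right _ _
  -- bump function
  set f : ContDiffBump x₀ := ⟨ε/2, ε, by positivity, by linarith⟩ with hfdef
  have hrIn : f.rIn = ε/2 := rfl
  have hrOut : f.rOut = ε := rfl
  have hcontf : Continuous ⇑f := f.continuous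
  have hcontf' : Continuous (deriv ⇑f) := (f.contDiff (n := 1)).continuous_deriv le_rfl
  -- derivative vanishes off the annulus
  have hd0_in : ∀ y, dist y x₀ < ε/2 → deriv (⇑f) y = 0 := by
    intro y hy
    have hev : (⇑f) =ᶠ[nhds y] fun _ => 1 := by
      have hmem : y ∈ Metric.ball x₀ f.rIn := by rw [Metric.mem_ball, hrIn]; exact hy
      exact f.eventuallyEq_one_of_mem_ball hmem
    rw [hev.deriv_eq]; exact deriv_const y 1
  have hd0_out : ∀ y, ε < dist y x₀ → deriv (⇑f) y = 0 := by
    intro y hy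
    have hev : (⇑f) =ᶠ[nhds y] fun _ => 0 := by
      have hmem : y ∈ (Metric.closedBall x₀ ε)ᶜ := by
        rw [Set.mem_compl_iff, Metric.mem_closedBall]
        exact fun h => absurd h (not_le.mpr hy)
      filter_upwards [(Metric.isClosed_closedBall (x := x₀) (ε := ε)).isOpen_compl.mem_nhds hmem]
        with z hz
      refine f.zero_of_le_dist ?_
      rw [hrOut]
      by_contra h
      exact hz (Metric.mem_closedBall.mpr (not_le.mp h).le)
    rw [hev.deriv_eq]; exact deriv_const y 0
  have hdsupp : ∀ y, deriv (⇑f) y ≠ 0 → ε/2 ≤ dist y x₀ ∧ dist y x₀ ≤ ε := by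
    intro y hy
    constructor
    · by_contra h; push_neg at h; exact hy (hd0_in y h)
    · by_contra h; push_neg at h; exact hy (hd0_out y h)
  -- bound on the derivative over [0,1]
  obtain ⟨yM, hyM, hyMge'⟩ := isCompact_Icc.exists_isMaxOn
    (⟨0, by norm_num⟩ : (Set.Icc (0:ℝ) 1).Nonempty) (hcontf'.abs.continuousOn)
  have hyMge : ∀ x ∈ Set.Icc (0:ℝ) 1, |deriv (⇑f) x| ≤ |deriv (⇑f) yM| :=
    fun x hx => hyMge' hx
  set M : ℝ := |deriv (⇑f) yM| with hMdef
  have hMnn : 0 ≤ M := abs_nonneg _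
  -- the annulus K and the max of m on it
  set K : Set ℝ := (Set.Icc (0:ℝ) 1 ∩ Metric.closedBall x₀ ε) \ Metric.ball x₀ (ε/2) with hKdef
  have hKcomp : IsCompact K := by
    rw [hKdef, Set.diff_eq]
    exact (isCompact_Icc.inter_right Metric.isClosed_closedBall).inter_right
      Metric.isOpen_ball.isClosed_compl
  have hKne : K.Nonempty := by
    rcases le_total x₀ (1/2) with h | h
    · refine ⟨x₀ + ε, ⟨⟨by constructor <;> [linarith [hx₀.1]; linarith], ?_⟩, ?_⟩⟩
      · rw [Metric.mem_closedBall, Real.dist_eq]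
        rw [show x₀ + ε - x₀ = ε by ring, abs_of_pos hεpos]
      · rw [Metric.mem_ball, Real.dist_eq, show x₀ + ε - x₀ = ε by ring, abs_of_pos hεpos]
        intro hlt; linarith
    · refine ⟨x₀ - ε, ⟨⟨by constructor <;> [linarith; linarith [hx₀.2]], ?_⟩, ?_⟩⟩
      · rw [Metric.mem_closedBall, Real.dist_eq]
        rw [show x₀ - ε - x₀ = -ε by ring, abs_neg, abs_of_pos hεpos]
      · rw [Metric.mem_ball, Real.dist_eq, show x₀ - ε - x₀ = -ε by ring, abs_neg,
          abs_of_pos hεpos]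
        intro hlt; linarith
  obtain ⟨z, hzK, hzge'⟩ := hKcomp.exists_isMaxOn hKne hmc.continuousOn
  have hzge : ∀ x ∈ K, m x ≤ m z := fun x hx => hzge' hx
  have hzd : ε/2 ≤ dist z x₀ ∧ dist z x₀ ≤ ε := by
    obtain ⟨⟨_, h2⟩, h3⟩ := hzK
    rw [Metric.mem_closedBall] at h2
    rw [Metric.mem_ball] at h3
    exact ⟨le_of_not_gt h3, h2⟩
  have hβlt : m z < m x₀ := by
    apply hmax
    constructor
    · constructor
      · rw [Set.mem_Ioo]
        rw [Real.dist_eq, abs_le] at hzd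
        constructor <;> [linarith [hzd.2.1]; linarith [hzd.2.2]]
      · exact hzK.1.1
    · intro hz
      rw [Set.mem_singleton_iff] at hz
      rw [hz, dist_self] at hzd
      linarith [hzd.1]
  set δ : ℝ := (m x₀ - m z) / 2 with hδdef
  have hδpos : 0 < δ := by rw [hδdef]; linarith
  -- continuity of m at x₀
  obtain ⟨ρ', hρ', hmρ⟩ := Metric.continuousAt_iff.mp hmc.continuousAt δ hδpos
  set ρ : ℝ := min (ρ'/2) (ε/2) with hρdef
  have hρpos : 0 < ρ := lt_min (by linarith) (by linarith)
  have hρε : ρ ≤ ε/2 := min_le_right _ _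
  have hρm : ∀ y, dist y x₀ ≤ ρ → m x₀ - δ ≤ m y := by
    intro y hy
    have := hmρ (x := y) (lt_of_le_of_lt (hy.trans (min_le_left _ _)) (by linarith))
    rw [Real.dist_eq, abs_lt] at this
    linarith [this.1]
  -- the interval [a, b]
  set a : ℝ := max 0 (x₀ - ρ) with hadef
  set b : ℝ := min 1 (x₀ + ρ) with hbdef
  have hρ14 : ρ ≤ 8⁻¹ := hρε.trans (by linarith)
  have hba : ρ ≤ b - a := by
    rcases le_total x₀ (1/2) with h | h
    · have hb : b = x₀ + ρ := min_eq_right (by linarith)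
      have ha : a ≤ x₀ := max_le hx₀.1 (by linarith)
      linarith
    · have ha : a = x₀ - ρ := max_eq_right (by linarith)
      have hb : x₀ ≤ b := le_min hx₀.2 (by linarith)
      linarith
  have hab : a ≤ b := by linarith
  have h0a : 0 ≤ a := le_max_left _ _
  have hb1 : b ≤ 1 := min_le_left _ _
  have habball : Set.Icc a b ⊆ Metric.closedBall x₀ ρ := by
    intro y hy
    rw [Metric.mem_closedBall, Real.dist_eq, abs_le]
    have h1 : x₀ - ρ ≤ a := le_max_right _ _
    have h2 : b ≤ x₀ + ρ := min_le_right _ _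
    constructor
    · linarith [hy.1]
    · linarith [hy.2]
  -- key estimate for each s ≥ 0
  have key : ∀ s : ℝ, 0 ≤ s →
      c xm ≤ lambdaN m c s ∧
      lambdaN m c s ≤ c x₀ + η/2 + (M^2/ρ) * Real.exp (-(2*δ) * s) := by
    intro s hs
    have hce : Continuous fun x => Real.exp (2 * s * m x) :=
      Real.continuous_exp.comp ((continuous_const.mul hmc))
    set D : ℝ := ∫ x in (0:ℝ)..1, Real.exp (2 * s * m x) * (f x) ^ 2 with hDdef
    set N1 : ℝ := ∫ x in (0:ℝ)..1, Real.exp (2 * s * m x) * (deriv (⇑f) x) ^ 2 with hN1def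
    set N2 : ℝ := ∫ x in (0:ℝ)..1, Real.exp (2 * s * m x) * (c x * (f x) ^ 2) with hN2def
    have hintw : ∀ u v : ℝ, IntervalIntegrable
        (fun x => Real.exp (2 * s * m x) * (f x) ^ 2) volume u v :=
      fun u v => (hce.mul (hcontf.pow 2)).intervalIntegrable u v
    -- lower bound on D
    have hDlow : ρ * Real.exp (2 * s * (m x₀ - δ)) ≤ D := by
      have hsplit : D = (∫ x in (0:ℝ)..a, Real.exp (2 * s * m x) * (f x) ^ 2) +
          ((∫ x in a..b, Real.exp (2 * s * m x) * (f x) ^ 2) +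
           (∫ x in b..(1:ℝ), Real.exp (2 * s * m x) * (f x) ^ 2)) := by
        rw [intervalIntegral.integral_add_adjacent_intervals (hintw a b) (hintw b 1),
          intervalIntegral.integral_add_adjacent_intervals (hintw 0 a) (hintw a 1)]
      have h1 : 0 ≤ ∫ x in (0:ℝ)..a, Real.exp (2 * s * m x) * (f x) ^ 2 :=
        intervalIntegral.integral_nonneg h0a (fun x _ => by positivity)
      have h3 : 0 ≤ ∫ x in b..(1:ℝ), Real.exp (2 * s * m x) * (f x) ^ 2 :=
        intervalIntegral.integral_nonneg hb1 (fun x _ => by positivity)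
      have h2 : ρ * Real.exp (2 * s * (m x₀ - δ)) ≤
          ∫ x in a..b, Real.exp (2 * s * m x) * (f x) ^ 2 := by
        have hmono : (∫ x in a..b, Real.exp (2 * s * (m x₀ - δ))) ≤
            ∫ x in a..b, Real.exp (2 * s * m x) * (f x) ^ 2 := by
          apply intervalIntegral.integral_mono_on hab
            (intervalIntegrable_const) (hintw a b)
          intro x hx
          have hx1 : f x = 1 := f.one_of_mem_closedBall (by
            rw [Metric.mem_closedBall, hrIn]
            exact le_trans (Metric.mem_closedBall.mp (habball hx)) hρε)
          rw [hx1, one_pow, mul_one]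
          apply Real.exp_le_exp.mpr
          have := hρm x (Metric.mem_closedBall.mp (habball hx))
          nlinarith
        rw [intervalIntegral.integral_const, smul_eq_mul] at hmono
        calc ρ * Real.exp (2 * s * (m x₀ - δ))
            ≤ (b - a) * Real.exp (2 * s * (m x₀ - δ)) := by
              apply mul_le_mul_of_nonneg_right hba (Real.exp_pos _).le
          _ ≤ _ := hmono
      linarith
    have hDpos : 0 < D := lt_of_lt_of_le (by positivity) hDlow
    -- upper bound on N1
    have hN1le : N1 ≤ M^2 * Real.exp (2 * s * m z) := by
      have : (∫ x in (0:ℝ)..1, M^2 * Real.exp (2 * s * m z)) =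
          M^2 * Real.exp (2 * s * m z) := by
        rw [intervalIntegral.integral_const, smul_eq_mul]; ring
      rw [hN1def, ← this]
      apply intervalIntegral.integral_mono_on (by norm_num)
        ((hce.mul (hcontf'.pow 2)).intervalIntegrable 0 1) intervalIntegrable_const
      intro x hx
      simp only [Pi.mul_apply, Pi.pow_apply]
      by_cases hdx : deriv (⇑f) x = 0
      · rw [hdx]
        have h0 : Real.exp (2 * s * m x) * (0:ℝ)^2 = 0 := by ring
        rw [h0]
        positivity
      · obtain ⟨hd1, hd2⟩ := hdsupp x hdx
        have hxK : x ∈ K := by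
          refine ⟨⟨hx, Metric.mem_closedBall.mpr hd2⟩, fun hxb => ?_⟩
          rw [Metric.mem_ball] at hxb; linarith
        have hmx : m x ≤ m z := hzge x hxK
        have he : Real.exp (2 * s * m x) ≤ Real.exp (2 * s * m z) :=
          Real.exp_le_exp.mpr (by nlinarith)
        have hd : (deriv (⇑f) x)^2 ≤ M^2 := by
          have := hyMge x hx
          rw [hMdef]
          nlinarith [abs_nonneg (deriv (⇑f) x), sq_abs (deriv (⇑f) x), sq_abs (deriv (⇑f) yM)]
        nlinarith [Real.exp_pos (2 * s * m x), sq_nonneg (deriv (⇑f) x),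
          (Real.exp_pos (2 * s * m z)).le]
    -- upper bound on N2
    have hN2le : N2 ≤ (c x₀ + η/2) * D := by
      have hrw : (c x₀ + η/2) * D =
          ∫ x in (0:ℝ)..1, (c x₀ + η/2) * (Real.exp (2 * s * m x) * (f x) ^ 2) := by
        rw [intervalIntegral.integral_const_mul, hDdef]
      rw [hrw, hN2def]
      apply intervalIntegral.integral_mono_on (by norm_num)
        ((hce.mul (hc.mul (hcontf.pow 2))).intervalIntegrable 0 1)
        ((continuous_const.mul (hce.mul (hcontf.pow 2))).intervalIntegrable 0 1)
      intro x hx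
      simp only [Pi.mul_apply, Pi.pow_apply]
      by_cases hfx : f x = 0
      · rw [hfx]; ring_nf; simp
      · have hxball : dist x x₀ < ε := by
          have := Function.mem_support.mpr hfx
          rw [f.support_eq, hrOut, Metric.mem_ball] at this
          exact this
        have hcx : c x ≤ c x₀ + η/2 := by
          have := hcε (x := x) (lt_trans hxball hεε₁)
          rw [Real.dist_eq, abs_lt] at this
          linarith [this.2]
        have h1 : 0 ≤ Real.exp (2 * s * m x) * (f x)^2 := by positivity
        nlinarith
    -- the normalized test function
    set r : ℝ := (Real.sqrt D)⁻¹ with hrdef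
    have hr2 : r^2 = D⁻¹ := by
      rw [hrdef, inv_pow, Real.sq_sqrt hDpos.le]
    have hdiff : ∀ x : ℝ, DifferentiableAt ℝ (⇑f) x :=
      fun x => ((f.contDiff (n := 1)).differentiable one_ne_zero).differentiableAt
    have hdφ : ∀ x, deriv (fun y => r * f y) x = r * deriv (⇑f) x :=
      fun x => deriv_const_mul r (hdiff x)
    have hmem : r^2 * N1 + r^2 * N2 ∈ {l : ℝ | ∃ φ : ℝ → ℝ, ContDiff ℝ 1 φ ∧
        (∫ x in (0:ℝ)..1, Real.exp (2 * s * m x) * (φ x) ^ 2) = 1 ∧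
        l = ∫ x in (0:ℝ)..1, Real.exp (2 * s * m x) *
          ((deriv φ x) ^ 2 + c x * (φ x) ^ 2)} := by
      refine ⟨fun y => r * f y, contDiff_const.mul (f.contDiff), ?_, ?_⟩
      · have h1 : ∀ x : ℝ, Real.exp (2 * s * m x) * ((fun y => r * f y) x) ^ 2 =
            r^2 * (Real.exp (2 * s * m x) * (f x) ^ 2) := fun x => by simp; ring
        simp only [h1]
        rw [intervalIntegral.integral_const_mul, ← hDdef, hr2]
        field_simp
      · have h2 : ∀ x : ℝ, Real.exp (2 * s * m x) *
            ((deriv (fun y => r * f y) x) ^ 2 + c x * ((fun y => r * f y) x) ^ 2) =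
            r^2 * (Real.exp (2 * s * m x) * (deriv (⇑f) x) ^ 2) +
            r^2 * (Real.exp (2 * s * m x) * (c x * (f x) ^ 2)) := by
          intro x
          rw [hdφ x]
          simp only []
          ring
        simp only [h2]
        rw [intervalIntegral.integral_add
          (f := fun x => r^2 * (Real.exp (2 * s * m x) * (deriv (⇑f) x) ^ 2))
          (g := fun x => r^2 * (Real.exp (2 * s * m x) * (c x * (f x) ^ 2)))
          ((continuous_const.mul (hce.mul (hcontf'.pow 2))).intervalIntegrable 0 1)
          ((continuous_const.mul (hce.mul (hc.mul (hcontf.pow 2)))).intervalIntegrable 0 1),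
          intervalIntegral.integral_const_mul, intervalIntegral.integral_const_mul,
          ← hN1def, ← hN2def]
    have hbdd : BddBelow {l : ℝ | ∃ φ : ℝ → ℝ, ContDiff ℝ 1 φ ∧
        (∫ x in (0:ℝ)..1, Real.exp (2 * s * m x) * (φ x) ^ 2) = 1 ∧
        l = ∫ x in (0:ℝ)..1, Real.exp (2 * s * m x) *
          ((deriv φ x) ^ 2 + c x * (φ x) ^ 2)} := ⟨c xm, fun l hl => hlb s l hl⟩
    constructor
    · exact le_csInf ⟨_, hmem⟩ (hlb s)
    · refine le_trans (csInf_le hbdd hmem) ?_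
      -- r^2 (N1 + N2) ≤ c x₀ + η/2 + (M²/ρ) e^{-2δ s}
      have hval : r^2 * N1 + r^2 * N2 = (N1 + N2) / D := by
        rw [hr2]; field_simp
      rw [hval, div_le_iff₀ hDpos]
      have hexp : (M^2/ρ) * Real.exp (-(2*δ) * s) * (ρ * Real.exp (2 * s * (m x₀ - δ))) =
          M^2 * Real.exp (2 * s * m z) := by
        have h1 : Real.exp (-(2*δ) * s) * Real.exp (2 * s * (m x₀ - δ)) =
            Real.exp (2 * s * m z) := by
          rw [← Real.exp_add]; congr 1; rw [hδdef]; ring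
        calc (M^2/ρ) * Real.exp (-(2*δ) * s) * (ρ * Real.exp (2 * s * (m x₀ - δ)))
            = (M^2) * (ρ/ρ) * (Real.exp (-(2*δ) * s) * Real.exp (2 * s * (m x₀ - δ))) := by
              ring
          _ = M^2 * Real.exp (2 * s * m z) := by
              rw [div_self (ne_of_gt hρpos), h1]; ring
      have hN1le' : N1 ≤ (M^2/ρ) * Real.exp (-(2*δ) * s) * D := by
        refine hN1le.trans ?_
        rw [← hexp]
        apply mul_le_mul_of_nonneg_left hDlow (by positivity)
      nlinarith [hN2le, hN1le']
  -- conclude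
  have htend : Tendsto (fun s : ℝ => (M^2/ρ) * Real.exp (-(2*δ) * s)) atTop (nhds 0) := by
    have h1 : Tendsto (fun s : ℝ => -(2*δ) * s) atTop atBot := by
      apply Filter.Tendsto.const_mul_atTop_of_neg (by linarith : -(2*δ) < 0) tendsto_id
    have h2 : Tendsto (fun s : ℝ => Real.exp (-(2*δ) * s)) atTop (nhds 0) :=
      Real.tendsto_exp_atBot.comp h1
    have := h2.const_mul (M^2/ρ)
    simpa using this
  have hev : ∀ᶠ s : ℝ in atTop, lambdaN m c s ≤ c x₀ + η := by
    filter_upwards [eventually_ge_atTop (0:ℝ),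
      htend.eventually_lt_const (by linarith : (0:ℝ) < η/2)] with s hs hs2
    have := (key s hs).2
    linarith
  have hcob : IsCoboundedUnder (· ≤ ·) atTop (lambdaN m c) := by
    apply isCoboundedUnder_le_of_eventually_le atTop (x := c xm)
    filter_upwards [eventually_ge_atTop (0:ℝ)] with s hs
    exact (key s hs).1
  exact limsup_le_of_le hcob hev
end

section
/- Suppose 0 < a < b < 1 and there exists ε₀ > 0 such that: m is constant on [a,b]; m is non-decreasing on [a−ε₀, a] and on [b, b+ε₀]; and for every ε ∈ (0, ε₀) there exist x ∈ (a−ε, a) with m'(x) > 0 and y ∈ (b, b+ε) with m'(y) > 0 (so [a,b] is a segment of local maximum of type [a^I, b^I]). Then limsup_{s→∞} λ₁ᴺ(s) ≤ λ₁^{ND}(a,b). -/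
open MeasureTheory Filter Set

set_option maxHeartbeats 8000000

/-- The principal eigenvalue of `-φ'' + c φ = λ φ` on `(a,b)`, with a Dirichlet
condition at `a` iff `dirA = true` and at `b` iff `dirB = true`
(Neumann, i.e. no constraint, otherwise), via its variational characterization. -/
noncomputable def lambdaIJ (c : ℝ → ℝ) (dirA dirB : Bool) (a b : ℝ) : ℝ :=
  sInf {l : ℝ | ∃ φ : ℝ → ℝ, ContDiff ℝ 1 φ ∧
    (dirA = true → φ a = 0) ∧ (dirB = true → φ b = 0) ∧
    (∫ x in a..b, (φ x) ^ 2) = 1 ∧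
    l = ∫ x in a..b, ((deriv φ x) ^ 2 + c x * (φ x) ^ 2)}

lemma smoothTransition_deriv_bound :
    ∃ C : ℝ, 0 ≤ C ∧ ∀ x : ℝ, |deriv Real.smoothTransition x| ≤ C := by
  have hTC : ContDiff ℝ 2 Real.smoothTransition := by
    exact_mod_cast Real.smoothTransition.contDiff (n := 2)
  have hd : Continuous (deriv Real.smoothTransition) := hTC.continuous_deriv (by norm_num)
  obtain ⟨x₀, -, hx₀⟩ := isCompact_Icc.exists_isMaxOn (Set.nonempty_Icc.2 (by norm_num : (0:ℝ) ≤ 1))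
    ((continuous_abs.comp hd).continuousOn)
  refine ⟨|deriv Real.smoothTransition x₀|, abs_nonneg _, fun x => ?_⟩
  by_cases hx : x ∈ Set.Icc (0:ℝ) 1
  · exact hx₀ hx
  · have hzero : deriv Real.smoothTransition x = 0 := by
      rcases not_and_or.1 hx with h | h
      · push_neg at h
        have hev : Real.smoothTransition =ᶠ[nhds x] fun _ => 0 :=
          Filter.eventuallyEq_of_mem (Iio_mem_nhds h)
            (fun y hy => Real.smoothTransition.zero_of_nonpos (le_of_lt hy))
        rw [hev.deriv_eq, deriv_const]
      · push_neg at h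
        have hev : Real.smoothTransition =ᶠ[nhds x] fun _ => 1 :=
          Filter.eventuallyEq_of_mem (Ioi_mem_nhds h)
            (fun y hy => Real.smoothTransition.one_of_one_le (le_of_lt hy))
        rw [hev.deriv_eq, deriv_const]
    rw [hzero]
    simpa using abs_nonneg (deriv Real.smoothTransition x₀)

lemma exists_bound_Icc (f : ℝ → ℝ) (hf : Continuous f) (u v : ℝ) (huv : u ≤ v) :
    ∃ M : ℝ, 0 ≤ M ∧ ∀ x ∈ Set.Icc u v, |f x| ≤ M := by
  obtain ⟨x₀, -, hx₀⟩ := isCompact_Icc.exists_isMaxOn (Set.nonempty_Icc.2 huv)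
    ((continuous_abs.comp hf).continuousOn)
  exact ⟨|f x₀|, abs_nonneg _, fun x hx => hx₀ hx⟩

/-- If `[a,b]` is a segment of local maximum of type `[aᴵ, bᴵ]`, then
`limsup_{s→∞} λ₁ᴺ(s) ≤ λ₁ᴺᴰ(a,b)`. -/
theorem limsup_lambdaN_le_lambdaND_of_segment_II
    (m c : ℝ → ℝ) (hm : ContDiff ℝ 2 m) (hc : Continuous c)
    (a b : ℝ) (ha : 0 < a) (hab : a < b) (hb : b < 1)
    (hseg : ∃ ε₀ > (0:ℝ),
      (∀ x ∈ Set.Icc a b, m x = m a) ∧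
      MonotoneOn m (Set.Icc (a - ε₀) a) ∧
      MonotoneOn m (Set.Icc b (b + ε₀)) ∧
      (∀ ε ∈ Set.Ioo (0:ℝ) ε₀,
        (∃ x ∈ Set.Ioo (a - ε) a, 0 < deriv m x) ∧
        (∃ y ∈ Set.Ioo b (b + ε), 0 < deriv m y))) :
    Filter.limsup (lambdaN m c) Filter.atTop ≤ lambdaIJ c false true a b := by
  obtain ⟨ε₀, hε₀, hconst, hmonL, -, hpts⟩ := hseg
  set lam : ℝ := lambdaIJ c false true a b with hlamdef
  have hmc : Continuous m := hm.continuous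
  -- strict inequality of m to the left of a
  have hL1 : ∀ x ∈ Set.Ioo (a - ε₀) a, m x < m a := by
    intro x hx
    obtain ⟨y, hy, hy'⟩ := (hpts (a - x) ⟨by linarith [hx.2], by linarith [hx.1]⟩).1
    have hyx : x < y := by have := hy.1; linarith
    by_contra h
    push_neg at h
    have hconst' : ∀ t ∈ Set.Icc x a, m t = m a := by
      intro t ht
      have h1 : m x ≤ m t := hmonL ⟨hx.1.le, hx.2.le⟩ ⟨le_trans hx.1.le ht.1, ht.2⟩ ht.1
      have h2 : m t ≤ m a := hmonL ⟨le_trans hx.1.le ht.1, ht.2⟩ ⟨by linarith, le_refl a⟩ ht.2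
      linarith
    have hzero : deriv m y = 0 := by
      have hev : m =ᶠ[nhds y] fun _ => m a :=
        Filter.eventuallyEq_of_mem (Ioo_mem_nhds hyx hy.2)
          (fun t ht => hconst' t ⟨ht.1.le, ht.2.le⟩)
      rw [hev.deriv_eq, deriv_const]
    linarith
  -- the bound on |c| on [0,1]
  obtain ⟨Mc, hMc0, hMc⟩ := exists_bound_Icc c hc 0 1 (by norm_num)
  -- basic facts about the lambdaN sets
  set SN : ℝ → Set ℝ := fun s => {l : ℝ | ∃ φ : ℝ → ℝ, ContDiff ℝ 1 φ ∧
    (∫ x in (0:ℝ)..1, Real.exp (2 * s * m x) * (φ x) ^ 2) = 1 ∧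
    l = ∫ x in (0:ℝ)..1, Real.exp (2 * s * m x) * ((deriv φ x) ^ 2 + c x * (φ x) ^ 2)}
    with hSNdef
  have hSNlb : ∀ s : ℝ, ∀ lv ∈ SN s, -Mc ≤ lv := by
    intro s lv hlv
    obtain ⟨φ, hφC, hφnorm, hφval⟩ := hlv
    have hφc : Continuous φ := hφC.continuous
    have hφ'c : Continuous (deriv φ) := hφC.continuous_deriv le_rfl
    have hexp : Continuous fun x => Real.exp (2 * s * m x) :=
      Real.continuous_exp.comp (continuous_const.mul hmc)
    have hI1 : IntervalIntegrable (fun x => Real.exp (2 * s * m x) * (-Mc * (φ x) ^ 2))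
        volume 0 1 :=
      (hexp.mul (continuous_const.mul (hφc.pow 2))).intervalIntegrable _ _
    have hI2 : IntervalIntegrable
        (fun x => Real.exp (2 * s * m x) * ((deriv φ x) ^ 2 + c x * (φ x) ^ 2))
        volume 0 1 :=
      (hexp.mul ((hφ'c.pow 2).add (hc.mul (hφc.pow 2)))).intervalIntegrable _ _
    have hmono : ∫ x in (0:ℝ)..1, Real.exp (2 * s * m x) * (-Mc * (φ x) ^ 2) ≤
        ∫ x in (0:ℝ)..1, Real.exp (2 * s * m x) * ((deriv φ x) ^ 2 + c x * (φ x) ^ 2) := by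
      apply intervalIntegral.integral_mono_on (by norm_num) hI1 hI2
      intro x hx
      have h1 : -Mc ≤ c x := by
        have := hMc x hx
        have := abs_le.1 this
        linarith [this.1]
      have h2 : -Mc * (φ x) ^ 2 ≤ (deriv φ x) ^ 2 + c x * (φ x) ^ 2 := by
        nlinarith [sq_nonneg (φ x), sq_nonneg (deriv φ x)]
      exact mul_le_mul_of_nonneg_left h2 (Real.exp_pos _).le
    have heq : ∫ x in (0:ℝ)..1, Real.exp (2 * s * m x) * (-Mc * (φ x) ^ 2) = -Mc := by
      have : (fun x => Real.exp (2 * s * m x) * (-Mc * (φ x) ^ 2)) =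
          fun x => -Mc * (Real.exp (2 * s * m x) * (φ x) ^ 2) := by funext x; ring
      rw [this, intervalIntegral.integral_const_mul, hφnorm, mul_one]
    rw [hφval]
    linarith [hmono, heq.symm.le]
  have hSNne : ∀ s : ℝ, (SN s).Nonempty := by
    intro s
    have hWc : Continuous (fun x => Real.exp (2 * s * m x)) :=
      Real.continuous_exp.comp (continuous_const.mul hmc)
    set W : ℝ := ∫ x in (0:ℝ)..1, Real.exp (2 * s * m x) with hWdef
    have hW : 0 < W := by
      apply intervalIntegral.intervalIntegral_pos_of_pos_on (hWc.intervalIntegrable _ _)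
        (fun x _ => Real.exp_pos _) (by norm_num)
    refine ⟨_, ⟨fun _ => (Real.sqrt W)⁻¹, contDiff_const, ?_, rfl⟩⟩
    have : (fun x => Real.exp (2 * s * m x) * ((Real.sqrt W)⁻¹) ^ 2) =
        fun x => ((Real.sqrt W)⁻¹) ^ 2 * Real.exp (2 * s * m x) := by funext x; ring
    rw [this, intervalIntegral.integral_const_mul, ← hWdef, inv_pow, Real.sq_sqrt hW.le,
      inv_mul_cancel₀ hW.ne']
  have hlamN_eq : ∀ s, lambdaN m c s = sInf (SN s) := fun s => rfl
  clear_value SN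
  have hSNbdd : ∀ s : ℝ, BddBelow (SN s) := fun s => ⟨-Mc, fun lv hlv => hSNlb s lv hlv⟩
  -- it suffices to prove the bound up to δ
  refine le_of_forall_pos_le_add (fun δ hδ => ?_)
  -- nonemptiness of the lambdaIJ set
  set SIJ : Set ℝ := {l : ℝ | ∃ φ : ℝ → ℝ, ContDiff ℝ 1 φ ∧
    ((false : Bool) = true → φ a = 0) ∧ ((true : Bool) = true → φ b = 0) ∧
    (∫ x in a..b, (φ x) ^ 2) = 1 ∧
    l = ∫ x in a..b, ((deriv φ x) ^ 2 + c x * (φ x) ^ 2)} with hSIJdef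
  have hlam_eq : lam = sInf SIJ := rfl
  have hba : (0:ℝ) < b - a := by linarith
  have hSIJne : SIJ.Nonempty := by
    set CC : ℝ := 3 / (b - a) ^ 3 with hCC
    have hCCpos : 0 < CC := by positivity
    refine ⟨_, ⟨fun x => Real.sqrt CC * (b - x), (contDiff_const.mul
      (contDiff_const.sub contDiff_id)), fun h => by simp at h, fun _ => by simp, ?_, rfl⟩⟩
    have hkey : ∫ x in a..b, (b - x) ^ 2 = (b - a) ^ 3 / 3 := by
      have hder : ∀ x ∈ Set.uIcc a b, HasDerivAt (fun y => -(b - y) ^ 3 / 3) ((b - x) ^ 2) x := by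
        intro x _
        have h1 : HasDerivAt (fun y : ℝ => b - y) (-1) x := (hasDerivAt_id x).const_sub b
        have h2 : HasDerivAt (fun y => -(b - y) ^ 3 / 3) (-(↑3 * (b - x) ^ (3 - 1) * -1) / 3) x :=
          (h1.pow 3).neg.div_const 3
        convert h2 using 1
        norm_num
      rw [intervalIntegral.integral_eq_sub_of_hasDerivAt hder
        (((continuous_const.sub continuous_id).pow 2).intervalIntegrable _ _)]
      ring
    have : (fun x => (Real.sqrt CC * (b - x)) ^ 2) = fun x => CC * (b - x) ^ 2 := by
      funext x
      rw [mul_pow, Real.sq_sqrt hCCpos.le]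
    rw [this, intervalIntegral.integral_const_mul, hkey, hCC]
    field_simp
  -- a near-minimizer ψ
  obtain ⟨l, hlmem, hl_lt⟩ := Real.lt_sInf_add_pos hSIJne (half_pos hδ)
  rw [← hlam_eq] at hl_lt
  clear_value lam
  clear hlam_eq hSIJne hlamdef
  obtain ⟨ψ, hψC, -, hψb', hψnorm, hlval⟩ := hlmem
  have hψb : ψ b = 0 := hψb' rfl
  have hψc : Continuous ψ := hψC.continuous
  have hψ'c : Continuous (deriv ψ) := hψC.continuous_deriv le_rfl
  -- bound for ψ and ψ' on [a,b]
  obtain ⟨Mψ, hMψ0, hMψ⟩ := exists_bound_Icc (fun x => |ψ x| + |deriv ψ x|)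
    (hψc.abs.add hψ'c.abs) a b hab.le
  have hMψ1 : ∀ x ∈ Set.Icc a b, |ψ x| ≤ Mψ := by
    intro x hx
    have := hMψ x hx
    have h2 := abs_le.1 this
    have := abs_nonneg (deriv ψ x)
    have := abs_nonneg (ψ x)
    linarith [h2.2]
  have hMψ2 : ∀ x ∈ Set.Icc a b, |deriv ψ x| ≤ Mψ := by
    intro x hx
    have := hMψ x hx
    have h2 := abs_le.1 this
    have := abs_nonneg (deriv ψ x)
    have := abs_nonneg (ψ x)
    linarith [h2.2]
  -- |ψ x| ≤ Mψ (b - x) on [a,b]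
  have hψsmall : ∀ x ∈ Set.Icc a b, |ψ x| ≤ Mψ * (b - x) := by
    intro x hx
    have hmvt := Convex.norm_image_sub_le_of_norm_hasDerivWithin_le
      (f := ψ) (f' := deriv ψ) (s := Set.Icc a b) (C := Mψ)
      (fun y hy => (hψC.differentiable (by norm_num) y).hasDerivAt.hasDerivWithinAt)
      (fun y hy => by simpa using hMψ2 y hy) (convex_Icc a b) (right_mem_Icc.2 hab.le) hx
    rw [hψb] at hmvt
    simp only [sub_zero, Real.norm_eq_abs] at hmvt
    calc |ψ x| ≤ Mψ * |x - b| := hmvt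
    _ = Mψ * (b - x) := by rw [abs_sub_comm, abs_of_nonneg (by linarith [hx.2])]
  -- bound on deriv of smoothTransition
  obtain ⟨C₀, hC₀0, hC₀⟩ := smoothTransition_deriv_bound
  set K : ℝ := (Mψ + 2 * Mψ * C₀) ^ 2 + Mψ ^ 2 + 2 * Mc * Mψ ^ 2 + 1 with hKdef
  have hK : 0 < K := by positivity
  -- choice of ε
  set ε : ℝ := min (min (ε₀ / 2) (min (a / 2) ((b - a) / 2)))
      (min 1 (δ / (2 * K * (1 + |lam| + δ)))) with hεdef
  have hden : 0 < 2 * K * (1 + |lam| + δ) := by positivity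
  have hε_pos : 0 < ε := by
    apply lt_min (lt_min (by linarith) (lt_min (by linarith) (by linarith)))
    exact lt_min one_pos (by positivity)
  have hε_lt_ε₀ : ε < ε₀ :=
    lt_of_le_of_lt ((min_le_left _ _).trans (min_le_left _ _)) (by linarith)
  have hεa : ε < a :=
    lt_of_le_of_lt ((min_le_left _ _).trans ((min_le_right _ _).trans (min_le_left _ _)))
      (by linarith)
  have hεba : ε < b - a :=
    lt_of_le_of_lt ((min_le_left _ _).trans ((min_le_right _ _).trans (min_le_right _ _)))
      (by linarith)
  have hε1 : ε ≤ 1 := (min_le_right _ _).trans (min_le_left _ _)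
  have hεδ' : ε ≤ δ / (2 * K * (1 + |lam| + δ)) := (min_le_right _ _).trans (min_le_right _ _)
  have hεδ : K * ε * (1 + |lam| + δ) ≤ δ / 2 := by
    have h := (le_div_iff₀ hden).1 hεδ'
    nlinarith
  have hKε_half : K * ε ≤ 1 / 2 := by
    nlinarith [mul_nonneg hK.le hε_pos.le, abs_nonneg lam]
  clear_value ε
  -- the cutoff function χ
  set T : ℝ → ℝ := Real.smoothTransition with hTdef
  have hTC : ContDiff ℝ 1 T := by exact_mod_cast Real.smoothTransition.contDiff (n := 1)
  have hTc : Continuous T := hTC.continuous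
  have hTd : Differentiable ℝ T := hTC.differentiable (by norm_num)
  have hTdc : Continuous (deriv T) := hTC.continuous_deriv le_rfl
  set χ : ℝ → ℝ := fun x => T ((x - (a - ε)) / ε) * T ((b - x) / ε) with hχdef
  have hχC : ContDiff ℝ 1 χ :=
    (hTC.comp ((contDiff_id.sub contDiff_const).div_const ε)).mul
      (hTC.comp ((contDiff_const.sub contDiff_id).div_const ε))
  have hχc : Continuous χ := hχC.continuous
  have hχ_nonneg : ∀ x, 0 ≤ χ x := fun x =>
    mul_nonneg (Real.smoothTransition.nonneg _) (Real.smoothTransition.nonneg _)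
  have hχ_le_one : ∀ x, χ x ≤ 1 := fun x =>
    mul_le_one₀ (Real.smoothTransition.le_one _) (Real.smoothTransition.nonneg _)
      (Real.smoothTransition.le_one _)
  have hχ_one : ∀ x, a ≤ x → x ≤ b - ε → χ x = 1 := by
    intro x h1 h2
    have e1 : T ((x - (a - ε)) / ε) = 1 :=
      Real.smoothTransition.one_of_one_le (by rw [le_div_iff₀ hε_pos]; linarith)
    have e2 : T ((b - x) / ε) = 1 :=
      Real.smoothTransition.one_of_one_le (by rw [le_div_iff₀ hε_pos]; linarith)
    simp only [hχdef, e1, e2, mul_one]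
  have hχ_zeroL : ∀ x, x ≤ a - ε → χ x = 0 := by
    intro x h
    have e1 : T ((x - (a - ε)) / ε) = 0 :=
      Real.smoothTransition.zero_of_nonpos
        (div_nonpos_of_nonpos_of_nonneg (by linarith) hε_pos.le)
    simp only [hχdef, e1, zero_mul]
  have hχ_zeroR : ∀ x, b ≤ x → χ x = 0 := by
    intro x h
    have e2 : T ((b - x) / ε) = 0 :=
      Real.smoothTransition.zero_of_nonpos
        (div_nonpos_of_nonpos_of_nonneg (by linarith) hε_pos.le)
    simp only [hχdef, e2, mul_zero]
  -- the derivative of χ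
  set χd : ℝ → ℝ := fun x => deriv T ((x - (a - ε)) / ε) * (1 / ε) * T ((b - x) / ε) +
      T ((x - (a - ε)) / ε) * (deriv T ((b - x) / ε) * (-1 / ε)) with hχddef
  have hχd : ∀ x, HasDerivAt χ (χd x) x := by
    intro x
    have h1 : HasDerivAt (fun y : ℝ => (y - (a - ε)) / ε) (1 / ε) x := by
      simpa using ((hasDerivAt_id x).sub_const (a - ε)).div_const ε
    have h2 : HasDerivAt (fun y : ℝ => (b - y) / ε) (-1 / ε) x := by
      simpa using ((hasDerivAt_id x).const_sub b).div_const ε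
    have hT1 : HasDerivAt (fun y : ℝ => T ((y - (a - ε)) / ε))
        (deriv T ((x - (a - ε)) / ε) * (1 / ε)) x :=
      (hTd _).hasDerivAt.comp x h1
    have hT2 : HasDerivAt (fun y : ℝ => T ((b - y) / ε))
        (deriv T ((b - x) / ε) * (-1 / ε)) x :=
      (hTd _).hasDerivAt.comp x h2
    exact hT1.mul hT2
  have hχdc : Continuous χd := by
    have i1 : Continuous (fun x : ℝ => (x - (a - ε)) / ε) :=
      (continuous_id.sub continuous_const).div_const ε
    have i2 : Continuous (fun x : ℝ => (b - x) / ε) :=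
      (continuous_const.sub continuous_id).div_const ε
    exact (((hTdc.comp i1).mul continuous_const).mul (hTc.comp i2)).add
      ((hTc.comp i1).mul ((hTdc.comp i2).mul continuous_const))
  have hχdbound : ∀ x, |χd x| ≤ 2 * C₀ / ε := by
    intro x
    have b1 := hC₀ ((x - (a - ε)) / ε)
    have b2 := hC₀ ((b - x) / ε)
    have n1 := Real.smoothTransition.nonneg ((x - (a - ε)) / ε)
    have o1 := Real.smoothTransition.le_one ((x - (a - ε)) / ε)
    have n2 := Real.smoothTransition.nonneg ((b - x) / ε)
    have o2 := Real.smoothTransition.le_one ((b - x) / ε)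
    have hεinv : 0 < 1 / ε := by positivity
    have heq : χd x = (1 / ε) * (deriv T ((x - (a - ε)) / ε) * T ((b - x) / ε) -
        T ((x - (a - ε)) / ε) * deriv T ((b - x) / ε)) := by
      simp only [hχddef]; ring
    rw [heq, abs_mul, abs_of_pos hεinv]
    have htri : |deriv T ((x - (a - ε)) / ε) * T ((b - x) / ε) -
        T ((x - (a - ε)) / ε) * deriv T ((b - x) / ε)| ≤ 2 * C₀ := by
      have h1 : |deriv T ((x - (a - ε)) / ε) * T ((b - x) / ε)| ≤ C₀ := by
        rw [abs_mul, abs_of_nonneg n2]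
        calc |deriv T ((x - (a - ε)) / ε)| * T ((b - x) / ε) ≤ C₀ * 1 :=
            mul_le_mul b1 o2 n2 hC₀0
          _ = C₀ := mul_one _
      have h2 : |T ((x - (a - ε)) / ε) * deriv T ((b - x) / ε)| ≤ C₀ := by
        rw [abs_mul, abs_of_nonneg n1]
        calc T ((x - (a - ε)) / ε) * |deriv T ((b - x) / ε)| ≤ 1 * C₀ :=
            mul_le_mul o1 b2 (abs_nonneg _) one_pos.le
          _ = C₀ := one_mul _
      calc |deriv T ((x - (a - ε)) / ε) * T ((b - x) / ε) -
          T ((x - (a - ε)) / ε) * deriv T ((b - x) / ε)|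
          = |deriv T ((x - (a - ε)) / ε) * T ((b - x) / ε) +
            -(T ((x - (a - ε)) / ε) * deriv T ((b - x) / ε))| := by rw [sub_eq_add_neg]
        _ ≤ |deriv T ((x - (a - ε)) / ε) * T ((b - x) / ε)| +
            |-(T ((x - (a - ε)) / ε) * deriv T ((b - x) / ε))| := abs_add_le _ _
        _ ≤ C₀ + C₀ := by rw [abs_neg]; exact add_le_add h1 h2
        _ = 2 * C₀ := by ring
    calc (1 / ε) * |deriv T ((x - (a - ε)) / ε) * T ((b - x) / ε) -
        T ((x - (a - ε)) / ε) * deriv T ((b - x) / ε)| ≤ (1 / ε) * (2 * C₀) :=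
          mul_le_mul_of_nonneg_left htri hεinv.le
      _ = 2 * C₀ / ε := by ring
  -- the test function Φ = ψ * χ
  set Φ : ℝ → ℝ := fun x => ψ x * χ x with hΦdef
  have hΦC : ContDiff ℝ 1 Φ := hψC.mul hχC
  have hΦc : Continuous Φ := hΦC.continuous
  set Φd : ℝ → ℝ := fun x => deriv ψ x * χ x + ψ x * χd x with hΦddef
  have hΦd : ∀ x, HasDerivAt Φ (Φd x) x := fun x =>
    (hψC.differentiable (by norm_num) x).hasDerivAt.mul (hχd x)
  have hΦderiv : deriv Φ = Φd := funext fun x => (hΦd x).deriv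
  have hΦdc : Continuous (deriv Φ) := by rw [hΦderiv]; exact (hψ'c.mul hχc).add (hψc.mul hχdc)
  have hΦ0L : ∀ x, x < a - ε → Φ x = 0 ∧ deriv Φ x = 0 := by
    intro x hx
    constructor
    · simp only [hΦdef]; rw [hχ_zeroL x hx.le, mul_zero]
    · have hev : Φ =ᶠ[nhds x] fun _ => 0 :=
        Filter.eventuallyEq_of_mem (Iio_mem_nhds hx)
          (fun y hy => by simp only [hΦdef]; rw [hχ_zeroL y (le_of_lt hy), mul_zero])
      rw [hev.deriv_eq, deriv_const]
  have hΦ0R : ∀ x, b < x → Φ x = 0 ∧ deriv Φ x = 0 := by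
    intro x hx
    constructor
    · simp only [hΦdef]; rw [hχ_zeroR x hx.le, mul_zero]
    · have hev : Φ =ᶠ[nhds x] fun _ => 0 :=
        Filter.eventuallyEq_of_mem (Ioi_mem_nhds hx)
          (fun y hy => by simp only [hΦdef]; rw [hχ_zeroR y (le_of_lt hy), mul_zero])
      rw [hev.deriv_eq, deriv_const]
  have hΦeqψ : ∀ x ∈ Set.Ioo a (b - ε), Φ x = ψ x ∧ deriv Φ x = deriv ψ x := by
    intro x hx
    have hev : Φ =ᶠ[nhds x] ψ :=
      Filter.eventuallyEq_of_mem (Ioo_mem_nhds hx.1 hx.2)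
        (fun y hy => by simp only [hΦdef]; rw [hχ_one y hy.1.le hy.2.le, mul_one])
    exact ⟨hev.eq_of_nhds, hev.deriv_eq⟩
  -- the basic integrands
  set g1 : ℝ → ℝ := fun x => deriv Φ x ^ 2 + c x * Φ x ^ 2 with hg1def
  set g2 : ℝ → ℝ := fun x => Φ x ^ 2 with hg2def
  have hg1c : Continuous g1 := by
    simp only [hg1def]; exact (hΦdc.pow 2).add (hc.mul (hΦc.pow 2))
  have hg2c : Continuous g2 := by simp only [hg2def]; exact hΦc.pow 2
  have hg1z1 : ∀ x, x < a - ε → g1 x = 0 := by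
    intro x hx
    obtain ⟨h1, h2⟩ := hΦ0L x hx
    simp only [hg1def]; rw [h1, h2]; ring
  have hg1z2 : ∀ x, b < x → g1 x = 0 := by
    intro x hx
    obtain ⟨h1, h2⟩ := hΦ0R x hx
    simp only [hg1def]; rw [h1, h2]; ring
  have hg2z1 : ∀ x, x < a - ε → g2 x = 0 := by
    intro x hx
    simp only [hg2def]; rw [(hΦ0L x hx).1]; ring
  have hg2z2 : ∀ x, b < x → g2 x = 0 := by
    intro x hx
    simp only [hg2def]; rw [(hΦ0R x hx).1]; ring
  clear_value T χ χd Φ Φd g1 g2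
  set B : ℝ := ∫ x in a..b, g1 x with hBdef
  set d : ℝ := ∫ x in a..b, g2 x with hddef
  have habe : a ≤ b - ε := by linarith
  have hbeb : b - ε ≤ b := by linarith
  -- Estimate E1 : |d - 1| ≤ K * ε, and d ≤ 1
  have hE1 : |d - 1| ≤ K * ε := by
    have hi2 : IntervalIntegrable g2 volume a b := hg2c.intervalIntegrable _ _
    have hiψ : IntervalIntegrable (fun x => ψ x ^ 2) volume a b :=
      (hψc.pow 2).intervalIntegrable _ _
    have hsub : d - 1 = ∫ x in a..b, (g2 x - ψ x ^ 2) := by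
      rw [intervalIntegral.integral_sub hi2 hiψ, ← hψnorm, hddef]
    have hidiff : ∀ u v : ℝ, IntervalIntegrable (fun x => g2 x - ψ x ^ 2) volume u v :=
      fun u v => (hg2c.sub (hψc.pow 2)).intervalIntegrable _ _
    have hchasles : (∫ x in a..b, (g2 x - ψ x ^ 2)) =
        (∫ x in a..(b - ε), (g2 x - ψ x ^ 2)) + ∫ x in (b - ε)..b, (g2 x - ψ x ^ 2) :=
      (intervalIntegral.integral_add_adjacent_intervals (hidiff a (b - ε)) (hidiff (b - ε) b)).symm
    have hfirst : (∫ x in a..(b - ε), (g2 x - ψ x ^ 2)) = 0 := by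
      rw [intervalIntegral.integral_of_le habe, MeasureTheory.integral_Ioc_eq_integral_Ioo,
        MeasureTheory.setIntegral_congr_fun measurableSet_Ioo
          (g := fun _ => (0:ℝ)) (fun x hx => by
            simp only [hg2def]; rw [(hΦeqψ x hx).1]; ring)]
      simp
    have hsecond : |∫ x in (b - ε)..b, (g2 x - ψ x ^ 2)| ≤ K * ε := by
      have hbnd : ∀ x ∈ Set.uIoc (b - ε) b, ‖g2 x - ψ x ^ 2‖ ≤ K := by
        intro x hx
        rw [Set.uIoc_of_le hbeb] at hx
        have hxab : x ∈ Set.Icc a b := ⟨by linarith [hx.1], hx.2⟩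
        have hψx := hψsmall x hxab
        have hbx1 : b - x ≤ ε := by linarith [hx.1]
        have hχn := hχ_nonneg x
        have hχ1 := hχ_le_one x
        have hψsq : ψ x ^ 2 ≤ Mψ ^ 2 := by
          have h1 : |ψ x| ≤ Mψ := by nlinarith [abs_nonneg (ψ x)]
          nlinarith [abs_nonneg (ψ x), sq_abs (ψ x)]
        have hΦsq : Φ x ^ 2 ≤ ψ x ^ 2 := by
          simp only [hΦdef]
          nlinarith [sq_nonneg (ψ x), mul_nonneg (sub_nonneg.2 hχ1)
            (by linarith : (0:ℝ) ≤ 1 + χ x)]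
        rw [Real.norm_eq_abs]
        rw [abs_le]
        constructor
        · simp only [hg2def]
          nlinarith [sq_nonneg (Φ x), sq_nonneg (Mψ + 2 * Mψ * C₀), sq_nonneg (Mψ * C₀),
            mul_nonneg hMc0 (sq_nonneg Mψ)]
        · simp only [hg2def]
          nlinarith [sq_nonneg (ψ x), sq_nonneg (Mψ + 2 * Mψ * C₀), sq_nonneg (Mψ * C₀),
            mul_nonneg hMc0 (sq_nonneg Mψ)]
      have := intervalIntegral.norm_integral_le_of_norm_le_const hbnd
      rw [Real.norm_eq_abs] at this
      calc |∫ x in (b - ε)..b, (g2 x - ψ x ^ 2)| ≤ K * |b - (b - ε)| := this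
        _ = K * ε := by rw [abs_of_pos (by linarith : (0:ℝ) < b - (b - ε))]; ring_nf
    rw [hsub, hchasles, hfirst, zero_add]
    exact hsecond
  have hd_le1 : d ≤ 1 := by
    rw [hddef, ← hψnorm]
    apply intervalIntegral.integral_mono_on hab.le (hg2c.intervalIntegrable _ _)
      ((hψc.pow 2).intervalIntegrable _ _)
    intro x hx
    have hχn := hχ_nonneg x
    have hχ1 := hχ_le_one x
    simp only [hg2def, hΦdef, Pi.pow_apply]
    nlinarith [sq_nonneg (ψ x), mul_nonneg (sub_nonneg.2 hχ1) (by linarith : (0:ℝ) ≤ 1 + χ x)]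
  have hE2 : |B - l| ≤ K * ε := by
    have hψg : Continuous fun x => deriv ψ x ^ 2 + c x * ψ x ^ 2 :=
      (hψ'c.pow 2).add (hc.mul (hψc.pow 2))
    have hi1 : IntervalIntegrable g1 volume a b := hg1c.intervalIntegrable _ _
    have hiψ : IntervalIntegrable (fun x => deriv ψ x ^ 2 + c x * ψ x ^ 2) volume a b :=
      hψg.intervalIntegrable _ _
    have hsub : B - l = ∫ x in a..b, (g1 x - (deriv ψ x ^ 2 + c x * ψ x ^ 2)) := by
      rw [intervalIntegral.integral_sub hi1 hiψ, ← hlval, hBdef]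
    have hidiff : ∀ u v : ℝ, IntervalIntegrable
        (fun x => g1 x - (deriv ψ x ^ 2 + c x * ψ x ^ 2)) volume u v :=
      fun u v => (hg1c.sub hψg).intervalIntegrable _ _
    have hchasles : (∫ x in a..b, (g1 x - (deriv ψ x ^ 2 + c x * ψ x ^ 2))) =
        (∫ x in a..(b - ε), (g1 x - (deriv ψ x ^ 2 + c x * ψ x ^ 2))) +
          ∫ x in (b - ε)..b, (g1 x - (deriv ψ x ^ 2 + c x * ψ x ^ 2)) :=
      (intervalIntegral.integral_add_adjacent_intervals (hidiff a (b - ε))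
        (hidiff (b - ε) b)).symm
    have hfirst : (∫ x in a..(b - ε), (g1 x - (deriv ψ x ^ 2 + c x * ψ x ^ 2))) = 0 := by
      rw [intervalIntegral.integral_of_le habe, MeasureTheory.integral_Ioc_eq_integral_Ioo,
        MeasureTheory.setIntegral_congr_fun measurableSet_Ioo
          (g := fun _ => (0:ℝ)) (fun x hx => by
            obtain ⟨e1, e2⟩ := hΦeqψ x hx
            simp only [hg1def]; rw [e1, e2]; ring)]
      simp
    have hsecond : |∫ x in (b - ε)..b, (g1 x - (deriv ψ x ^ 2 + c x * ψ x ^ 2))| ≤ K * ε := by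
      have hbnd : ∀ x ∈ Set.uIoc (b - ε) b, ‖g1 x - (deriv ψ x ^ 2 + c x * ψ x ^ 2)‖ ≤ K := by
        intro x hx
        rw [Set.uIoc_of_le hbeb] at hx
        have hxab : x ∈ Set.Icc a b := ⟨by linarith [hx.1], hx.2⟩
        have hψx := hψsmall x hxab
        have hψ'x := hMψ2 x hxab
        have hcx := hMc x ⟨by linarith [hxab.1], by linarith [hxab.2]⟩
        have hcx' := abs_le.1 hcx
        have hχdx := hχdbound x
        have hχn := hχ_nonneg x
        have hχ1 := hχ_le_one x
        have hbx1 : b - x ≤ ε := by linarith [hx.1]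
        have hbx0 : 0 ≤ b - x := by linarith [hx.2]
        have hd1 : |ψ x * χd x| ≤ 2 * Mψ * C₀ := by
          rw [abs_mul]
          have h2 : |ψ x| * |χd x| ≤ (Mψ * (b - x)) * (2 * C₀ / ε) :=
            mul_le_mul hψx hχdx (abs_nonneg _) (mul_nonneg hMψ0 hbx0)
          have h3 : (Mψ * (b - x)) * (2 * C₀ / ε) ≤ (Mψ * ε) * (2 * C₀ / ε) := by
            apply mul_le_mul_of_nonneg_right _ (by positivity)
            nlinarith
          have h4 : (Mψ * ε) * (2 * C₀ / ε) = 2 * Mψ * C₀ := by field_simp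
          linarith
        have hdΦ : |deriv Φ x| ≤ Mψ + 2 * Mψ * C₀ := by
          rw [hΦderiv]
          simp only [hΦddef]
          calc |deriv ψ x * χ x + ψ x * χd x| ≤ |deriv ψ x * χ x| + |ψ x * χd x| :=
              abs_add_le _ _
            _ ≤ Mψ + 2 * Mψ * C₀ := by
              have h5 : |deriv ψ x * χ x| ≤ Mψ := by
                rw [abs_mul, abs_of_nonneg hχn]
                nlinarith [abs_nonneg (deriv ψ x)]
              linarith
        have hΦabs : |Φ x| ≤ Mψ * ε := by
          simp only [hΦdef]
          rw [abs_mul, abs_of_nonneg hχn]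
          calc |ψ x| * χ x ≤ |ψ x| * 1 := mul_le_mul_of_nonneg_left hχ1 (abs_nonneg _)
            _ = |ψ x| := mul_one _
            _ ≤ Mψ * (b - x) := hψx
            _ ≤ Mψ * ε := mul_le_mul_of_nonneg_left hbx1 hMψ0
        have hψabs : |ψ x| ≤ Mψ * ε := by
          calc |ψ x| ≤ Mψ * (b - x) := hψx
            _ ≤ Mψ * ε := mul_le_mul_of_nonneg_left hbx1 hMψ0
        have hΦsq : Φ x ^ 2 ≤ (Mψ * ε) ^ 2 := by
          rw [← sq_abs]; exact pow_le_pow_left₀ (abs_nonneg _) hΦabs 2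
        have hψsq : ψ x ^ 2 ≤ (Mψ * ε) ^ 2 := by
          rw [← sq_abs]; exact pow_le_pow_left₀ (abs_nonneg _) hψabs 2
        have hdΦsq : deriv Φ x ^ 2 ≤ (Mψ + 2 * Mψ * C₀) ^ 2 := by
          rw [← sq_abs]; exact pow_le_pow_left₀ (abs_nonneg _) hdΦ 2
        have hdψsq : deriv ψ x ^ 2 ≤ Mψ ^ 2 := by
          rw [← sq_abs]
          exact pow_le_pow_left₀ (abs_nonneg _) hψ'x 2
        have hMεM : (Mψ * ε) ^ 2 ≤ Mψ ^ 2 := by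
          have h6 : (Mψ * ε) ^ 2 = Mψ ^ 2 * ε ^ 2 := by ring
          have h7 : ε ^ 2 ≤ 1 ^ 2 := pow_le_pow_left₀ hε_pos.le hε1 2
          have h8 : Mψ ^ 2 * ε ^ 2 ≤ Mψ ^ 2 * 1 := by
            apply mul_le_mul_of_nonneg_left _ (sq_nonneg Mψ)
            linarith
          linarith
        have hcterm : |c x * (Φ x ^ 2 - ψ x ^ 2)| ≤ Mc * (2 * Mψ ^ 2) := by
          rw [abs_mul]
          apply mul_le_mul hcx _ (abs_nonneg _) hMc0
          rw [abs_le]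
          constructor
          · linarith [sq_nonneg (Φ x), sq_nonneg (ψ x), sq_nonneg Mψ]
          · linarith [sq_nonneg (Φ x), sq_nonneg (ψ x), sq_nonneg Mψ]
        have hcterm' := abs_le.1 hcterm
        have hct2 : Mc * (2 * Mψ ^ 2) = 2 * Mc * Mψ ^ 2 := by ring
        rw [Real.norm_eq_abs]
        have hexpand : g1 x - (deriv ψ x ^ 2 + c x * ψ x ^ 2) =
            (deriv Φ x ^ 2 - deriv ψ x ^ 2) + c x * (Φ x ^ 2 - ψ x ^ 2) := by
          simp only [hg1def]; ring
        rw [hexpand, abs_le, hKdef]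
        constructor
        · linarith [sq_nonneg (deriv Φ x), sq_nonneg (deriv ψ x), sq_nonneg (Mψ + 2*Mψ*C₀),
            mul_nonneg hMc0 (sq_nonneg Mψ)]
        · linarith [sq_nonneg (deriv Φ x), sq_nonneg (deriv ψ x), sq_nonneg (Mψ + 2*Mψ*C₀),
            mul_nonneg hMc0 (sq_nonneg Mψ)]
      have hnic := intervalIntegral.norm_integral_le_of_norm_le_const hbnd
      rw [Real.norm_eq_abs] at hnic
      calc |∫ x in (b - ε)..b, (g1 x - (deriv ψ x ^ 2 + c x * ψ x ^ 2))| ≤ K * |b - (b - ε)| :=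
          hnic
        _ = K * ε := by rw [abs_of_pos (by linarith : (0:ℝ) < b - (b - ε))]; ring_nf
    rw [hsub, hchasles, hfirst, zero_add]
    exact hsecond
  clear_value K B d
  have hd_pos : 0 < d := by
    have := (abs_le.1 hE1).1
    linarith
  -- the splitting identity
  have haε0 : (0:ℝ) ≤ a - ε := by linarith
  have hkey : ∀ g : ℝ → ℝ, Continuous g → (∀ x, x < a - ε → g x = 0) → (∀ x, b < x → g x = 0) →
      ∀ s : ℝ, (∫ x in (0:ℝ)..1, Real.exp (2 * s * m x) * g x)
        = Real.exp (2 * s * m a) *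
          ((∫ x in (a - ε)..a, Real.exp (2 * s * (m x - m a)) * g x) + ∫ x in a..b, g x) := by
    intro g hg hgz1 hgz2 s
    have hexpc : Continuous fun x => Real.exp (2 * s * m x) :=
      Real.continuous_exp.comp (continuous_const.mul hmc)
    have hi : ∀ u v : ℝ, IntervalIntegrable (fun x => Real.exp (2 * s * m x) * g x) volume u v :=
      fun u v => (hexpc.mul hg).intervalIntegrable u v
    have hp0 : (∫ x in (0:ℝ)..(a - ε), Real.exp (2 * s * m x) * g x) = 0 := by
      rw [intervalIntegral.integral_of_le haε0, MeasureTheory.integral_Ioc_eq_integral_Ioo,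
        MeasureTheory.setIntegral_congr_fun measurableSet_Ioo (g := fun _ => (0:ℝ))
          (fun x hx => by rw [hgz1 x hx.2, mul_zero])]
      simp
    have hp3 : (∫ x in b..(1:ℝ), Real.exp (2 * s * m x) * g x) = 0 := by
      rw [intervalIntegral.integral_of_le hb.le,
        MeasureTheory.setIntegral_congr_fun measurableSet_Ioc (g := fun _ => (0:ℝ))
          (fun x hx => by rw [hgz2 x hx.1, mul_zero])]
      simp
    have hp1 : (∫ x in (a - ε)..a, Real.exp (2 * s * m x) * g x)
        = Real.exp (2 * s * m a) * ∫ x in (a - ε)..a, Real.exp (2 * s * (m x - m a)) * g x := by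
      rw [← intervalIntegral.integral_const_mul]
      apply intervalIntegral.integral_congr
      intro x _
      show Real.exp (2 * s * m x) * g x
          = Real.exp (2 * s * m a) * (Real.exp (2 * s * (m x - m a)) * g x)
      have harg : 2 * s * m x = 2 * s * m a + 2 * s * (m x - m a) := by ring
      rw [harg, Real.exp_add, mul_assoc]
    have hp2 : (∫ x in a..b, Real.exp (2 * s * m x) * g x)
        = Real.exp (2 * s * m a) * ∫ x in a..b, g x := by
      rw [← intervalIntegral.integral_const_mul]
      apply intervalIntegral.integral_congr
      intro x hx
      rw [Set.uIcc_of_le hab.le] at hx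
      show Real.exp (2 * s * m x) * g x = Real.exp (2 * s * m a) * g x
      rw [hconst x hx]
    rw [← intervalIntegral.integral_add_adjacent_intervals (hi 0 b) (hi b 1),
      ← intervalIntegral.integral_add_adjacent_intervals (hi 0 a) (hi a b),
      ← intervalIntegral.integral_add_adjacent_intervals (hi 0 (a - ε)) (hi (a - ε) a),
      hp0, hp3, hp1, hp2]
    ring
  set At : ℝ → ℝ := fun s => ∫ x in (a - ε)..a, Real.exp (2 * s * (m x - m a)) * g1 x
    with hAtdef
  set At2 : ℝ → ℝ := fun s => ∫ x in (a - ε)..a, Real.exp (2 * s * (m x - m a)) * g2 x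
    with hAt2def
  have hN2 : ∀ s : ℝ, (∫ x in (0:ℝ)..1, Real.exp (2 * s * m x) * g1 x)
      = Real.exp (2 * s * m a) * (At s + B) := by
    intro s
    rw [hkey g1 hg1c hg1z1 hg1z2 s]
    simp only [hAtdef]
    rw [hBdef]
  have hD2 : ∀ s : ℝ, (∫ x in (0:ℝ)..1, Real.exp (2 * s * m x) * g2 x)
      = Real.exp (2 * s * m a) * (At2 s + d) := by
    intro s
    rw [hkey g2 hg2c hg2z1 hg2z2 s]
    simp only [hAt2def]
    rw [hddef]
  have hAt2_nonneg : ∀ s : ℝ, 0 ≤ At2 s := by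
    intro s
    simp only [hAt2def]
    apply intervalIntegral.integral_nonneg (by linarith)
    intro u _
    have h2 : 0 ≤ g2 u := by
      simp only [hg2def]
      positivity
    exact mul_nonneg (Real.exp_pos _).le h2
  -- the main pointwise bound on lambdaN
  have hmain : ∀ s : ℝ, lambdaN m c s ≤ (At s + B) / (At2 s + d) := by
    intro s
    have hDpos : 0 < At2 s + d := by linarith [hAt2_nonneg s, hd_pos]
    have hE : (0:ℝ) < Real.exp (2 * s * m a) := Real.exp_pos _
    have hD2pos : 0 < Real.exp (2 * s * m a) * (At2 s + d) := mul_pos hE hDpos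
    set k : ℝ := (Real.sqrt (Real.exp (2 * s * m a) * (At2 s + d)))⁻¹ with hkdef2
    have hk2 : k ^ 2 = (Real.exp (2 * s * m a) * (At2 s + d))⁻¹ := by
      rw [hkdef2, inv_pow, Real.sq_sqrt hD2pos.le]
    clear_value k
    have hmem : (k ^ 2 * (Real.exp (2 * s * m a) * (At s + B))) ∈ SN s := by
      simp only [hSNdef, Set.mem_setOf_eq]
      refine ⟨fun x => k * Φ x, contDiff_const.mul hΦC, ?_, ?_⟩
      · show (∫ x in (0:ℝ)..1, Real.exp (2 * s * m x) * (k * Φ x) ^ 2) = 1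
        have hrw : (fun x => Real.exp (2 * s * m x) * (k * Φ x) ^ 2)
            = fun x => k ^ 2 * (Real.exp (2 * s * m x) * g2 x) := by
          funext x
          simp only [hg2def]
          ring
        rw [hrw, intervalIntegral.integral_const_mul, hD2 s, hk2]
        exact inv_mul_cancel₀ hD2pos.ne'
      · show k ^ 2 * (Real.exp (2 * s * m a) * (At s + B))
            = ∫ x in (0:ℝ)..1, Real.exp (2 * s * m x) *
              ((deriv (fun x => k * Φ x) x) ^ 2 + c x * (k * Φ x) ^ 2)
        have hder : ∀ x, deriv (fun y => k * Φ y) x = k * deriv Φ x := fun x =>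
          deriv_const_mul k (hΦd x).differentiableAt
        have hrw : (fun x => Real.exp (2 * s * m x) *
            ((deriv (fun y => k * Φ y) x) ^ 2 + c x * (k * Φ x) ^ 2))
            = fun x => k ^ 2 * (Real.exp (2 * s * m x) * g1 x) := by
          funext x
          rw [hder x]
          simp only [hg1def]
          ring
        rw [hrw, intervalIntegral.integral_const_mul, hN2 s]
    have hle : lambdaN m c s ≤ k ^ 2 * (Real.exp (2 * s * m a) * (At s + B)) := by
      rw [hlamN_eq s]
      exact csInf_le (hSNbdd s) hmem
    have heq2 : k ^ 2 * (Real.exp (2 * s * m a) * (At s + B)) = (At s + B) / (At2 s + d) := by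
      rw [hk2, inv_mul_eq_div, mul_div_mul_left _ _ hE.ne']
    rw [heq2] at hle
    exact hle
  -- convergence of the boundary-layer integrals
  have htend : ∀ g : ℝ → ℝ, Continuous g →
      Tendsto (fun s : ℝ => ∫ x in (a - ε)..a, Real.exp (2 * s * (m x - m a)) * g x)
        atTop (nhds 0) := by
    intro g hg
    have haea : a - ε ≤ a := by linarith
    have hrw : ∀ s : ℝ, (∫ x in (a - ε)..a, Real.exp (2 * s * (m x - m a)) * g x)
        = ∫ x in Set.Ioo (a - ε) a, Real.exp (2 * s * (m x - m a)) * g x := fun s => by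
      rw [intervalIntegral.integral_of_le haea, MeasureTheory.integral_Ioc_eq_integral_Ioo]
    simp only [hrw]
    have h0 : Tendsto (fun s : ℝ => ∫ x in Set.Ioo (a - ε) a,
        Real.exp (2 * s * (m x - m a)) * g x) atTop
        (nhds (∫ _ in Set.Ioo (a - ε) a, (0:ℝ))) := by
      apply MeasureTheory.tendsto_integral_filter_of_dominated_convergence
        (bound := fun x => |g x|)
      · exact Filter.Eventually.of_forall fun s =>
          ((Real.continuous_exp.comp (continuous_const.mul
            (hmc.sub continuous_const))).mul hg).aestronglyMeasurable
      · filter_upwards [eventually_ge_atTop (0:ℝ)] with s hs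
        rw [MeasureTheory.ae_restrict_iff' measurableSet_Ioo]
        apply Filter.Eventually.of_forall
        intro x hx
        have hmx : m x ≤ m a :=
          hmonL ⟨by linarith [hx.1], hx.2.le⟩ ⟨by linarith, le_refl a⟩ hx.2.le
        have harg : 2 * s * (m x - m a) ≤ 0 := by
          nlinarith [mul_nonneg hs (sub_nonneg.2 hmx)]
        have hexp1 : Real.exp (2 * s * (m x - m a)) ≤ 1 := Real.exp_le_one_iff.2 harg
        rw [Real.norm_eq_abs, abs_mul, abs_of_pos (Real.exp_pos _)]
        calc Real.exp (2 * s * (m x - m a)) * |g x| ≤ 1 * |g x| :=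
            mul_le_mul_of_nonneg_right hexp1 (abs_nonneg _)
          _ = |g x| := one_mul _
      · have h1 : IntervalIntegrable (fun x => |g x|) volume (a - ε) a :=
          hg.abs.intervalIntegrable _ _
        exact ((intervalIntegrable_iff_integrableOn_Ioc_of_le haea).1 h1).mono_set
          Set.Ioo_subset_Ioc_self
      · rw [MeasureTheory.ae_restrict_iff' measurableSet_Ioo]
        apply Filter.Eventually.of_forall
        intro x hx
        have hmx : m x < m a := hL1 x ⟨by linarith [hx.1], hx.2⟩
        have ht : m x - m a < 0 := by linarith
        have h1 : Tendsto (fun s : ℝ => 2 * s * (m x - m a)) atTop atBot := by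
          simpa [mul_assoc] using
            (tendsto_id.const_mul_atTop (show (0:ℝ) < 2 by norm_num)).atTop_mul_const_of_neg ht
        have h2 := (Real.tendsto_exp_atBot.comp h1).mul_const (g x)
        simpa using h2
    simpa using h0
  have hAt_tend : Tendsto At atTop (nhds 0) := by
    simp only [hAtdef]
    exact htend g1 hg1c
  have hAt2_tend : Tendsto At2 atTop (nhds 0) := by
    simp only [hAt2def]
    exact htend g2 hg2c
  have hRtend : Tendsto (fun s => (At s + B) / (At2 s + d)) atTop (nhds (B / d)) := by
    have h1 : Tendsto (fun s => At s + B) atTop (nhds (0 + B)) :=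
      hAt_tend.add tendsto_const_nhds
    have h2 : Tendsto (fun s => At2 s + d) atTop (nhds (0 + d)) :=
      hAt2_tend.add tendsto_const_nhds
    have h3 := h1.div h2 (by rw [zero_add]; exact hd_pos.ne')
    simp only [zero_add] at h3; exact h3
  -- final numeric bound
  have hBd : B / d ≤ lam + δ := by
    rw [div_le_iff₀ hd_pos]
    have h1 := (abs_le.1 hE2).2
    have h2 := (abs_le.1 hE1).1
    have habs1 : lam ≤ |lam| := le_abs_self lam
    have habs2 : -|lam| ≤ lam := neg_abs_le lam
    have hKε : 0 ≤ K * ε := mul_nonneg hK.le hε_pos.le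
    rcases le_or_gt 0 (lam + δ) with hcase | hcase
    · nlinarith [mul_nonneg hcase (show (0:ℝ) ≤ d - (1 - K * ε) by linarith),
        mul_nonneg hKε (show (0:ℝ) ≤ |lam| - lam by linarith), hεδ]
    · nlinarith [mul_nonneg (show (0:ℝ) ≤ -(lam + δ) by linarith)
        (show (0:ℝ) ≤ 1 - d by linarith), hεδ,
        mul_nonneg hKε (show (0:ℝ) ≤ |lam| + δ by linarith [abs_nonneg lam])]
  -- conclusion via limsup
  have hlb : ∀ s : ℝ, -Mc ≤ lambdaN m c s := fun s => by
    rw [hlamN_eq s]; exact le_csInf (hSNne s) (hSNlb s)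
  have hcob : IsCoboundedUnder (· ≤ ·) atTop (lambdaN m c) :=
    IsBoundedUnder.isCoboundedUnder_le
      ⟨-Mc, Filter.eventually_map.2 (Filter.Eventually.of_forall hlb)⟩
  calc limsup (lambdaN m c) atTop
      ≤ limsup (fun s => (At s + B) / (At2 s + d)) atTop :=
        Filter.limsup_le_limsup (Filter.Eventually.of_forall hmain) hcob
          hRtend.isBoundedUnder_le
    _ = B / d := hRtend.limsup_eq
    _ ≤ lam + δ := hBd
end

section
/- Suppose 0 < a < b < 1 and there exists ε₀ > 0 such that: m is constant on [a,b]; m is non-decreasing on [a−ε₀, a]; m is non-increasing on [b, b+ε₀]; and for every ε ∈ (0, ε₀) there exist x ∈ (a−ε, a) with m'(x) > 0 and y ∈ (b, b+ε) with m'(y) < 0 (so [a,b] is a segment of local maximum of type [a^I, b^D]). Then limsup_{s→∞} λ₁ᴺ(s) ≤ λ₁^{NN}(a,b). -/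
open MeasureTheory Filter Set

lemma exists_near_gt {f : ℝ → ℝ} {x u : ℝ} (hf : DifferentiableAt ℝ f x)
    (hd : 0 < deriv f x) (hxu : x < u) : ∃ w, x < w ∧ w < u ∧ f x < f w := by
  have h1 : Tendsto (slope f x) (nhdsWithin x (Ioi x)) (nhds (deriv f x)) :=
    (hasDerivAt_iff_tendsto_slope.mp hf.hasDerivAt).mono_left
      (nhdsWithin_mono x fun y hy => ne_of_gt hy)
  have h2 : ∀ᶠ w in nhdsWithin x (Ioi x), 0 < slope f x w := h1 (Ioi_mem_nhds hd)
  have h3 : ∀ᶠ w in nhdsWithin x (Ioi x), w < u :=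
    eventually_nhdsWithin_of_eventually_nhds (Filter.Tendsto.eventually_lt_const hxu tendsto_id)
  have h4 : ∀ᶠ w in nhdsWithin x (Ioi x), x < w := eventually_mem_nhdsWithin
  obtain ⟨w, hw2, hw3, hw4⟩ := (h2.and (h3.and h4)).exists
  refine ⟨w, hw4, hw3, ?_⟩
  rw [slope_def_field] at hw2
  rcases div_pos_iff.mp hw2 with ⟨h, _⟩ | ⟨_, h⟩ <;> linarith

lemma exists_near_lt {f : ℝ → ℝ} {x u : ℝ} (hf : DifferentiableAt ℝ f x)
    (hd : deriv f x < 0) (hxu : x < u) : ∃ w, x < w ∧ w < u ∧ f w < f x := by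
  obtain ⟨w, h1, h2, h3⟩ := exists_near_gt (f := fun y => -f y) hf.neg
    (by rw [deriv.fun_neg]; linarith) hxu
  exact ⟨w, h1, h2, by linarith⟩

lemma le_sInf_of_forall {S : Set ℝ} {C : ℝ} (hC : C ≤ 0) (h : ∀ l ∈ S, C ≤ l) : C ≤ sInf S := by
  rcases S.eq_empty_or_nonempty with rfl | hne
  · rw [Real.sInf_empty]; exact hC
  · exact le_csInf hne h

lemma mem_lb {w c : ℝ → ℝ} (hw : Continuous w) (hw0 : ∀ x, 0 ≤ w x)
    (hc : Continuous c) {a b : ℝ} (hab : a ≤ b) {K : ℝ}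
    (hK : ∀ x ∈ Icc a b, 0 ≤ c x + K) {φ : ℝ → ℝ} (hφ : ContDiff ℝ 1 φ)
    (hn : (∫ x in a..b, w x * (φ x)^2) = 1) :
    -K ≤ ∫ x in a..b, w x * ((deriv φ x)^2 + c x * (φ x)^2) := by
  have hφ' : Continuous (deriv φ) := hφ.continuous_deriv le_rfl
  have hφc : Continuous φ := hφ.continuous
  have h1 : IntervalIntegrable (fun x => w x * ((deriv φ x)^2 + c x * (φ x)^2)) volume a b :=
    (hw.mul ((hφ'.pow 2).add (hc.mul (hφc.pow 2)))).intervalIntegrable a b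
  have h2 : IntervalIntegrable (fun x => K * (w x * (φ x)^2)) volume a b :=
    (continuous_const.mul (hw.mul (hφc.pow 2))).intervalIntegrable a b
  have key : 0 ≤ ∫ x in a..b,
      (w x * ((deriv φ x)^2 + c x * (φ x)^2) + K * (w x * (φ x)^2)) := by
    apply intervalIntegral.integral_nonneg hab
    intro u hu
    nlinarith [hw0 u, hK u hu, sq_nonneg (deriv φ u), sq_nonneg (φ u),
      mul_nonneg (hw0 u) (sq_nonneg (deriv φ u)),
      mul_nonneg (mul_nonneg (hw0 u) (hK u hu)) (sq_nonneg (φ u))]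
  rw [intervalIntegral.integral_add h1 h2, intervalIntegral.integral_const_mul, hn] at key
  linarith

lemma lambdaN_lb (m c : ℝ → ℝ) (hm : Continuous m) (hc : Continuous c) {K : ℝ}
    (hK0 : 0 ≤ K) (hK : ∀ x ∈ Icc (0:ℝ) 1, 0 ≤ c x + K) (s : ℝ) : -K ≤ lambdaN m c s := by
  apply le_sInf_of_forall (by linarith)
  rintro l ⟨φ, hφ, hn, rfl⟩
  exact mem_lb (by continuity) (fun x => (Real.exp_pos _).le) hc zero_le_one hK hφ hn

set_option maxHeartbeats 4000000 in
/-- If `[a,b]` is a segment of local maximum of type `[aᴵ, bᴰ]`, then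
`limsup_{s→∞} λ₁ᴺ(s) ≤ λ₁ᴺᴺ(a,b)`. -/
theorem limsup_lambdaN_le_lambdaNN_of_segment_ID
    (m c : ℝ → ℝ) (hm : ContDiff ℝ 2 m) (hc : Continuous c)
    (a b : ℝ) (ha : 0 < a) (hab : a < b) (hb : b < 1)
    (hseg : ∃ ε₀ > (0:ℝ),
      (∀ x ∈ Set.Icc a b, m x = m a) ∧
      MonotoneOn m (Set.Icc (a - ε₀) a) ∧
      AntitoneOn m (Set.Icc b (b + ε₀)) ∧
      (∀ ε ∈ Set.Ioo (0:ℝ) ε₀,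
        (∃ x ∈ Set.Ioo (a - ε) a, 0 < deriv m x) ∧
        (∃ y ∈ Set.Ioo b (b + ε), deriv m y < 0))) :
    Filter.limsup (lambdaN m c) Filter.atTop ≤ lambdaIJ c false false a b := by
  obtain ⟨ε₀, hε₀, hconst, hmono, hanti, hder⟩ := hseg
  have hm1 : ContDiff ℝ 1 m := hm.of_le (by norm_num)
  have hmc : Continuous m := hm.continuous
  have hmd : Differentiable ℝ m := hm1.differentiable one_ne_zero
  -- a uniform lower bound for c on [0,1]
  obtain ⟨x₀, -, hx₀'⟩ := (isCompact_Icc (a := (0:ℝ)) (b := 1)).exists_isMinOn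
    ⟨0, by norm_num⟩ hc.continuousOn
  have hx₀ : ∀ x ∈ Icc (0:ℝ) 1, c x₀ ≤ c x := fun x hx => isMinOn_iff.mp hx₀' x hx
  set K := max 0 (-(c x₀)) with hKdef
  have hK0 : 0 ≤ K := le_max_left _ _
  have hK : ∀ x ∈ Icc (0:ℝ) 1, 0 ≤ c x + K := by
    intro x hx
    have h1 := hx₀ x hx
    have h2 : -(c x₀) ≤ K := le_max_right _ _
    linarith
  have hlb : ∀ s, -K ≤ lambdaN m c s := lambdaN_lb m c hmc hc hK0 hK
  have hcb : IsCoboundedUnder (· ≤ ·) atTop (lambdaN m c) :=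
    isCoboundedUnder_le_of_le atTop hlb
  refine le_of_forall_pos_le_add fun η hη => ?_
  refine Filter.limsup_le_of_le hcb ?_
  -- near-minimizer for λ^{NN}(a,b)
  set S : Set ℝ := {l : ℝ | ∃ φ : ℝ → ℝ, ContDiff ℝ 1 φ ∧
    ((false : Bool) = true → φ a = 0) ∧ ((false : Bool) = true → φ b = 0) ∧
    (∫ x in a..b, (φ x) ^ 2) = 1 ∧
    l = ∫ x in a..b, ((deriv φ x) ^ 2 + c x * (φ x) ^ 2)} with hSdef
  have hIJdef : lambdaIJ c false false a b = sInf S := rfl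
  have hne : S.Nonempty := by
    refine ⟨_, fun _ => 1 / Real.sqrt (b - a), contDiff_const, by simp, by simp, ?_, rfl⟩
    rw [intervalIntegral.integral_const, div_pow, one_pow,
      Real.sq_sqrt (by linarith : (0:ℝ) ≤ b - a), smul_eq_mul, mul_one_div,
      div_self (ne_of_gt (by linarith : (0:ℝ) < b - a))]
  obtain ⟨l₀, hl₀mem, hl₀⟩ := Real.lt_sInf_add_pos hne (by linarith : (0:ℝ) < η/3)
  rw [hSdef] at hl₀mem
  obtain ⟨φ, hφC, -, -, hφn, hl₀eq⟩ := hl₀mem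
  have hφcont : Continuous φ := hφC.continuous
  have hφ' : Continuous (deriv φ) := hφC.continuous_deriv le_rfl
  have hφd : Differentiable ℝ φ := hφC.differentiable one_ne_zero
  -- bound M for (φ')² + (c+K) φ² on [0,1]
  have hFcont : Continuous (fun x => (deriv φ x)^2 + (c x + K) * (φ x)^2) :=
    (hφ'.pow 2).add ((hc.add continuous_const).mul (hφcont.pow 2))
  obtain ⟨xM, -, hxM'⟩ := (isCompact_Icc (a := (0:ℝ)) (b := 1)).exists_isMaxOn
    ⟨0, by norm_num⟩ hFcont.continuousOn
  have hxM : ∀ x ∈ Icc (0:ℝ) 1, (deriv φ x)^2 + (c x + K) * (φ x)^2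
      ≤ (deriv φ xM)^2 + (c xM + K) * (φ xM)^2 := fun x hx => isMaxOn_iff.mp hxM' x hx
  set M := max 1 ((deriv φ xM)^2 + (c xM + K) * (φ xM)^2) with hMdef
  have hMpos : 0 < M := lt_of_lt_of_le one_pos (le_max_left _ _)
  have hMb : ∀ x ∈ Icc (0:ℝ) 1, (deriv φ x)^2 + (c x + K) * (φ x)^2 ≤ M :=
    fun x hx => le_trans (hxM x hx) (le_max_right _ _)
  -- choice of δ
  have h1b : 0 < 1 - b := by linarith
  set δ := min (min (ε₀/2) (a/2)) (min ((1-b)/2) (η/(3*M))) with hδdef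
  have hδpos : 0 < δ :=
    lt_min (lt_min (by linarith) (by linarith)) (lt_min (by linarith) (by positivity))
  have hδε : δ < ε₀ :=
    lt_of_le_of_lt (le_trans (min_le_left _ _) (min_le_left _ _)) (by linarith)
  have hδa : δ < a :=
    lt_of_le_of_lt (le_trans (min_le_left _ _) (min_le_right _ _)) (by linarith)
  have hδb : δ < 1 - b :=
    lt_of_le_of_lt (le_trans (min_le_right _ _) (min_le_left _ _)) (by linarith)
  have hδM : M * δ ≤ η/3 := by
    have h1 : δ ≤ η/(3*M) := le_trans (min_le_right _ _) (min_le_right _ _)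
    calc M * δ ≤ M * (η/(3*M)) := by
          exact mul_le_mul_of_nonneg_left h1 hMpos.le
      _ = η/3 := by field_simp
  -- the bump function
  set c₀ := (a+b)/2 with hc₀def
  set χ : ContDiffBump c₀ := ⟨(b-a)/2 + δ/2, (b-a)/2 + δ, by linarith, by linarith⟩ with hχdef
  have hrIn : Metric.closedBall c₀ χ.rIn = Icc (a - δ/2) (b + δ/2) := by
    rw [Real.closedBall_eq_Icc, hχdef, hc₀def]
    congr 1 <;> ring
  have hrOutIcc : Metric.closedBall c₀ χ.rOut = Icc (a - δ) (b + δ) := by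
    rw [Real.closedBall_eq_Icc, hχdef, hc₀def]
    congr 1 <;> ring
  have hrOut : Metric.ball c₀ χ.rOut = Ioo (a - δ) (b + δ) := by
    rw [Real.ball_eq_Ioo, hχdef, hc₀def]
    congr 1 <;> ring
  have hχ1 : ∀ x ∈ Icc (a - δ/2) (b + δ/2), χ x = 1 := by
    intro x hx
    exact χ.one_of_mem_closedBall (by rw [hrIn]; exact hx)
  have hχ0 : ∀ x, x ∉ Ioo (a - δ) (b + δ) → χ x = 0 := by
    intro x hx
    exact Function.notMem_support.mp (by rw [χ.support_eq, hrOut]; exact hx)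
  have hχ'0 : ∀ x, x ∉ Ioo (a - δ) (b + δ) → deriv (χ : ℝ → ℝ) x = 0 := by
    intro x hx
    by_cases hx1 : x ∈ Icc (a - δ) (b + δ)
    · -- boundary point : local minimum
      have hmin : IsLocalMin (χ : ℝ → ℝ) x := by
        apply Filter.Eventually.of_forall
        intro y
        rw [hχ0 x hx]
        exact χ.nonneg
      exact hmin.deriv_eq_zero
    · exact Function.notMem_support.mp
        (fun hmem => hx1 (by rw [← hrOutIcc]; exact χ.tsupport_eq ▸ support_deriv_subset hmem))
  have hχ'1 : ∀ x ∈ Icc (a - δ/2) (b + δ/2), deriv (χ : ℝ → ℝ) x = 0 := by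
    intro x hx
    by_cases hxi : x ∈ Ioo (a - δ/2) (b + δ/2)
    · have hev : (χ : ℝ → ℝ) =ᶠ[nhds x] fun _ => (1:ℝ) := by
        filter_upwards [Ioo_mem_nhds hxi.1 hxi.2] with y hy
        exact hχ1 y (Ioo_subset_Icc_self hy)
      rw [hev.deriv_eq]
      exact deriv_const x 1
    · have hmax : IsLocalMax (χ : ℝ → ℝ) x := by
        apply Filter.Eventually.of_forall
        intro y
        rw [hχ1 x hx]
        exact χ.le_one
      exact hmax.deriv_eq_zero
  -- the test function ψ
  set ψ : ℝ → ℝ := fun x => φ x * χ x with hψdef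
  have hχC : ContDiff ℝ 1 (χ : ℝ → ℝ) := χ.contDiff
  have hψC : ContDiff ℝ 1 ψ := hφC.mul hχC
  have hψcont : Continuous ψ := hψC.continuous
  have hψ'cont : Continuous (deriv ψ) := hψC.continuous_deriv le_rfl
  have hχd : Differentiable ℝ (χ : ℝ → ℝ) := hχC.differentiable one_ne_zero
  have hψ'mul : ∀ x, deriv ψ x = deriv φ x * χ x + φ x * deriv (χ : ℝ → ℝ) x :=
    fun x => deriv_mul (hφd x) (hχd x)
  have hψeq : ∀ x ∈ Icc (a - δ/2) (b + δ/2), ψ x = φ x ∧ deriv ψ x = deriv φ x := by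
    intro x hx
    constructor
    · rw [hψdef]; simp only; rw [hχ1 x hx, mul_one]
    · rw [hψ'mul x, hχ1 x hx, hχ'1 x hx]; ring
  have hψ0 : ∀ x, x ∉ Ioo (a - δ) (b + δ) → ψ x = 0 ∧ deriv ψ x = 0 := by
    intro x hx
    constructor
    · rw [hψdef]; simp only; rw [hχ0 x hx, mul_zero]
    · rw [hψ'mul x, hχ0 x hx, hχ'0 x hx]; ring
  -- bound MG for (ψ')² + (c+K) ψ² on [0,1]
  have hGcont : Continuous (fun x => (deriv ψ x)^2 + (c x + K) * (ψ x)^2) :=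
    (hψ'cont.pow 2).add ((hc.add continuous_const).mul (hψcont.pow 2))
  obtain ⟨xG, -, hxG'⟩ := (isCompact_Icc (a := (0:ℝ)) (b := 1)).exists_isMaxOn
    ⟨0, by norm_num⟩ hGcont.continuousOn
  have hxG : ∀ x ∈ Icc (0:ℝ) 1, (deriv ψ x)^2 + (c x + K) * (ψ x)^2
      ≤ (deriv ψ xG)^2 + (c xG + K) * (ψ xG)^2 := fun x hx => isMaxOn_iff.mp hxG' x hx
  set MG := max 1 ((deriv ψ xG)^2 + (c xG + K) * (ψ xG)^2) with hMGdef
  have hMGpos : 0 < MG := lt_of_lt_of_le one_pos (le_max_left _ _)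
  have hMGb : ∀ x ∈ Icc (0:ℝ) 1, (deriv ψ x)^2 + (c x + K) * (ψ x)^2 ≤ MG :=
    fun x hx => le_trans (hxG x hx) (le_max_right _ _)
  have hF0 : ∀ x ∈ Icc (0:ℝ) 1, 0 ≤ (deriv φ x)^2 + (c x + K) * (φ x)^2 := by
    intro x hx
    have h := hK x hx
    nlinarith [sq_nonneg (deriv φ x), sq_nonneg (φ x), mul_nonneg h (sq_nonneg (φ x))]
  have hG0 : ∀ x ∈ Icc (0:ℝ) 1, 0 ≤ (deriv ψ x)^2 + (c x + K) * (ψ x)^2 := by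
    intro x hx
    have := hK x hx
    nlinarith [sq_nonneg (deriv ψ x), sq_nonneg (ψ x), mul_nonneg this (sq_nonneg (ψ x))]
  -- strict drop of m at distance δ/2 from the plateau
  have hθa : m (a - δ/2) < m a := by
    obtain ⟨⟨x, hx, hx'⟩, -⟩ := hder (δ/2) ⟨by linarith, by linarith⟩
    obtain ⟨w, hw1, hw2, hw3⟩ := exists_near_gt (hmd x) hx' hx.2
    have hx1 : a - ε₀ ≤ a - δ/2 := by linarith
    have h1 : m (a - δ/2) ≤ m x :=
      hmono ⟨hx1, by linarith⟩ ⟨by linarith [hx.1], hx.2.le⟩ hx.1.le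
    have h2 : m w ≤ m a :=
      hmono ⟨by linarith [hx.1], by linarith⟩ ⟨by linarith, le_refl a⟩ hw2.le
    linarith
  have hba : m b = m a := hconst b ⟨hab.le, le_refl b⟩
  have hθb : m (b + δ/2) < m a := by
    obtain ⟨-, ⟨y, hy, hy'⟩⟩ := hder (δ/2) ⟨by linarith, by linarith⟩
    obtain ⟨w, hw1, hw2, hw3⟩ := exists_near_lt (hmd y) hy' hy.2
    have h1 : m (b + δ/2) ≤ m w :=
      hanti ⟨by linarith [hy.1], by linarith⟩ ⟨by linarith, by linarith⟩ hw2.le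
    have h2 : m y ≤ m b :=
      hanti ⟨le_refl b, by linarith⟩ ⟨hy.1.le, by linarith [hy.2]⟩ hy.1.le
    linarith [hba]
  set θ := max (m (a - δ/2)) (m (b + δ/2)) with hθdef
  have hθ : θ < m a := max_lt hθa hθb
  -- eventual smallness of the exponential error term
  have hTend : Tendsto (fun s : ℝ => Real.exp (2*s*(θ - m a)) * (MG * δ)) atTop (nhds 0) := by
    have h1 : Tendsto (fun s : ℝ => 2*s*(θ - m a)) atTop atBot := by
      have h2 : Tendsto (fun s : ℝ => s * (2*(θ - m a))) atTop atBot :=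
        (tendsto_mul_const_atBot_of_neg (by linarith)).mpr tendsto_id
      convert h2 using 2 with s
      ring
    have h2 := Real.tendsto_exp_atBot.comp h1
    have h3 := h2.mul_const (MG * δ)
    simpa using h3
  have hEv : ∀ᶠ s in atTop, Real.exp (2*s*(θ - m a)) * (MG * δ) < η/3 :=
    hTend (Iio_mem_nhds (by positivity : (0:ℝ) < η/3))
  filter_upwards [eventually_ge_atTop (0:ℝ), hEv] with s hs0 hsE
  -- fixed large s : the main estimate
  have hs2 : (0:ℝ) ≤ 2*s := by linarith
  have hwcont : Continuous (fun x => Real.exp (2*s*m x)) := Real.continuous_exp.comp (continuous_const.mul hmc)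
  have hGwcont : Continuous (fun x => Real.exp (2*s*m x) * ((deriv ψ x)^2 + (c x + K) * (ψ x)^2)) :=
    hwcont.mul hGcont
  have hI : ∀ u v : ℝ, IntervalIntegrable
      (fun x => Real.exp (2*s*m x) * ((deriv ψ x)^2 + (c x + K) * (ψ x)^2)) volume u v :=
    fun u v => hGwcont.intervalIntegrable u v
  have hNwcont : Continuous (fun x => Real.exp (2*s*m x) * (ψ x)^2) :=
    hwcont.mul (hψcont.pow 2)
  have hIN : ∀ u v : ℝ, IntervalIntegrable (fun x => Real.exp (2*s*m x) * (ψ x)^2) volume u v :=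
    fun u v => hNwcont.intervalIntegrable u v
  set N := ∫ x in (0:ℝ)..1, Real.exp (2*s*m x) * (ψ x)^2 with hNdef
  set Q := ∫ x in (0:ℝ)..1, Real.exp (2*s*m x) * ((deriv ψ x)^2 + c x * (ψ x)^2) with hQdef
  set Q' := ∫ x in (0:ℝ)..1, Real.exp (2*s*m x) * ((deriv ψ x)^2 + (c x + K) * (ψ x)^2) with hQ'def
  -- Q' = Q + K * N
  have hQQ' : Q' = Q + K * N := by
    have hptw : ∀ x : ℝ, Real.exp (2*s*m x) * ((deriv ψ x)^2 + (c x + K) * (ψ x)^2)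
        = Real.exp (2*s*m x) * ((deriv ψ x)^2 + c x * (ψ x)^2)
          + K * (Real.exp (2*s*m x) * (ψ x)^2) := fun x => by ring
    rw [hQ'def]
    simp only [hptw]
    rw [intervalIntegral.integral_add
      (f := fun x => Real.exp (2*s*m x) * ((deriv ψ x)^2 + c x * (ψ x)^2))
      (g := fun x => K * (Real.exp (2*s*m x) * (ψ x)^2))
      ((hwcont.mul ((hψ'cont.pow 2).add (hc.mul (hψcont.pow 2)))).intervalIntegrable 0 1)
      ((continuous_const.mul hNwcont).intervalIntegrable 0 1),
      intervalIntegral.integral_const_mul]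
  -- exp weight equals exp (2 s m a) on [a,b]
  have hwa : ∀ x ∈ Icc a b, Real.exp (2*s*m x) = Real.exp (2*s*m a) := by
    intro x hx
    rw [hconst x hx]
  have habIcc : Icc a b ⊆ Icc (a - δ/2) (b + δ/2) :=
    Icc_subset_Icc (by linarith) (by linarith)
  -- N ≥ exp (2 s m a)
  have hNlb : Real.exp (2*s*m a) ≤ N := by
    have hmid : (∫ x in a..b, Real.exp (2*s*m x) * (ψ x)^2) = Real.exp (2*s*m a) := by
      have hEq : EqOn (fun x => Real.exp (2*s*m x) * (ψ x)^2)
          (fun x => Real.exp (2*s*m a) * (φ x)^2) (uIcc a b) := by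
        intro x hx
        rw [uIcc_of_le hab.le] at hx
        simp only
        rw [hwa x hx, (hψeq x (habIcc hx)).1]
      rw [intervalIntegral.integral_congr hEq, intervalIntegral.integral_const_mul, hφn, mul_one]
    have h1 : 0 ≤ ∫ x in (0:ℝ)..a, Real.exp (2*s*m x) * (ψ x)^2 :=
      intervalIntegral.integral_nonneg ha.le
        (fun u _ => mul_nonneg (Real.exp_pos _).le (sq_nonneg _))
    have h2 : 0 ≤ ∫ x in b..1, Real.exp (2*s*m x) * (ψ x)^2 :=
      intervalIntegral.integral_nonneg hb.le
        (fun u _ => mul_nonneg (Real.exp_pos _).le (sq_nonneg _))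
    have hsplit : (∫ x in (0:ℝ)..a, Real.exp (2*s*m x) * (ψ x)^2)
        + (∫ x in a..b, Real.exp (2*s*m x) * (ψ x)^2)
        + (∫ x in b..1, Real.exp (2*s*m x) * (ψ x)^2) = N := by
      rw [intervalIntegral.integral_add_adjacent_intervals (hIN 0 a) (hIN a b),
        intervalIntegral.integral_add_adjacent_intervals (hIN 0 b) (hIN b 1)]
    rw [← hsplit, hmid]
    linarith
  have hNpos : 0 < N := lt_of_lt_of_le (Real.exp_pos _) hNlb
  -- Q' ≥ 0
  have hQ'0 : 0 ≤ Q' := by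
    rw [hQ'def]
    apply intervalIntegral.integral_nonneg zero_le_one
    intro u hu
    exact mul_nonneg (Real.exp_pos _).le (hG0 u hu)
  -- decomposition of Q' into seven pieces
  have hsum : (∫ x in (0:ℝ)..(a-δ), Real.exp (2*s*m x) * ((deriv ψ x)^2 + (c x + K) * (ψ x)^2))
      + (∫ x in (a-δ)..(a-δ/2), Real.exp (2*s*m x) * ((deriv ψ x)^2 + (c x + K) * (ψ x)^2))
      + (∫ x in (a-δ/2)..a, Real.exp (2*s*m x) * ((deriv ψ x)^2 + (c x + K) * (ψ x)^2))
      + (∫ x in a..b, Real.exp (2*s*m x) * ((deriv ψ x)^2 + (c x + K) * (ψ x)^2))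
      + (∫ x in b..(b+δ/2), Real.exp (2*s*m x) * ((deriv ψ x)^2 + (c x + K) * (ψ x)^2))
      + (∫ x in (b+δ/2)..(b+δ), Real.exp (2*s*m x) * ((deriv ψ x)^2 + (c x + K) * (ψ x)^2))
      + (∫ x in (b+δ)..1, Real.exp (2*s*m x) * ((deriv ψ x)^2 + (c x + K) * (ψ x)^2)) = Q' := by
    rw [intervalIntegral.integral_add_adjacent_intervals (hI 0 (a-δ)) (hI (a-δ) (a-δ/2)),
      intervalIntegral.integral_add_adjacent_intervals (hI 0 (a-δ/2)) (hI (a-δ/2) a),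
      intervalIntegral.integral_add_adjacent_intervals (hI 0 a) (hI a b),
      intervalIntegral.integral_add_adjacent_intervals (hI 0 b) (hI b (b+δ/2)),
      intervalIntegral.integral_add_adjacent_intervals (hI 0 (b+δ/2)) (hI (b+δ/2) (b+δ)),
      intervalIntegral.integral_add_adjacent_intervals (hI 0 (b+δ)) (hI (b+δ) 1)]
  -- piece 1 and piece 7 vanish
  have hP1 : (∫ x in (0:ℝ)..(a-δ), Real.exp (2*s*m x) * ((deriv ψ x)^2 + (c x + K) * (ψ x)^2)) = 0 := by
    have hEq : EqOn (fun x => Real.exp (2*s*m x) * ((deriv ψ x)^2 + (c x + K) * (ψ x)^2))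
        (fun _ => (0:ℝ)) (uIcc 0 (a-δ)) := by
      intro x hx
      rw [uIcc_of_le (by linarith)] at hx
      have hx' : x ∉ Ioo (a-δ) (b+δ) := by
        simp only [mem_Ioo, not_and_or, not_lt]
        exact Or.inl hx.2
      obtain ⟨h1, h2⟩ := hψ0 x hx'
      simp only
      rw [h1, h2]
      ring
    rw [intervalIntegral.integral_congr hEq, intervalIntegral.integral_zero]
  have hP7 : (∫ x in (b+δ)..1, Real.exp (2*s*m x) * ((deriv ψ x)^2 + (c x + K) * (ψ x)^2)) = 0 := by
    have hEq : EqOn (fun x => Real.exp (2*s*m x) * ((deriv ψ x)^2 + (c x + K) * (ψ x)^2))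
        (fun _ => (0:ℝ)) (uIcc (b+δ) 1) := by
      intro x hx
      rw [uIcc_of_le (by linarith)] at hx
      have hx' : x ∉ Ioo (a-δ) (b+δ) := by
        simp only [mem_Ioo, not_and_or, not_lt]
        exact Or.inr hx.1
      obtain ⟨h1, h2⟩ := hψ0 x hx'
      simp only
      rw [h1, h2]
      ring
    rw [intervalIntegral.integral_congr hEq, intervalIntegral.integral_zero]
  -- a generic bound for the remaining pieces
  have hPbound : ∀ u v C : ℝ, u ≤ v →
      (∀ x ∈ Icc u v, Real.exp (2*s*m x) * ((deriv ψ x)^2 + (c x + K) * (ψ x)^2) ≤ C) →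
      (∫ x in u..v, Real.exp (2*s*m x) * ((deriv ψ x)^2 + (c x + K) * (ψ x)^2)) ≤ (v - u) * C := by
    intro u v C huv hC
    calc (∫ x in u..v, Real.exp (2*s*m x) * ((deriv ψ x)^2 + (c x + K) * (ψ x)^2))
        ≤ ∫ _ in u..v, C := intervalIntegral.integral_mono_on huv (hI u v)
          (intervalIntegrable_const) hC
      _ = (v - u) * C := by rw [intervalIntegral.integral_const, smul_eq_mul]
  -- piece 2 : transition zone on the left
  have hP2 : (∫ x in (a-δ)..(a-δ/2), Real.exp (2*s*m x) * ((deriv ψ x)^2 + (c x + K) * (ψ x)^2))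
      ≤ (δ/2) * (Real.exp (2*s*θ) * MG) := by
    have h := hPbound (a-δ) (a-δ/2) (Real.exp (2*s*θ) * MG) (by linarith) ?_
    · calc _ ≤ (a-δ/2 - (a-δ)) * (Real.exp (2*s*θ) * MG) := h
        _ = (δ/2) * (Real.exp (2*s*θ) * MG) := by ring
    intro x hx
    have hx01 : x ∈ Icc (0:ℝ) 1 := ⟨by linarith [hx.1], by linarith [hx.2]⟩
    have hmx : m x ≤ m (a - δ/2) :=
      hmono ⟨by linarith [hx.1], by linarith [hx.2]⟩ ⟨by linarith, by linarith⟩ hx.2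
    have hwle : Real.exp (2*s*m x) ≤ Real.exp (2*s*θ) :=
      Real.exp_le_exp.mpr (mul_le_mul_of_nonneg_left (le_trans hmx (le_max_left _ _)) hs2)
    calc Real.exp (2*s*m x) * ((deriv ψ x)^2 + (c x + K) * (ψ x)^2)
        ≤ Real.exp (2*s*θ) * ((deriv ψ x)^2 + (c x + K) * (ψ x)^2) :=
          mul_le_mul_of_nonneg_right hwle (hG0 x hx01)
      _ ≤ Real.exp (2*s*θ) * MG :=
          mul_le_mul_of_nonneg_left (hMGb x hx01) (Real.exp_pos _).le
  -- piece 6 : transition zone on the right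
  have hP6 : (∫ x in (b+δ/2)..(b+δ), Real.exp (2*s*m x) * ((deriv ψ x)^2 + (c x + K) * (ψ x)^2))
      ≤ (δ/2) * (Real.exp (2*s*θ) * MG) := by
    have h := hPbound (b+δ/2) (b+δ) (Real.exp (2*s*θ) * MG) (by linarith) ?_
    · calc _ ≤ (b+δ - (b+δ/2)) * (Real.exp (2*s*θ) * MG) := h
        _ = (δ/2) * (Real.exp (2*s*θ) * MG) := by ring
    intro x hx
    have hx01 : x ∈ Icc (0:ℝ) 1 := ⟨by linarith [hx.1], by linarith [hx.2]⟩
    have hmx : m x ≤ m (b + δ/2) :=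
      hanti ⟨by linarith, by linarith⟩ ⟨by linarith [hx.1], by linarith [hx.2]⟩ hx.1
    have hwle : Real.exp (2*s*m x) ≤ Real.exp (2*s*θ) :=
      Real.exp_le_exp.mpr (mul_le_mul_of_nonneg_left (le_trans hmx (le_max_right _ _)) hs2)
    calc Real.exp (2*s*m x) * ((deriv ψ x)^2 + (c x + K) * (ψ x)^2)
        ≤ Real.exp (2*s*θ) * ((deriv ψ x)^2 + (c x + K) * (ψ x)^2) :=
          mul_le_mul_of_nonneg_right hwle (hG0 x hx01)
      _ ≤ Real.exp (2*s*θ) * MG :=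
          mul_le_mul_of_nonneg_left (hMGb x hx01) (Real.exp_pos _).le
  -- piece 3 : plateau-extension on the left
  have hP3 : (∫ x in (a-δ/2)..a, Real.exp (2*s*m x) * ((deriv ψ x)^2 + (c x + K) * (ψ x)^2))
      ≤ (δ/2) * (Real.exp (2*s*m a) * M) := by
    have h := hPbound (a-δ/2) a (Real.exp (2*s*m a) * M) (by linarith) ?_
    · calc _ ≤ (a - (a-δ/2)) * (Real.exp (2*s*m a) * M) := h
        _ = (δ/2) * (Real.exp (2*s*m a) * M) := by ring
    intro x hx
    have hx01 : x ∈ Icc (0:ℝ) 1 := ⟨by linarith [hx.1], by linarith [hx.2]⟩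
    have hxin : x ∈ Icc (a - δ/2) (b + δ/2) := ⟨hx.1, by linarith [hx.2]⟩
    have hmx : m x ≤ m a :=
      hmono ⟨by linarith [hx.1], by linarith [hx.2]⟩ ⟨by linarith, le_refl a⟩ hx.2
    have hwle : Real.exp (2*s*m x) ≤ Real.exp (2*s*m a) :=
      Real.exp_le_exp.mpr (mul_le_mul_of_nonneg_left hmx hs2)
    obtain ⟨he1, he2⟩ := hψeq x hxin
    rw [he1, he2]
    calc Real.exp (2*s*m x) * ((deriv φ x)^2 + (c x + K) * (φ x)^2)
        ≤ Real.exp (2*s*m a) * ((deriv φ x)^2 + (c x + K) * (φ x)^2) := by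
          exact mul_le_mul_of_nonneg_right hwle (hF0 x hx01)
      _ ≤ Real.exp (2*s*m a) * M :=
          mul_le_mul_of_nonneg_left (hMb x hx01) (Real.exp_pos _).le
  -- piece 5 : plateau-extension on the right
  have hP5 : (∫ x in b..(b+δ/2), Real.exp (2*s*m x) * ((deriv ψ x)^2 + (c x + K) * (ψ x)^2))
      ≤ (δ/2) * (Real.exp (2*s*m a) * M) := by
    have h := hPbound b (b+δ/2) (Real.exp (2*s*m a) * M) (by linarith) ?_
    · calc _ ≤ (b+δ/2 - b) * (Real.exp (2*s*m a) * M) := h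
        _ = (δ/2) * (Real.exp (2*s*m a) * M) := by ring
    intro x hx
    have hx01 : x ∈ Icc (0:ℝ) 1 := ⟨by linarith [hx.1], by linarith [hx.2]⟩
    have hxin : x ∈ Icc (a - δ/2) (b + δ/2) := ⟨by linarith [hx.1], hx.2⟩
    have hmx : m x ≤ m a := by
      have h1 : m x ≤ m b :=
        hanti ⟨le_refl b, by linarith⟩ ⟨hx.1, by linarith [hx.2]⟩ hx.1
      linarith [hba]
    have hwle : Real.exp (2*s*m x) ≤ Real.exp (2*s*m a) :=
      Real.exp_le_exp.mpr (mul_le_mul_of_nonneg_left hmx hs2)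
    obtain ⟨he1, he2⟩ := hψeq x hxin
    rw [he1, he2]
    calc Real.exp (2*s*m x) * ((deriv φ x)^2 + (c x + K) * (φ x)^2)
        ≤ Real.exp (2*s*m a) * ((deriv φ x)^2 + (c x + K) * (φ x)^2) := by
          exact mul_le_mul_of_nonneg_right hwle (hF0 x hx01)
      _ ≤ Real.exp (2*s*m a) * M :=
          mul_le_mul_of_nonneg_left (hMb x hx01) (Real.exp_pos _).le
  -- piece 4 : the main term
  have hP4 : (∫ x in a..b, Real.exp (2*s*m x) * ((deriv ψ x)^2 + (c x + K) * (ψ x)^2))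
      = Real.exp (2*s*m a) * (l₀ + K) := by
    have hEq : EqOn (fun x => Real.exp (2*s*m x) * ((deriv ψ x)^2 + (c x + K) * (ψ x)^2))
        (fun x => Real.exp (2*s*m a) * (((deriv φ x)^2 + c x * (φ x)^2) + K * (φ x)^2))
        (uIcc a b) := by
      intro x hx
      rw [uIcc_of_le hab.le] at hx
      obtain ⟨he1, he2⟩ := hψeq x (habIcc hx)
      simp only
      rw [hwa x hx, he1, he2]
      ring
    rw [intervalIntegral.integral_congr hEq, intervalIntegral.integral_const_mul,
      intervalIntegral.integral_add
        (f := fun x => (deriv φ x)^2 + c x * (φ x)^2) (g := fun x => K * (φ x)^2)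
        (((hφ'.pow 2).add (hc.mul (hφcont.pow 2))).intervalIntegrable a b)
        ((continuous_const.mul (hφcont.pow 2)).intervalIntegrable a b),
      intervalIntegral.integral_const_mul, hφn, mul_one, ← hl₀eq]
  -- the total bound on Q'
  have hQ'le : Q' ≤ Real.exp (2*s*m a) * ((l₀ + K) + M * δ) + Real.exp (2*s*θ) * (MG * δ) := by
    rw [← hsum, hP1, hP4, hP7]
    have e1 : Real.exp (2*s*m a) * ((l₀ + K) + M * δ)
        = Real.exp (2*s*m a) * (l₀ + K) + ((δ/2) * (Real.exp (2*s*m a) * M)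
          + (δ/2) * (Real.exp (2*s*m a) * M)) := by ring
    have e2 : Real.exp (2*s*θ) * (MG * δ)
        = (δ/2) * (Real.exp (2*s*θ) * MG) + (δ/2) * (Real.exp (2*s*θ) * MG) := by ring
    rw [e1, e2]
    linarith [hP2, hP3, hP5, hP6]
  -- membership of the normalized test function in the λ^N(s) set
  set SN : Set ℝ := {l : ℝ | ∃ φ₁ : ℝ → ℝ, ContDiff ℝ 1 φ₁ ∧
    (∫ x in (0:ℝ)..1, Real.exp (2 * s * m x) * (φ₁ x) ^ 2) = 1 ∧
    l = ∫ x in (0:ℝ)..1, Real.exp (2 * s * m x) * ((deriv φ₁ x) ^ 2 + c x * (φ₁ x) ^ 2)} with hSNdef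
  have hNdefeq : lambdaN m c s = sInf SN := rfl
  have hbdd : BddBelow SN := by
    refine ⟨-K, ?_⟩
    rintro l ⟨φ₁, h1, h2, rfl⟩
    exact mem_lb (Real.continuous_exp.comp (continuous_const.mul hmc))
      (fun x => (Real.exp_pos _).le) hc zero_le_one hK h1 h2
  have hmem : Q / N ∈ SN := by
    refine ⟨fun x => ψ x / Real.sqrt N, hψC.div_const _, ?_, ?_⟩
    · have hptw : ∀ x : ℝ, Real.exp (2*s*m x) * (ψ x / Real.sqrt N)^2
          = (Real.exp (2*s*m x) * (ψ x)^2) / N := by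
        intro x
        rw [div_pow, Real.sq_sqrt hNpos.le]
        ring
      simp only [hptw]
      rw [intervalIntegral.integral_div, ← hNdef, div_self hNpos.ne']
    · have hderc : ∀ x : ℝ, deriv (fun y => ψ y / Real.sqrt N) x = deriv ψ x / Real.sqrt N :=
        fun x => deriv_div_const _
      have hptw : ∀ x : ℝ, Real.exp (2*s*m x) * ((deriv (fun y => ψ y / Real.sqrt N) x)^2
          + c x * (ψ x / Real.sqrt N)^2)
          = (Real.exp (2*s*m x) * ((deriv ψ x)^2 + c x * (ψ x)^2)) / N := by
        intro x
        rw [hderc x, div_pow, div_pow, Real.sq_sqrt hNpos.le]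
        ring
      simp only [hptw]
      rw [intervalIntegral.integral_div, ← hQdef]
  have hlam : lambdaN m c s ≤ Q / N := by
    rw [hNdefeq]
    exact csInf_le hbdd hmem
  -- final chain of inequalities
  have hQN : Q / N = Q' / N - K := by
    rw [hQQ']
    field_simp
    ring
  have h1 : Q' / N ≤ Q' / Real.exp (2*s*m a) :=
    div_le_div_of_nonneg_left hQ'0 (Real.exp_pos _) hNlb
  have hexp : Real.exp (2*s*(θ - m a)) * Real.exp (2*s*m a) = Real.exp (2*s*θ) := by
    rw [← Real.exp_add]
    congr 1
    ring
  have h2 : Q' / Real.exp (2*s*m a) ≤ (l₀ + K) + M * δ + Real.exp (2*s*(θ - m a)) * (MG * δ) := by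
    rw [div_le_iff₀ (Real.exp_pos _)]
    calc Q' ≤ Real.exp (2*s*m a) * ((l₀ + K) + M * δ) + Real.exp (2*s*θ) * (MG * δ) := hQ'le
      _ = ((l₀ + K) + M * δ + Real.exp (2*s*(θ - m a)) * (MG * δ)) * Real.exp (2*s*m a) := by
        rw [← hexp]; ring
  rw [hIJdef]
  have hl₀' : l₀ < sInf S + η/3 := hl₀
  calc lambdaN m c s ≤ Q / N := hlam
    _ = Q' / N - K := hQN
    _ ≤ (l₀ + K) + M * δ + Real.exp (2*s*(θ - m a)) * (MG * δ) - K := by linarith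
    _ ≤ sInf S + η := by linarith
end

section
/- Suppose 0 < a < b < 1 and there exists ε₀ > 0 such that: m is constant on [a,b]; m is non-increasing on [a−ε₀, a]; m is non-decreasing on [b, b+ε₀]; and for every ε ∈ (0, ε₀) there exist x ∈ (a−ε, a) with m'(x) < 0 and y ∈ (b, b+ε) with m'(y) > 0 (so [a,b] is a segment of local maximum of type [a^D, b^I]). Then limsup_{s→∞} λ₁ᴺ(s) ≤ λ₁^{DD}(a,b). -/
open MeasureTheory Filter Set

noncomputable def tri (s : ℝ) : ℝ := max 0 (1 - |2*s - 3|)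

lemma tri_cont : Continuous tri := by
  unfold tri; fun_prop

lemma tri_nonneg (s : ℝ) : 0 ≤ tri s := le_max_left _ _

lemma tri_le_one (s : ℝ) : tri s ≤ 1 := by
  unfold tri
  rcases le_or_gt (1 - |2*s-3|) 0 with h | h
  · simpa [max_eq_left h]
  · rw [max_eq_right h.le]; linarith [abs_nonneg (2*s-3)]

lemma tri_eq_zero_left {s : ℝ} (h : s ≤ 1) : tri s = 0 := by
  unfold tri
  rw [max_eq_left]
  rw [sub_nonpos, le_abs]
  right; linarith

lemma tri_eq_zero_right {s : ℝ} (h : 2 ≤ s) : tri s = 0 := by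
  unfold tri
  rw [max_eq_left]
  rw [sub_nonpos, le_abs]
  left; linarith

lemma tri_intable (u v : ℝ) : IntervalIntegrable tri volume u v :=
  tri_cont.intervalIntegrable u v

lemma tri_integral : (∫ s in (1:ℝ)..2, tri s) = 1/2 := by
  have h1 : (∫ s in (1:ℝ)..(3/2), tri s) = ∫ s in (1:ℝ)..(3/2), (2*s - 2) := by
    apply intervalIntegral.integral_congr
    intro s hs
    rw [Set.uIcc_of_le (by norm_num)] at hs
    unfold tri
    rw [abs_of_nonpos (by linarith [hs.2]), max_eq_right (by linarith [hs.1])]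
    ring
  have h2 : (∫ s in (3/2:ℝ)..2, tri s) = ∫ s in (3/2:ℝ)..2, (4 - 2*s) := by
    apply intervalIntegral.integral_congr
    intro s hs
    rw [Set.uIcc_of_le (by norm_num)] at hs
    unfold tri
    rw [abs_of_nonneg (by linarith [hs.1]), max_eq_right (by linarith [hs.2])]
    ring
  have hsplit : (∫ s in (1:ℝ)..2, tri s) =
      (∫ s in (1:ℝ)..(3/2), tri s) + (∫ s in (3/2:ℝ)..2, tri s) :=
    (intervalIntegral.integral_add_adjacent_intervals (tri_intable _ _) (tri_intable _ _)).symm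
  rw [hsplit, h1, h2]
  have i1 : (∫ s in (1:ℝ)..(3/2), (2*s - 2)) = 1/4 := by
    rw [intervalIntegral.integral_sub (by apply Continuous.intervalIntegrable; fun_prop) (by apply Continuous.intervalIntegrable; fun_prop),
      intervalIntegral.integral_const_mul, integral_id,
      intervalIntegral.integral_const]
    norm_num
  have i2 : (∫ s in (3/2:ℝ)..2, (4 - 2*s)) = 1/4 := by
    rw [intervalIntegral.integral_sub (by apply Continuous.intervalIntegrable; fun_prop) (by apply Continuous.intervalIntegrable; fun_prop),
      intervalIntegral.integral_const_mul, integral_id,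
      intervalIntegral.integral_const]
    norm_num
  rw [i1, i2]; norm_num

noncomputable def Xf (t : ℝ) : ℝ := 2 * ∫ s in (1:ℝ)..t, tri s

lemma Xf_hasDerivAt (t : ℝ) : HasDerivAt Xf (2 * tri t) t := by
  have h := (tri_cont.integral_hasStrictDerivAt 1 t).hasDerivAt
  exact h.const_mul 2

lemma Xf_deriv (t : ℝ) : deriv Xf t = 2 * tri t := (Xf_hasDerivAt t).deriv

lemma Xf_contDiff : ContDiff ℝ 1 Xf := by
  rw [contDiff_one_iff_deriv]
  constructor
  · exact fun t => (Xf_hasDerivAt t).differentiableAt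
  · have : deriv Xf = fun t => 2 * tri t := funext Xf_deriv
    rw [this]; exact continuous_const.mul tri_cont

lemma Xf_zero {t : ℝ} (h : t ≤ 1) : Xf t = 0 := by
  unfold Xf
  have : (∫ s in (1:ℝ)..t, tri s) = ∫ s in (1:ℝ)..t, (0:ℝ) := by
    apply intervalIntegral.integral_congr
    intro s hs
    rw [Set.uIcc_of_ge h] at hs
    exact tri_eq_zero_left hs.2
  rw [this]; simp

lemma Xf_one {t : ℝ} (h : 2 ≤ t) : Xf t = 1 := by
  unfold Xf
  have hsplit : (∫ s in (1:ℝ)..t, tri s) =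
      (∫ s in (1:ℝ)..2, tri s) + (∫ s in (2:ℝ)..t, tri s) :=
    (intervalIntegral.integral_add_adjacent_intervals (tri_intable _ _) (tri_intable _ _)).symm
  have h2 : (∫ s in (2:ℝ)..t, tri s) = 0 := by
    have : (∫ s in (2:ℝ)..t, tri s) = ∫ s in (2:ℝ)..t, (0:ℝ) := by
      apply intervalIntegral.integral_congr
      intro s hs
      rw [Set.uIcc_of_le h] at hs
      exact tri_eq_zero_right hs.1
    rw [this]; simp
  rw [hsplit, h2, tri_integral]; norm_num

lemma Xf_nonneg (t : ℝ) : 0 ≤ Xf t := by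
  rcases le_or_gt t 1 with h | h
  · rw [Xf_zero h]
  · unfold Xf
    have : (0:ℝ) ≤ ∫ s in (1:ℝ)..t, tri s :=
      intervalIntegral.integral_nonneg (le_of_lt h) (fun s _ => tri_nonneg s)
    linarith

lemma Xf_le_one (t : ℝ) : Xf t ≤ 1 := by
  rcases le_or_gt 2 t with h | h
  · rw [Xf_one h]
  · rcases le_or_gt t 1 with h1 | h1
    · rw [Xf_zero h1]; norm_num
    · have hsplit : (∫ s in (1:ℝ)..2, tri s) =
          (∫ s in (1:ℝ)..t, tri s) + (∫ s in t..2, tri s) :=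
        (intervalIntegral.integral_add_adjacent_intervals (tri_intable _ _) (tri_intable _ _)).symm
      have h2 : (0:ℝ) ≤ (∫ s in t..2, tri s) :=
        intervalIntegral.integral_nonneg h.le (fun s _ => tri_nonneg s)
      have : (∫ s in (1:ℝ)..t, tri s) ≤ 1/2 := by rw [tri_integral] at hsplit; linarith
      unfold Xf; linarith
set_option maxHeartbeats 1000000
section CutoffLemma

variable (c : ℝ → ℝ)

lemma cutoff_arith (l δ η Q P N E : ℝ) (hδ : 0 < δ) (hηpos : 0 < η) (hQpos : 0 < Q)
    (hPpos : 0 < P) (hη3 : η ≤ δ/(4*Q+4*P^2*|l+δ|+1)) (hNbd : |N - 1| ≤ 4*P^2*η)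
    (hNpos : 0 < N) (hEup : E ≤ l + 4*Q*η) : N⁻¹ * E ≤ l + δ := by
  have hD : (0:ℝ) < 4*Q+4*P^2*|l+δ|+1 := by positivity
  have hde : η * (4*Q+4*P^2*|l+δ|+1) ≤ δ := (le_div_iff₀ hD).mp hη3
  have habsN : |(l+δ)*(N-1)| ≤ |l+δ| * (4*P^2*η) := by
    rw [abs_mul]; exact mul_le_mul_of_nonneg_left hNbd (abs_nonneg _)
  have h2 : -( |l+δ| * (4*P^2*η)) ≤ (l+δ)*(N-1) := by
    have := neg_abs_le ((l+δ)*(N-1)); linarith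
  have hfin : l + 4*Q*η ≤ (l+δ)*N := by nlinarith
  have hE2 : E ≤ (l+δ)*N := le_trans hEup hfin
  calc N⁻¹ * E ≤ N⁻¹ * ((l+δ)*N) := mul_le_mul_of_nonneg_left hE2 (by positivity)
    _ = l + δ := by field_simp

lemma exists_cutoff_test (hc : Continuous c) (a b : ℝ) (hab : a < b)
    (φ : ℝ → ℝ) (hφ : ContDiff ℝ 1 φ) (hφa : φ a = 0) (hφb : φ b = 0)
    (hnorm : (∫ x in a..b, (φ x)^2) = 1) (δ : ℝ) (hδ : 0 < δ) :
    ∃ ψ : ℝ → ℝ, ContDiff ℝ 1 ψ ∧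
      (∃ u v : ℝ, a < u ∧ v < b ∧ ∀ x, x ∉ Set.Ioo u v → ψ x = 0) ∧
      (∫ x in a..b, (ψ x)^2) = 1 ∧
      (∫ x in a..b, ((deriv ψ x)^2 + c x * (ψ x)^2)) ≤
        (∫ x in a..b, ((deriv φ x)^2 + c x * (φ x)^2)) + δ := by
  have hφd : Differentiable ℝ φ := hφ.differentiable (by norm_num)
  have hφc : Continuous φ := hφ.continuous
  have hφ' : Continuous (deriv φ) := hφ.continuous_deriv le_rfl
  -- bounds
  obtain ⟨M0, hM0⟩ := (isCompact_Icc : IsCompact (Set.Icc a b)).exists_bound_of_continuousOn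
    hφ'.continuousOn
  set M : ℝ := max M0 1 with hMdef
  have hMpos : (0:ℝ) < M := lt_of_lt_of_le one_pos (le_max_right _ _)
  have hM1 : ∀ x ∈ Set.Icc a b, |deriv φ x| ≤ M := fun x hx =>
    le_trans (by simpa using hM0 x hx) (le_max_left _ _)
  obtain ⟨P0, hP0⟩ := (isCompact_Icc : IsCompact (Set.Icc a b)).exists_bound_of_continuousOn
    hφc.continuousOn
  set P : ℝ := max P0 1 with hPdef
  have hPpos : (0:ℝ) < P := lt_of_lt_of_le one_pos (le_max_right _ _)
  have hP : ∀ x ∈ Set.Icc a b, |φ x| ≤ P := fun x hx =>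
    le_trans (by simpa using hP0 x hx) (le_max_left _ _)
  obtain ⟨C0, hC0⟩ := (isCompact_Icc : IsCompact (Set.Icc a b)).exists_bound_of_continuousOn
    hc.continuousOn
  set C : ℝ := max C0 1 with hCdef
  have hCpos : (0:ℝ) < C := lt_of_lt_of_le one_pos (le_max_right _ _)
  have hC : ∀ x ∈ Set.Icc a b, |c x| ≤ C := fun x hx =>
    le_trans (by simpa using hC0 x hx) (le_max_left _ _)
  set l : ℝ := ∫ x in a..b, ((deriv φ x)^2 + c x * (φ x)^2) with hldef
  set Q : ℝ := 82*M^2 + 2*C*P^2 with hQdef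
  have hQpos : 0 < Q := by positivity
  set η : ℝ := min ((b-a)/4) (min (1/(8*P^2+1)) (δ/(4*Q+4*P^2*|l+δ|+1))) with hηdef
  have hηpos : 0 < η := by
    apply lt_min (by linarith)
    exact lt_min (by positivity) (by positivity)
  have hη1 : η ≤ (b-a)/4 := min_le_left _ _
  have hη2 : η ≤ 1/(8*P^2+1) := le_trans (min_le_right _ _) (min_le_left _ _)
  have hη3 : η ≤ δ/(4*Q+4*P^2*|l+δ|+1) := le_trans (min_le_right _ _) (min_le_right _ _)
  have hab4 : a + 2*η ≤ b - 2*η := by linarith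
  -- Lipschitz bounds near the endpoints
  have hLipa : ∀ x ∈ Set.Icc a b, |φ x| ≤ M * (x - a) := by
    intro x hx
    have h := Convex.norm_image_sub_le_of_norm_deriv_le (fun y _ => hφd y)
      (fun y hy => by simpa using hM1 y hy) (convex_Icc a b)
      (Set.left_mem_Icc.2 hab.le) hx
    rw [hφa, sub_zero, Real.norm_eq_abs, Real.norm_eq_abs,
      abs_of_nonneg (sub_nonneg.2 hx.1)] at h
    exact h
  have hLipb : ∀ x ∈ Set.Icc a b, |φ x| ≤ M * (b - x) := by
    intro x hx
    have h := Convex.norm_image_sub_le_of_norm_deriv_le (fun y _ => hφd y)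
      (fun y hy => by simpa using hM1 y hy) (convex_Icc a b)
      (Set.right_mem_Icc.2 hab.le) hx
    rw [hφb, sub_zero, Real.norm_eq_abs, Real.norm_eq_abs,
      abs_of_nonpos (by linarith [hx.2] : x - b ≤ 0)] at h
    simpa [neg_sub] using h
  -- the cutoff function
  set χ : ℝ → ℝ := fun x => Xf ((x-a)/η) * Xf ((b-x)/η) with hχdef
  set χ' : ℝ → ℝ := fun x => 2 * tri ((x-a)/η) * (1/η) * Xf ((b-x)/η)
      - Xf ((x-a)/η) * (2 * tri ((b-x)/η) * (1/η)) with hχ'def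
  have hχder : ∀ x, HasDerivAt χ (χ' x) x := by
    intro x
    have hu1 : HasDerivAt (fun x : ℝ => (x-a)/η) (1/η) x := by
      simpa using ((hasDerivAt_id x).sub_const a).div_const η
    have hu2 : HasDerivAt (fun x : ℝ => (b-x)/η) (-(1/η)) x := by
      have := ((hasDerivAt_id x).const_sub b).div_const η
      simpa [neg_div] using this
    have h1 : HasDerivAt (fun x : ℝ => Xf ((x-a)/η)) (2 * tri ((x-a)/η) * (1/η)) x :=
      (Xf_hasDerivAt _).comp x hu1
    have h2 : HasDerivAt (fun x : ℝ => Xf ((b-x)/η)) (2 * tri ((b-x)/η) * (-(1/η))) x :=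
      (Xf_hasDerivAt _).comp x hu2
    have := h1.mul h2
    refine this.congr_deriv ?_
    show _ = χ' x; rw [hχ'def]; dsimp only; ring
  have hχ0l : ∀ x, x ≤ a + η → χ x = 0 ∧ χ' x = 0 := by
    intro x hx
    have h1 : (x - a)/η ≤ 1 := by rw [div_le_one hηpos]; linarith
    constructor
    · simp [hχdef, Xf_zero h1]
    · simp [hχ'def, Xf_zero h1, tri_eq_zero_left h1]
  have hχ0r : ∀ x, b - η ≤ x → χ x = 0 ∧ χ' x = 0 := by
    intro x hx
    have h1 : (b - x)/η ≤ 1 := by rw [div_le_one hηpos]; linarith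
    constructor
    · simp [hχdef, Xf_zero h1]
    · simp [hχ'def, Xf_zero h1, tri_eq_zero_left h1]
  have hχ1 : ∀ x ∈ Set.Icc (a+2*η) (b-2*η), χ x = 1 ∧ χ' x = 0 := by
    intro x hx
    have h1 : 2 ≤ (x - a)/η := by rw [le_div_iff₀ hηpos]; linarith [hx.1]
    have h2 : 2 ≤ (b - x)/η := by rw [le_div_iff₀ hηpos]; linarith [hx.2]
    constructor
    · simp [hχdef, Xf_one h1, Xf_one h2]
    · simp [hχ'def, tri_eq_zero_right h1, tri_eq_zero_right h2]
  have hχmem : ∀ x, 0 ≤ χ x ∧ χ x ≤ 1 := fun x =>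
    ⟨mul_nonneg (Xf_nonneg _) (Xf_nonneg _),
     mul_le_one₀ (Xf_le_one _) (Xf_nonneg _) (Xf_le_one _)⟩
  have hχ'bd : ∀ x, |χ' x| ≤ 4/η := by
    intro x
    have t1 : 0 ≤ 2 * tri ((x-a)/η) * (1/η) * Xf ((b-x)/η) := by
      have := tri_nonneg ((x-a)/η); have := Xf_nonneg ((b-x)/η); positivity
    have t2 : 2 * tri ((x-a)/η) * (1/η) * Xf ((b-x)/η) ≤ 2/η := by
      have h1 := tri_le_one ((x-a)/η); have h2 := Xf_le_one ((b-x)/η)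
      have h3 := tri_nonneg ((x-a)/η); have h4 := Xf_nonneg ((b-x)/η)
      have h6 : tri ((x-a)/η) * Xf ((b-x)/η) ≤ 1 := mul_le_one₀ h1 h4 h2
      calc 2 * tri ((x-a)/η) * (1/η) * Xf ((b-x)/η)
          = 2*(1/η)*(tri ((x-a)/η) * Xf ((b-x)/η)) := by ring
        _ ≤ 2*(1/η)*1 := by
            have : (0:ℝ) ≤ 2*(1/η) := by positivity
            nlinarith
        _ = 2/η := by ring
    have t3 : 0 ≤ Xf ((x-a)/η) * (2 * tri ((b-x)/η) * (1/η)) := by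
      have := tri_nonneg ((b-x)/η); have := Xf_nonneg ((x-a)/η); positivity
    have t4 : Xf ((x-a)/η) * (2 * tri ((b-x)/η) * (1/η)) ≤ 2/η := by
      have h1 := tri_le_one ((b-x)/η); have h2 := Xf_le_one ((x-a)/η)
      have h3 := tri_nonneg ((b-x)/η); have h4 := Xf_nonneg ((x-a)/η)
      have h6 : tri ((b-x)/η) * Xf ((x-a)/η) ≤ 1 := mul_le_one₀ h1 h4 h2
      calc Xf ((x-a)/η) * (2 * tri ((b-x)/η) * (1/η))
          = 2*(1/η)*(tri ((b-x)/η) * Xf ((x-a)/η)) := by ring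
        _ ≤ 2*(1/η)*1 := by
            have : (0:ℝ) ≤ 2*(1/η) := by positivity
            nlinarith
        _ = 2/η := by ring
    have h8 : (4:ℝ)/η = 2/η + 2/η := by ring
    rw [hχ'def, abs_le]
    constructor <;> simp only [] <;> linarith
  -- the truncated function
  set ψ₀ : ℝ → ℝ := fun x => χ x * φ x with hψ₀def
  set ψd : ℝ → ℝ := fun x => χ' x * φ x + χ x * deriv φ x with hψddef
  have hψ₀der : ∀ x, HasDerivAt ψ₀ (ψd x) x := fun x => (hχder x).mul (hφd x).hasDerivAt
  have hψ₀deriv : ∀ x, deriv ψ₀ x = ψd x := fun x => (hψ₀der x).deriv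
  have hXc : Continuous Xf := Xf_contDiff.continuous
  have hcχ : Continuous χ := by
    rw [hχdef]
    exact (hXc.comp (by fun_prop)).mul (hXc.comp (by fun_prop))
  have hcχ' : Continuous χ' := by
    rw [hχ'def]
    exact (((continuous_const.mul (tri_cont.comp (by fun_prop))).mul continuous_const).mul
      (hXc.comp (by fun_prop))).sub
      ((hXc.comp (by fun_prop)).mul
        ((continuous_const.mul (tri_cont.comp (by fun_prop))).mul continuous_const))
  have hcψd : Continuous ψd := by
    rw [hψddef]
    exact (hcχ'.mul hφc).add (hcχ.mul hφ')
  have hψ₀cd : ContDiff ℝ 1 ψ₀ := by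
    rw [contDiff_one_iff_deriv]
    refine ⟨fun x => (hψ₀der x).differentiableAt, ?_⟩
    have : deriv ψ₀ = ψd := funext hψ₀deriv
    rw [this]; exact hcψd
  have hcψ₀ : Continuous ψ₀ := hψ₀cd.continuous
  -- pointwise bound on the commutator term
  have hkey : ∀ x ∈ Set.Icc a b, |χ' x * φ x| ≤ 8*M := by
    intro x hx
    rcases le_or_gt x (a+η) with h | h
    · rw [(hχ0l x h).2, zero_mul, abs_zero]; positivity
    rcases le_or_gt (b-η) x with h' | h'
    · rw [(hχ0r x h').2, zero_mul, abs_zero]; positivity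
    rcases le_or_gt x (a+2*η) with h2 | h2
    · have e1 : |χ' x| ≤ 4/η := hχ'bd x
      have e2 : |φ x| ≤ M * (x - a) := hLipa x hx
      have e3 : M * (x - a) ≤ M * (2*η) := by
        apply mul_le_mul_of_nonneg_left _ hMpos.le
        linarith [hx.1]
      calc |χ' x * φ x| = |χ' x| * |φ x| := abs_mul _ _
        _ ≤ (4/η) * (M * (2*η)) := by
            apply mul_le_mul e1 (e2.trans e3) (abs_nonneg _) (by positivity)
        _ = 8*M := by field_simp; ring
    rcases le_or_gt (b-2*η) x with h3 | h3
    · have e1 : |χ' x| ≤ 4/η := hχ'bd x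
      have e2 : |φ x| ≤ M * (b - x) := hLipb x hx
      have e3 : M * (b - x) ≤ M * (2*η) := by
        apply mul_le_mul_of_nonneg_left _ hMpos.le
        linarith
      calc |χ' x * φ x| = |χ' x| * |φ x| := abs_mul _ _
        _ ≤ (4/η) * (M * (2*η)) := by
            apply mul_le_mul e1 (e2.trans e3) (abs_nonneg _) (by positivity)
        _ = 8*M := by field_simp; ring
    · rw [(hχ1 x ⟨h2.le, h3.le⟩).2, zero_mul, abs_zero]; positivity
  have hdψbd : ∀ x ∈ Set.Icc a b, |deriv ψ₀ x| ≤ 9*M := by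
    intro x hx
    rw [hψ₀deriv x]
    have e1 : |χ x * deriv φ x| ≤ M := by
      rw [abs_mul]
      have := (hχmem x).1; have := (hχmem x).2; have := hM1 x hx
      have h0 : |χ x| ≤ 1 := by rw [abs_of_nonneg (hχmem x).1]; exact (hχmem x).2
      calc |χ x| * |deriv φ x| ≤ 1 * M :=
        mul_le_mul h0 (hM1 x hx) (abs_nonneg _) one_pos.le
      _ = M := one_mul M
    calc |ψd x| ≤ |χ' x * φ x| + |χ x * deriv φ x| := abs_add_le _ _
      _ ≤ 8*M + M := add_le_add (hkey x hx) e1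
      _ = 9*M := by ring
  have hψ₀bd : ∀ x ∈ Set.Icc a b, |ψ₀ x| ≤ P := by
    intro x hx
    have h0 : |χ x| ≤ 1 := by rw [abs_of_nonneg (hχmem x).1]; exact (hχmem x).2
    calc |ψ₀ x| = |χ x| * |φ x| := abs_mul _ _
      _ ≤ 1 * P := mul_le_mul h0 (hP x hx) (abs_nonneg _) one_pos.le
      _ = P := one_mul P
  -- generic splitting estimate
  have key : ∀ (f : ℝ → ℝ) (R : ℝ), Continuous f → 0 ≤ R →
      (∀ x ∈ Set.Icc (a+2*η) (b-2*η), f x = 0) → (∀ x ∈ Set.Icc a b, |f x| ≤ R) →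
      |∫ x in a..b, f x| ≤ 4*R*η := by
    intro f R hf hR h0 hbd
    have hsub1 : a ≤ a + 2*η := by linarith
    have hsub2 : b - 2*η ≤ b := by linarith
    have e : (∫ x in a..b, f x) =
        (∫ x in a..(a+2*η), f x) + (∫ x in (a+2*η)..b, f x) :=
      (intervalIntegral.integral_add_adjacent_intervals
        (hf.intervalIntegrable _ _) (hf.intervalIntegrable _ _)).symm
    have e2 : (∫ x in (a+2*η)..b, f x) =
        (∫ x in (a+2*η)..(b-2*η), f x) + (∫ x in (b-2*η)..b, f x) :=
      (intervalIntegral.integral_add_adjacent_intervals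
        (hf.intervalIntegrable _ _) (hf.intervalIntegrable _ _)).symm
    have hmid : (∫ x in (a+2*η)..(b-2*η), f x) = 0 := by
      rw [show (∫ x in (a+2*η)..(b-2*η), f x) = ∫ x in (a+2*η)..(b-2*η), (0:ℝ) from
        intervalIntegral.integral_congr (fun x hx => by
          rw [Set.uIcc_of_le hab4] at hx; exact h0 x hx)]
      simp
    have h1 : |∫ x in a..(a+2*η), f x| ≤ R * (2*η) := by
      have hb1 := intervalIntegral.norm_integral_le_of_norm_le_const (C := R)
        (f := f) (a := a) (b := a+2*η) (fun x hx => by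
          rw [Set.uIoc_of_le hsub1] at hx
          exact hbd x ⟨hx.1.le, by linarith [hx.2]⟩)
      rw [Real.norm_eq_abs] at hb1
      calc |∫ x in a..(a+2*η), f x| ≤ R * |a + 2*η - a| := hb1
        _ = R * (2*η) := by rw [show a + 2*η - a = 2*η by ring,
            abs_of_nonneg (by linarith : (0:ℝ) ≤ 2*η)]
    have h2 : |∫ x in (b-2*η)..b, f x| ≤ R * (2*η) := by
      have hb1 := intervalIntegral.norm_integral_le_of_norm_le_const (C := R)
        (f := f) (a := b-2*η) (b := b) (fun x hx => by
          rw [Set.uIoc_of_le hsub2] at hx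
          exact hbd x ⟨by linarith [hx.1], hx.2⟩)
      rw [Real.norm_eq_abs] at hb1
      calc |∫ x in (b-2*η)..b, f x| ≤ R * |b - (b-2*η)| := hb1
        _ = R * (2*η) := by rw [show b - (b-2*η) = 2*η by ring,
            abs_of_nonneg (by linarith : (0:ℝ) ≤ 2*η)]
    rw [e, e2, hmid, zero_add]
    calc |(∫ x in a..(a+2*η), f x) + (∫ x in (b-2*η)..b, f x)|
        ≤ |∫ x in a..(a+2*η), f x| + |∫ x in (b-2*η)..b, f x| := abs_add_le _ _
      _ ≤ R * (2*η) + R * (2*η) := add_le_add h1 h2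
      _ = 4*R*η := by ring
  -- energy estimate
  have hGF : ∀ x ∈ Set.Icc a b,
      |((deriv ψ₀ x)^2 + c x * (ψ₀ x)^2) - ((deriv φ x)^2 + c x * (φ x)^2)| ≤ Q := by
    intro x hx
    have h1 : |deriv ψ₀ x| ≤ 9*M := hdψbd x hx
    have h2 : |deriv φ x| ≤ M := hM1 x hx
    have h3 : |ψ₀ x| ≤ P := hψ₀bd x hx
    have h4 : |φ x| ≤ P := hP x hx
    have h5 : |c x| ≤ C := hC x hx
    have e1 : (deriv ψ₀ x)^2 ≤ 81*M^2 := by nlinarith [abs_nonneg (deriv ψ₀ x), sq_abs (deriv ψ₀ x)]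
    have e2 : (deriv φ x)^2 ≤ M^2 := by nlinarith [abs_nonneg (deriv φ x), sq_abs (deriv φ x)]
    have e3 : |c x * (ψ₀ x)^2| ≤ C*P^2 := by
      rw [abs_mul, abs_of_nonneg (sq_nonneg (ψ₀ x))]
      have hsq : (ψ₀ x)^2 ≤ P^2 := by nlinarith [abs_nonneg (ψ₀ x), sq_abs (ψ₀ x)]
      exact mul_le_mul h5 hsq (sq_nonneg _) hCpos.le
    have e4 : |c x * (φ x)^2| ≤ C*P^2 := by
      rw [abs_mul, abs_of_nonneg (sq_nonneg (φ x))]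
      have hsq : (φ x)^2 ≤ P^2 := by nlinarith [abs_nonneg (φ x), sq_abs (φ x)]
      exact mul_le_mul h5 hsq (sq_nonneg _) hCpos.le
    rw [hQdef, abs_le]
    constructor <;>
      nlinarith [le_abs_self (c x * (ψ₀ x)^2), neg_abs_le (c x * (ψ₀ x)^2),
        le_abs_self (c x * (φ x)^2), neg_abs_le (c x * (φ x)^2),
        sq_nonneg (deriv ψ₀ x), sq_nonneg (deriv φ x)]
  have hGFmid : ∀ x ∈ Set.Icc (a+2*η) (b-2*η),
      ((deriv ψ₀ x)^2 + c x * (ψ₀ x)^2) - ((deriv φ x)^2 + c x * (φ x)^2) = 0 := by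
    intro x hx
    obtain ⟨hv, hd⟩ := hχ1 x hx
    have hval : ψ₀ x = φ x := by rw [hψ₀def]; simp only []; rw [hv, one_mul]
    have hder : deriv ψ₀ x = deriv φ x := by
      rw [hψ₀deriv x, hψddef]; simp only []; rw [hv, hd, zero_mul, one_mul, zero_add]
    rw [hval, hder]; ring
  have hcderψ₀ : Continuous (deriv ψ₀) := by rw [funext hψ₀deriv]; exact hcψd
  have hcG : Continuous (fun x => (deriv ψ₀ x)^2 + c x * (ψ₀ x)^2) :=
    ((hcderψ₀.pow 2).add (hc.mul (hcψ₀.pow 2)))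
  have hcF : Continuous (fun x => (deriv φ x)^2 + c x * (φ x)^2) :=
    ((hφ'.pow 2).add (hc.mul (hφc.pow 2)))
  have hEdiff : |(∫ x in a..b, ((deriv ψ₀ x)^2 + c x * (ψ₀ x)^2)) - l| ≤ 4*Q*η := by
    have := key (fun x => ((deriv ψ₀ x)^2 + c x * (ψ₀ x)^2) - ((deriv φ x)^2 + c x * (φ x)^2))
      Q (hcG.sub hcF) hQpos.le hGFmid hGF
    rwa [intervalIntegral.integral_sub (hcG.intervalIntegrable _ _)
      (hcF.intervalIntegrable _ _)] at this
  -- norm estimate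
  set N : ℝ := ∫ x in a..b, (ψ₀ x)^2 with hNdef
  have hNbd : |N - 1| ≤ 4*P^2*η := by
    have hmid0 : ∀ x ∈ Set.Icc (a+2*η) (b-2*η), (ψ₀ x)^2 - (φ x)^2 = 0 := by
      intro x hx
      have hval : ψ₀ x = φ x := by
        rw [hψ₀def]; simp only []; rw [(hχ1 x hx).1, one_mul]
      rw [hval]; ring
    have hbd0 : ∀ x ∈ Set.Icc a b, |(ψ₀ x)^2 - (φ x)^2| ≤ P^2 := by
      intro x hx
      have h1 : (ψ₀ x)^2 = (χ x)^2 * (φ x)^2 := by rw [hψ₀def]; simp only []; ring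
      have h2 := (hχmem x).1; have h3 := (hχmem x).2
      have h4 : |φ x| ≤ P := hP x hx
      have hsq : (φ x)^2 ≤ P^2 := by nlinarith [abs_nonneg (φ x), sq_abs (φ x)]
      have hχsq : (χ x)^2 ≤ 1 := by nlinarith
      have hup : (χ x)^2 * (φ x)^2 ≤ (φ x)^2 := by
        nlinarith [mul_nonneg (sub_nonneg.2 hχsq) (sq_nonneg (φ x))]
      have hlo : 0 ≤ (χ x)^2 * (φ x)^2 := by positivity
      rw [abs_le]
      constructor <;> nlinarith [sq_nonneg P]
    have := key (fun x => (ψ₀ x)^2 - (φ x)^2) (P^2) ((hcψ₀.pow 2).sub (hφc.pow 2))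
      (by positivity) hmid0 hbd0
    rwa [intervalIntegral.integral_sub (f := fun x => (ψ₀ x)^2) (g := fun x => (φ x)^2) ((hcψ₀.pow 2).intervalIntegrable _ _)
      ((hφc.pow 2).intervalIntegrable _ _), hnorm] at this
  have hNge : 1/2 ≤ N := by
    have h1 : 4*P^2*η ≤ 4*P^2*(1/(8*P^2+1)) :=
      mul_le_mul_of_nonneg_left hη2 (by positivity)
    have h2 : 4*P^2*(1/(8*P^2+1)) ≤ 1/2 := by
      rw [mul_one_div, div_le_div_iff₀ (by positivity) (by norm_num : (0:ℝ) < 2)]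
      nlinarith [sq_nonneg P]
    have h3 := abs_le.mp hNbd
    linarith [h3.1]
  have hNpos : 0 < N := by linarith
  have hsqN : (0:ℝ) < Real.sqrt N := Real.sqrt_pos.2 hNpos
  have hs2 : ((Real.sqrt N)⁻¹)^2 = N⁻¹ := by
    rw [inv_pow, Real.sq_sqrt hNpos.le]
  -- final test function
  refine ⟨fun x => (Real.sqrt N)⁻¹ * ψ₀ x, ?_, ⟨a+η, b-η, by linarith, by linarith, ?_⟩, ?_, ?_⟩
  · exact contDiff_const.mul hψ₀cd
  · intro x hx
    rw [Set.mem_Ioo, not_and_or, not_lt, not_lt] at hx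
    have : ψ₀ x = 0 := by
      rw [hψ₀def]; simp only []
      rcases hx with h | h
      · rw [(hχ0l x h).1, zero_mul]
      · rw [(hχ0r x h).1, zero_mul]
    simp [this]
  · have hcongr : (∫ x in a..b, ((Real.sqrt N)⁻¹ * ψ₀ x)^2) = ∫ x in a..b, N⁻¹ * (ψ₀ x)^2 := by
      apply intervalIntegral.integral_congr
      intro x _
      simp only []
      rw [mul_pow, hs2]
    rw [hcongr, intervalIntegral.integral_const_mul, ← hNdef, inv_mul_cancel₀ hNpos.ne']
  · have hds : ∀ x, deriv (fun x => (Real.sqrt N)⁻¹ * ψ₀ x) x = (Real.sqrt N)⁻¹ * deriv ψ₀ x :=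
      fun x => deriv_const_mul _ (hψ₀der x).differentiableAt
    have hcongr : (∫ x in a..b, ((deriv (fun x => (Real.sqrt N)⁻¹ * ψ₀ x) x)^2
        + c x * (((Real.sqrt N)⁻¹ * ψ₀ x))^2))
        = ∫ x in a..b, N⁻¹ * ((deriv ψ₀ x)^2 + c x * (ψ₀ x)^2) := by
      apply intervalIntegral.integral_congr
      intro x _
      simp only []
      rw [hds x, mul_pow, mul_pow, hs2]; ring
    rw [hcongr, intervalIntegral.integral_const_mul]
    have hEup : (∫ x in a..b, ((deriv ψ₀ x)^2 + c x * (ψ₀ x)^2)) ≤ l + 4*Q*η := by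
      have := (abs_le.mp hEdiff).2; linarith
    exact cutoff_arith l δ η Q P N _ hδ hηpos hQpos hPpos hη3 hNbd hNpos hEup

end CutoffLemma
section Main

lemma lambdaN_set_lb (m c : ℝ → ℝ) (hm : Continuous m) (hc : Continuous c) :
    ∃ K : ℝ, K ≤ 0 ∧ ∀ s : ℝ,
      K ∈ lowerBounds {l : ℝ | ∃ φ : ℝ → ℝ, ContDiff ℝ 1 φ ∧
        (∫ x in (0:ℝ)..1, Real.exp (2 * s * m x) * (φ x) ^ 2) = 1 ∧
        l = ∫ x in (0:ℝ)..1, Real.exp (2 * s * m x) * ((deriv φ x) ^ 2 + c x * (φ x) ^ 2)} := by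
  obtain ⟨x₀, hx₀, hmin⟩ := (isCompact_Icc : IsCompact (Set.Icc (0:ℝ) 1)).exists_isMinOn
    ⟨0, by norm_num⟩ hc.continuousOn
  refine ⟨min (c x₀) 0, min_le_right _ _, fun s l hl => ?_⟩
  obtain ⟨φ, hφcd, hφn, hleq⟩ := hl
  have hφc : Continuous φ := hφcd.continuous
  have hφ' : Continuous (deriv φ) := hφcd.continuous_deriv le_rfl
  have hw : Continuous fun x => Real.exp (2 * s * m x) :=
    Real.continuous_exp.comp (continuous_const.mul hm)
  rw [hleq]
  calc min (c x₀) 0 = min (c x₀) 0 * 1 := (mul_one _).symm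
    _ = min (c x₀) 0 * ∫ x in (0:ℝ)..1, Real.exp (2*s*m x) * (φ x)^2 := by rw [hφn]
    _ = ∫ x in (0:ℝ)..1, min (c x₀) 0 * (Real.exp (2*s*m x) * (φ x)^2) :=
        (intervalIntegral.integral_const_mul _ _).symm
    _ ≤ ∫ x in (0:ℝ)..1, Real.exp (2*s*m x) * ((deriv φ x)^2 + c x * (φ x)^2) := by
        apply intervalIntegral.integral_mono_on (by norm_num)
          ((continuous_const.mul (hw.mul (hφc.pow 2))).intervalIntegrable _ _)
          ((hw.mul ((hφ'.pow 2).add (hc.mul (hφc.pow 2)))).intervalIntegrable _ _)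
        intro x hx
        have hKc : min (c x₀) 0 ≤ c x := le_trans (min_le_left _ _) (hmin hx)
        have he : (0:ℝ) ≤ Real.exp (2*s*m x) := (Real.exp_pos _).le
        show min (c x₀) 0 * (Real.exp (2*s*m x) * (φ x)^2) ≤ Real.exp (2*s*m x) * ((deriv φ x)^2 + c x * (φ x)^2)
        nlinarith [mul_nonneg he (sq_nonneg (deriv φ x)),
          mul_nonneg (mul_nonneg he (sq_nonneg (φ x))) (sub_nonneg.2 hKc)]

lemma lambdaN_ge (m c : ℝ → ℝ) (hm : Continuous m) (hc : Continuous c) :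
    ∃ K : ℝ, ∀ s : ℝ, K ≤ lambdaN m c s := by
  obtain ⟨K, hK0, hK⟩ := lambdaN_set_lb m c hm hc
  refine ⟨K, fun s => ?_⟩
  rcases Set.eq_empty_or_nonempty {l : ℝ | ∃ φ : ℝ → ℝ, ContDiff ℝ 1 φ ∧
      (∫ x in (0:ℝ)..1, Real.exp (2 * s * m x) * (φ x) ^ 2) = 1 ∧
      l = ∫ x in (0:ℝ)..1, Real.exp (2 * s * m x) * ((deriv φ x) ^ 2 + c x * (φ x) ^ 2)}
    with he | hne
  · show K ≤ sInf _
    rw [he, Real.sInf_empty]; exact hK0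
  · exact le_csInf hne (hK s)

lemma lambdaN_le_test (m c : ℝ → ℝ) (hm : Continuous m) (hc : Continuous c)
    (a b : ℝ) (ha : 0 ≤ a) (hab : a < b) (hb : b ≤ 1)
    (hconst : ∀ x ∈ Set.Icc a b, m x = m a)
    (ψ : ℝ → ℝ) (hψ : ContDiff ℝ 1 ψ)
    (u v : ℝ) (hu : a < u) (hv : v < b) (hsupp : ∀ x, x ∉ Set.Ioo u v → ψ x = 0)
    (hnorm : (∫ x in a..b, (ψ x)^2) = 1) (s : ℝ) :
    lambdaN m c s ≤ ∫ x in a..b, ((deriv ψ x)^2 + c x * (ψ x)^2) := by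
  have hψc : Continuous ψ := hψ.continuous
  have hψ' : Continuous (deriv ψ) := hψ.continuous_deriv le_rfl
  have hψd : Differentiable ℝ ψ := hψ.differentiable (by norm_num)
  have hval : ∀ y, (y ≤ a ∨ b ≤ y) → ψ y = 0 := by
    intro y hy
    apply hsupp
    rw [Set.mem_Ioo, not_and_or, not_lt, not_lt]
    rcases hy with hy | hy
    · left; linarith
    · right; linarith
  have hzero : ∀ x, (x ≤ a ∨ b ≤ x) → ψ x = 0 ∧ deriv ψ x = 0 := by
    intro x hx
    refine ⟨hval x hx, ?_⟩
    have hev : ψ =ᶠ[nhds x] (fun _ => (0:ℝ)) := by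
      rcases hx with hx | hx
      · filter_upwards [Iio_mem_nhds (lt_of_le_of_lt hx hu)] with y hy
        exact hsupp y (by rw [Set.mem_Ioo, not_and_or, not_lt]; left; exact le_of_lt hy)
      · filter_upwards [Ioi_mem_nhds (lt_of_lt_of_le hv hx)] with y hy
        exact hsupp y (by rw [Set.mem_Ioo, not_and_or, not_lt, not_lt]; right; exact le_of_lt hy)
    rw [Filter.EventuallyEq.deriv_eq hev]
    simp
  set w : ℝ → ℝ := fun x => Real.exp (2 * s * m x) with hwdef
  have hwc : Continuous w := Real.continuous_exp.comp (continuous_const.mul hm)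
  set e : ℝ := Real.exp (-(s * m a)) with hedef
  have he2 : e^2 * Real.exp (2*s*m a) = 1 := by
    rw [hedef, sq, ← Real.exp_add, ← Real.exp_add, ← Real.exp_zero]
    congr 1; ring
  -- splitting
  have hsplit : ∀ f : ℝ → ℝ, Continuous f → (∀ x, (x ≤ a ∨ b ≤ x) → f x = 0) →
      (∫ x in (0:ℝ)..1, w x * f x) = ∫ x in a..b, w x * f x := by
    intro f hf h0
    have hint : ∀ p q : ℝ, IntervalIntegrable (fun x => w x * f x) MeasureTheory.volume p q :=
      fun p q => (hwc.mul hf).intervalIntegrable p q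
    have h1 : (∫ x in (0:ℝ)..1, w x * f x) =
        (∫ x in (0:ℝ)..a, w x * f x) + (∫ x in a..(1:ℝ), w x * f x) :=
      (intervalIntegral.integral_add_adjacent_intervals (hint _ _) (hint _ _)).symm
    have h2 : (∫ x in a..(1:ℝ), w x * f x) =
        (∫ x in a..b, w x * f x) + (∫ x in b..(1:ℝ), w x * f x) :=
      (intervalIntegral.integral_add_adjacent_intervals (hint _ _) (hint _ _)).symm
    have hz1 : (∫ x in (0:ℝ)..a, w x * f x) = 0 := by
      rw [show (∫ x in (0:ℝ)..a, w x * f x) = ∫ x in (0:ℝ)..a, (0:ℝ) from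
        intervalIntegral.integral_congr (fun x hx => by
          rw [Set.uIcc_of_le ha] at hx
          rw [h0 x (Or.inl hx.2), mul_zero])]
      simp
    have hz2 : (∫ x in b..(1:ℝ), w x * f x) = 0 := by
      rw [show (∫ x in b..(1:ℝ), w x * f x) = ∫ x in b..(1:ℝ), (0:ℝ) from
        intervalIntegral.integral_congr (fun x hx => by
          rw [Set.uIcc_of_le hb] at hx
          rw [h0 x (Or.inr hx.1), mul_zero])]
      simp
    rw [h1, h2, hz1, hz2]; ring
  have hwconst : ∀ f : ℝ → ℝ, (∫ x in a..b, w x * f x)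
      = Real.exp (2*s*m a) * ∫ x in a..b, f x := by
    intro f
    rw [show (∫ x in a..b, w x * f x) = ∫ x in a..b, Real.exp (2*s*m a) * f x from
      intervalIntegral.integral_congr (fun x hx => by
        rw [Set.uIcc_of_le hab.le] at hx
        rw [hwdef]; simp only []
        rw [hconst x hx])]
    exact intervalIntegral.integral_const_mul _ _
  obtain ⟨K, _, hK⟩ := lambdaN_set_lb m c hm hc
  have hmem : (∫ x in a..b, ((deriv ψ x)^2 + c x * (ψ x)^2)) ∈
      {l : ℝ | ∃ φ : ℝ → ℝ, ContDiff ℝ 1 φ ∧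
        (∫ x in (0:ℝ)..1, Real.exp (2 * s * m x) * (φ x) ^ 2) = 1 ∧
        l = ∫ x in (0:ℝ)..1, Real.exp (2 * s * m x) * ((deriv φ x) ^ 2 + c x * (φ x) ^ 2)} := by
    refine ⟨fun x => e * ψ x, contDiff_const.mul hψ, ?_, ?_⟩
    · calc (∫ x in (0:ℝ)..1, Real.exp (2*s*m x) * ((fun x => e * ψ x) x) ^ 2)
          = ∫ x in (0:ℝ)..1, e^2 * (w x * (ψ x)^2) := by
            apply intervalIntegral.integral_congr
            intro x _
            simp only [hwdef]; ring
        _ = e^2 * ∫ x in (0:ℝ)..1, w x * (ψ x)^2 := intervalIntegral.integral_const_mul _ _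
        _ = e^2 * ∫ x in a..b, w x * (ψ x)^2 := by
            rw [hsplit (fun x => (ψ x)^2) (hψc.pow 2)
              (fun x hx => by rw [(hzero x hx).1]; ring)]
        _ = e^2 * (Real.exp (2*s*m a) * ∫ x in a..b, (ψ x)^2) := by
            rw [hwconst (fun x => (ψ x)^2)]
        _ = 1 := by rw [hnorm, mul_one]; exact he2
    · refine Eq.symm ?_
      have hderiv : ∀ x, deriv (fun x => e * ψ x) x = e * deriv ψ x :=
        fun x => deriv_const_mul _ (hψd x)
      calc (∫ x in (0:ℝ)..1, Real.exp (2*s*m x) *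
            ((deriv (fun x => e * ψ x) x)^2 + c x * ((fun x => e * ψ x) x)^2))
          = ∫ x in (0:ℝ)..1, e^2 * (w x * ((deriv ψ x)^2 + c x * (ψ x)^2)) := by
            apply intervalIntegral.integral_congr
            intro x _
            simp only [hwdef]
            rw [hderiv x]; ring
        _ = e^2 * ∫ x in (0:ℝ)..1, w x * ((deriv ψ x)^2 + c x * (ψ x)^2) :=
            intervalIntegral.integral_const_mul _ _
        _ = e^2 * ∫ x in a..b, w x * ((deriv ψ x)^2 + c x * (ψ x)^2) := by
            rw [hsplit (fun x => (deriv ψ x)^2 + c x * (ψ x)^2)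
              ((hψ'.pow 2).add (hc.mul (hψc.pow 2)))
              (fun x hx => by rw [(hzero x hx).1, (hzero x hx).2]; ring)]
        _ = e^2 * (Real.exp (2*s*m a) * ∫ x in a..b, ((deriv ψ x)^2 + c x * (ψ x)^2)) := by
            rw [hwconst (fun x => (deriv ψ x)^2 + c x * (ψ x)^2)]
        _ = ∫ x in a..b, ((deriv ψ x)^2 + c x * (ψ x)^2) := by
            rw [← mul_assoc, he2, one_mul]
  exact csInf_le ⟨K, hK s⟩ hmem

end Main
section Final

lemma lambdaIJ_DD_nonempty (c : ℝ → ℝ) (hc : Continuous c) (a b : ℝ) (hab : a < b) :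
    {l : ℝ | ∃ φ : ℝ → ℝ, ContDiff ℝ 1 φ ∧
      ((true : Bool) = true → φ a = 0) ∧ ((true : Bool) = true → φ b = 0) ∧
      (∫ x in a..b, (φ x) ^ 2) = 1 ∧
      l = ∫ x in a..b, ((deriv φ x) ^ 2 + c x * (φ x) ^ 2)}.Nonempty := by
  set p : ℝ → ℝ := fun x => (x - a) * (b - x) with hpdef
  have hpcd : ContDiff ℝ 1 p := ((contDiff_id.sub contDiff_const).mul
    (contDiff_const.sub contDiff_id))
  have hpc : Continuous p := hpcd.continuous
  set I : ℝ := ∫ x in a..b, (p x)^2 with hIdef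
  have hIpos : 0 < I := by
    apply intervalIntegral.intervalIntegral_pos_of_pos_on
      ((hpc.pow 2).intervalIntegrable _ _) _ hab
    intro x hx
    have h1 : 0 < x - a := by linarith [hx.1]
    have h2 : 0 < b - x := by linarith [hx.2]
    have : 0 < p x := by rw [hpdef]; exact mul_pos h1 h2
    exact pow_pos this 2
  have hsI : 0 < Real.sqrt I := Real.sqrt_pos.2 hIpos
  have hs2 : ((Real.sqrt I)⁻¹)^2 = I⁻¹ := by rw [inv_pow, Real.sq_sqrt hIpos.le]
  set φ : ℝ → ℝ := fun x => (Real.sqrt I)⁻¹ * p x with hφdef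
  have hφcd : ContDiff ℝ 1 φ := contDiff_const.mul hpcd
  have hnorm : (∫ x in a..b, (φ x)^2) = 1 := by
    have hcongr : (∫ x in a..b, (φ x)^2) = ∫ x in a..b, I⁻¹ * (p x)^2 := by
      apply intervalIntegral.integral_congr
      intro x _
      rw [hφdef]; simp only []
      rw [mul_pow, hs2]
    rw [hcongr, intervalIntegral.integral_const_mul, ← hIdef, inv_mul_cancel₀ hIpos.ne']
  refine ⟨∫ x in a..b, ((deriv φ x)^2 + c x * (φ x)^2), φ, hφcd, ?_, ?_, hnorm, rfl⟩
  · intro _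
    rw [hφdef, hpdef]; simp
  · intro _
    rw [hφdef, hpdef]; simp

end Final

/-- If `[a,b]` is a segment of local maximum of type `[aᴰ, bᴵ]`, then
`limsup_{s→∞} λ₁ᴺ(s) ≤ λ₁ᴰᴰ(a,b)`. -/
theorem limsup_lambdaN_le_lambdaDD_of_segment_DI
    (m c : ℝ → ℝ) (hm : ContDiff ℝ 2 m) (hc : Continuous c)
    (a b : ℝ) (ha : 0 < a) (hab : a < b) (hb : b < 1)
    (hseg : ∃ ε₀ > (0:ℝ),
      (∀ x ∈ Set.Icc a b, m x = m a) ∧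
      AntitoneOn m (Set.Icc (a - ε₀) a) ∧
      MonotoneOn m (Set.Icc b (b + ε₀)) ∧
      (∀ ε ∈ Set.Ioo (0:ℝ) ε₀,
        (∃ x ∈ Set.Ioo (a - ε) a, deriv m x < 0) ∧
        (∃ y ∈ Set.Ioo b (b + ε), 0 < deriv m y))) :
    Filter.limsup (lambdaN m c) Filter.atTop ≤ lambdaIJ c true true a b := by
  obtain ⟨ε₀, hε₀, hconst, -, -, -⟩ := hseg
  have hmc : Continuous m := hm.continuous
  obtain ⟨K, hKle⟩ := lambdaN_ge m c hmc hc
  have hcb : Filter.IsCoboundedUnder (· ≤ ·) Filter.atTop (lambdaN m c) :=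
    Filter.isCoboundedUnder_le_of_le Filter.atTop hKle
  have hDD := lambdaIJ_DD_nonempty c hc a b hab
  refine le_csInf hDD ?_
  intro l hl
  obtain ⟨φ, hφcd, hφa, hφb, hφn, hleq⟩ := hl
  refine le_of_forall_pos_le_add ?_
  intro δ hδ
  obtain ⟨ψ, hψcd, ⟨u, v, hu, hv, hsupp⟩, hψn, hψE⟩ :=
    exists_cutoff_test c hc a b hab φ hφcd (hφa rfl) (hφb rfl) hφn δ hδ
  have hbound : ∀ s : ℝ, lambdaN m c s ≤ l + δ := by
    intro s
    calc lambdaN m c s ≤ ∫ x in a..b, ((deriv ψ x)^2 + c x * (ψ x)^2) :=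
        lambdaN_le_test m c hmc hc a b ha.le hab hb.le hconst ψ hψcd u v hu hv hsupp hψn s
      _ ≤ (∫ x in a..b, ((deriv φ x)^2 + c x * (φ x)^2)) + δ := hψE
      _ = l + δ := by rw [← hleq]
  exact Filter.limsup_le_of_le hcb (Filter.Eventually.of_forall hbound)
end

section
/- Let Ω₁ = {x ∈ (0,1) : m'(x) ≠ 0} ∪ {0 if m'(0) > 0} ∪ {1 if m'(1) < 0}. Then μ(Ω₁) = 0; that is, μ({x ∈ (0,1) : m'(x) ≠ 0}) = 0, μ({0}) = 0 whenever m'(0) > 0, and μ({1}) = 0 whenever m'(1) < 0. -/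
open MeasureTheory Filter Set

lemma lambda_abs_le (m c : ℝ → ℝ) (hm : Continuous m) (hc : Continuous c)
    (Mc : ℝ) (hMc : ∀ x ∈ Icc (0:ℝ) 1, |c x| ≤ Mc) (s : ℝ) :
    |lambdaN m c s| ≤ Mc := by
  set E : ℝ → ℝ := fun x => Real.exp (2 * s * m x) with hE
  have hEc : Continuous E := (Real.continuous_exp.comp (by fun_prop))
  have hEpos : ∀ x, 0 < E x := fun x => Real.exp_pos _
  set I : ℝ := ∫ x in (0:ℝ)..1, E x with hI
  have hIpos : 0 < I := by
    refine intervalIntegral.intervalIntegral_pos_of_pos_on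
      (hEc.intervalIntegrable _ _) (fun x _ => hEpos x) one_pos
  set S := {l : ℝ | ∃ φ : ℝ → ℝ, ContDiff ℝ 1 φ ∧
    (∫ x in (0:ℝ)..1, Real.exp (2 * s * m x) * (φ x) ^ 2) = 1 ∧
    l = ∫ x in (0:ℝ)..1, Real.exp (2 * s * m x) * ((deriv φ x) ^ 2 + c x * (φ x) ^ 2)} with hS
  -- the constant test function
  have hmem : (∫ x in (0:ℝ)..1, E x * (c x * (1/I))) ∈ S := by
    refine ⟨fun _ => Real.sqrt (1/I), contDiff_const, ?_, ?_⟩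
    · have hsq : (Real.sqrt (1/I)) ^ 2 = 1/I := Real.sq_sqrt (by positivity)
      have : (∫ x in (0:ℝ)..1, Real.exp (2 * s * m x) * (Real.sqrt (1/I)) ^ 2)
          = (∫ x in (0:ℝ)..1, E x) * (1/I) := by
        rw [← intervalIntegral.integral_mul_const]
        simp only [hsq, hE]
      rw [this, ← hI]; field_simp
    · refine intervalIntegral.integral_congr (fun x _ => ?_)
      have hsq : (Real.sqrt (1/I)) ^ 2 = 1/I := Real.sq_sqrt (by positivity)
      simp only [hE, deriv_const', hsq]
      ring
  have hub : (∫ x in (0:ℝ)..1, E x * (c x * (1/I))) ≤ Mc := by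
    have h1 : (∫ x in (0:ℝ)..1, E x * (c x * (1/I))) ≤ ∫ x in (0:ℝ)..1, E x * (Mc * (1/I)) := by
      refine intervalIntegral.integral_mono_on zero_le_one
        ((hEc.mul (hc.mul continuous_const)).intervalIntegrable _ _)
        ((hEc.mul continuous_const).intervalIntegrable _ _) (fun x hx => ?_)
      have := hMc x hx
      have h2 : c x ≤ Mc := (abs_le.mp this).2
      have h3 := (hEpos x).le
      have hIi : 0 ≤ 1/I := by positivity
      exact mul_le_mul_of_nonneg_left (mul_le_mul_of_nonneg_right h2 hIi) h3
    have h2 : (∫ x in (0:ℝ)..1, E x * (Mc * (1/I))) = Mc := by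
      rw [intervalIntegral.integral_mul_const, ← hI]; field_simp
    linarith
  have hlb : ∀ l ∈ S, -Mc ≤ l := by
    rintro l ⟨φ, hφ, hnorm, rfl⟩
    have hφc : Continuous φ := hφ.continuous
    have hφ'c : Continuous (deriv φ) := (hφ.iterate_deriv' 0 1).continuous
    have h1 : (∫ x in (0:ℝ)..1, E x * (-Mc * (φ x)^2))
        ≤ ∫ x in (0:ℝ)..1, Real.exp (2 * s * m x) * ((deriv φ x) ^ 2 + c x * (φ x) ^ 2) := by
      refine intervalIntegral.integral_mono_on zero_le_one
        ((hEc.mul ((continuous_const).mul (hφc.pow 2))).intervalIntegrable _ _)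
        ((hEc.mul (((hφ'c.pow 2)).add (hc.mul (hφc.pow 2)))).intervalIntegrable _ _)
        (fun x hx => ?_)
      have h2 : -Mc ≤ c x := (abs_le.mp (hMc x hx)).1
      have h3 := (hEpos x).le
      have h4 := sq_nonneg (deriv φ x)
      have h5 := sq_nonneg (φ x)
      have key : -Mc * (φ x)^2 ≤ (deriv φ x)^2 + c x * (φ x)^2 := by nlinarith
      exact mul_le_mul_of_nonneg_left key h3
    have h2 : (∫ x in (0:ℝ)..1, E x * (-Mc * (φ x)^2)) = -Mc := by
      have : ∀ x, E x * (-Mc * (φ x)^2) = -Mc * (Real.exp (2*s*m x) * (φ x)^2) := by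
        intro x; simp only [hE]; ring
      rw [intervalIntegral.integral_congr (fun x _ => this x),
        intervalIntegral.integral_const_mul, hnorm, mul_one]
    linarith
  have hMc0 : 0 ≤ Mc := le_trans (abs_nonneg _) (hMc 0 (by norm_num))
  rw [abs_le]
  constructor
  · exact le_csInf ⟨_, hmem⟩ hlb
  · exact le_trans (csInf_le ⟨-Mc, hlb⟩ hmem) hub

lemma key_estimate (m c : ℝ → ℝ) (hm : ContDiff ℝ 2 m) (hc : Continuous c)
    (s lam : ℝ) (hs : 0 < s) (w : ℝ → ℝ)
    (hw2 : ContDiff ℝ 2 w)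
    (hode : ∀ x ∈ Ioo (0:ℝ) 1, -(deriv (deriv w) x)
      + (s^2*(deriv m x)^2 + s*deriv (deriv m) x + c x) * w x = lam * w x)
    (hb0 : deriv w 0 = s * w 0 * deriv m 0) (hb1 : deriv w 1 = s * w 1 * deriv m 1)
    (hnorm : (∫ x in (0:ℝ)..1, (w x)^2) = 1)
    (η : ℝ → ℝ) (hη : ContDiff ℝ 1 η)
    (hη0 : 0 ≤ deriv m 0 * η 0 ^ 2) (hη1 : deriv m 1 * η 1 ^ 2 ≤ 0)
    (K : ℝ)
    (hK : ∀ x ∈ Icc (0:ℝ) 1,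
      -((s * deriv (deriv m) x + c x - lam) * η x ^ 2) + (deriv η x)^2 ≤ K) :
    s^2 * ∫ x in (0:ℝ)..1, (deriv m x)^2 * (w x)^2 * (η x)^2 ≤ K := by
  -- continuity facts
  have hwc : Continuous w := hw2.continuous
  have hw'c : Continuous (deriv w) := (hw2.iterate_deriv' 1 1).continuous
  have hw''c : Continuous (deriv (deriv w)) := by
    have := (hw2.iterate_deriv' 0 2).continuous
    simpa [Function.iterate_succ, Function.comp] using this
  have hm'c : Continuous (deriv m) := (hm.iterate_deriv' 1 1).continuous
  have hm''c : Continuous (deriv (deriv m)) := by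
    have := (hm.iterate_deriv' 0 2).continuous
    simpa [Function.iterate_succ, Function.comp] using this
  have hηc : Continuous η := hη.continuous
  have hη'c : Continuous (deriv η) := (hη.iterate_deriv' 0 1).continuous
  -- derivatives as HasDerivAt
  have hwd : ∀ x, HasDerivAt w (deriv w x) x := fun x =>
    ((hw2.differentiable (by norm_num)) x).hasDerivAt
  have hwd2 : ∀ x, HasDerivAt (deriv w) (deriv (deriv w) x) x := fun x =>
    (((hw2.iterate_deriv' 1 1).differentiable (by norm_num)) x).hasDerivAt
  have hηd : ∀ x, HasDerivAt η (deriv η x) x := fun x =>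
    ((hη.differentiable (by norm_num)) x).hasDerivAt
  have hη2d : ∀ x, HasDerivAt (fun y => η y ^ 2) (2 * η x * deriv η x) x := fun x => by
    simpa [mul_comm, mul_assoc, mul_left_comm] using (hηd x).fun_pow 2
  set G : ℝ → ℝ := fun x => deriv (deriv w) x * (w x * η x ^ 2)
    + deriv w x * (deriv w x * η x ^ 2 + w x * (2 * η x * deriv η x)) with hG
  have hFd : ∀ x, HasDerivAt (fun y => deriv w y * (w y * η y ^ 2)) (G x) x := fun x =>
    (hwd2 x).mul ((hwd x).mul (hη2d x))
  have hGc : Continuous G := by fun_prop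
  have hFTC : ∫ x in (0:ℝ)..1, G x
      = deriv w 1 * (w 1 * η 1 ^ 2) - deriv w 0 * (w 0 * η 0 ^ 2) :=
    intervalIntegral.integral_eq_sub_of_hasDerivAt (fun x _ => hFd x)
      (hGc.intervalIntegrable _ _)
  set H : ℝ → ℝ := fun x => (s * deriv (deriv m) x + c x - lam) * (w x)^2 * (η x)^2
    + (deriv w x)^2 * (η x)^2 + 2 * w x * deriv w x * η x * deriv η x with hH
  set A : ℝ → ℝ := fun x => s^2 * ((deriv m x)^2 * (w x)^2 * (η x)^2) with hA
  have hHc : Continuous H := by fun_prop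
  have hAc : Continuous A := by fun_prop
  have hae1 : ∀ᵐ x : ℝ, x ≠ (1:ℝ) := by
    rw [MeasureTheory.ae_iff]
    convert Real.volume_singleton (a := 1) using 2
    ext x; simp
  have hGcongr : ∫ x in (0:ℝ)..1, G x = ∫ x in (0:ℝ)..1, (A x + H x) := by
    rw [intervalIntegral.integral_of_le zero_le_one,
      intervalIntegral.integral_of_le zero_le_one]
    refine MeasureTheory.setIntegral_congr_ae measurableSet_Ioc ?_
    filter_upwards [hae1] with x hx1 hxI
    have hxo : x ∈ Ioo (0:ℝ) 1 := ⟨hxI.1, lt_of_le_of_ne hxI.2 hx1⟩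
    have hx := hode x hxo
    have hsub : deriv (deriv w) x
        = (s^2*(deriv m x)^2 + s*deriv (deriv m) x + c x) * w x - lam * w x := by
      linarith
    simp only [hG, hA, hH, hsub]; ring
  have hsplit : ∫ x in (0:ℝ)..1, (A x + H x)
      = (∫ x in (0:ℝ)..1, A x) + ∫ x in (0:ℝ)..1, H x :=
    intervalIntegral.integral_add (hAc.intervalIntegrable _ _) (hHc.intervalIntegrable _ _)
  have hAint : (∫ x in (0:ℝ)..1, A x)
      = s^2 * ∫ x in (0:ℝ)..1, (deriv m x)^2 * (w x)^2 * (η x)^2 := by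
    rw [← intervalIntegral.integral_const_mul]
  -- boundary term nonpositive
  have hBnd : deriv w 1 * (w 1 * η 1 ^ 2) - deriv w 0 * (w 0 * η 0 ^ 2) ≤ 0 := by
    rw [hb0, hb1]
    have h1 : s * w 1 * deriv m 1 * (w 1 * η 1 ^ 2) = s * (w 1)^2 * (deriv m 1 * η 1 ^ 2) := by
      ring
    have h0 : s * w 0 * deriv m 0 * (w 0 * η 0 ^ 2) = s * (w 0)^2 * (deriv m 0 * η 0 ^ 2) := by
      ring
    rw [h1, h0]
    have t1 : s * (w 1)^2 * (deriv m 1 * η 1 ^ 2) ≤ 0 :=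
      mul_nonpos_of_nonneg_of_nonpos (by positivity) hη1
    have t0 : 0 ≤ s * (w 0)^2 * (deriv m 0 * η 0 ^ 2) :=
      mul_nonneg (by positivity) hη0
    linarith
  -- bound on -∫ H
  have hHbound : (∫ x in (0:ℝ)..1, (-H x)) ≤ K := by
    have hmono : (∫ x in (0:ℝ)..1, (-H x)) ≤ ∫ x in (0:ℝ)..1, K * (w x)^2 := by
      refine intervalIntegral.integral_mono_on zero_le_one
        ((hHc.neg).intervalIntegrable _ _)
        ((continuous_const.mul (hwc.pow 2)).intervalIntegrable _ _) (fun x hx => ?_)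
      have h1 := hK x hx
      have h2 := sq_nonneg (deriv w x * η x + w x * deriv η x)
      have h3 := sq_nonneg (w x)
      have e1 : -H x = (w x)^2 * (-((s * deriv (deriv m) x + c x - lam) * η x ^ 2)
          + (deriv η x)^2) - (deriv w x * η x + w x * deriv η x)^2 := by
        simp only [hH]; ring
      have h4 : (w x)^2 * (-((s * deriv (deriv m) x + c x - lam) * η x ^ 2)
          + (deriv η x)^2) ≤ (w x)^2 * K := mul_le_mul_of_nonneg_left h1 h3
      rw [e1]; nlinarith
    have heq : (∫ x in (0:ℝ)..1, K * (w x)^2) = K := by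
      rw [intervalIntegral.integral_const_mul, hnorm, mul_one]
    linarith
  have hHneg : (∫ x in (0:ℝ)..1, (-H x)) = -∫ x in (0:ℝ)..1, H x :=
    intervalIntegral.integral_neg
  rw [← hAint]
  have : (∫ x in (0:ℝ)..1, A x) = (deriv w 1 * (w 1 * η 1 ^ 2)
      - deriv w 0 * (w 0 * η 0 ^ 2)) - ∫ x in (0:ℝ)..1, H x := by
    rw [← hFTC, hGcongr, hsplit]; ring
  rw [this]
  linarith [hHbound, hHneg, hBnd]

lemma measure_support_zero (μ : Measure ℝ) [IsProbabilityMeasure μ]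
    (f : ℝ → ℝ) (hf : Continuous f) (hf0 : ∀ x, 0 ≤ f x)
    (hint : ∫ x in Icc (0:ℝ) 1, f x ∂μ = 0) :
    μ ({x | f x ≠ 0} ∩ Icc 0 1) = 0 := by
  have hInt : IntegrableOn f (Icc (0:ℝ) 1) μ :=
    hf.continuousOn.integrableOn_compact isCompact_Icc
  have h0 : f =ᵐ[μ.restrict (Icc (0:ℝ) 1)] 0 :=
    (MeasureTheory.integral_eq_zero_iff_of_nonneg hf0 hInt).mp hint
  have hmeas : MeasurableSet {x : ℝ | f x ≠ 0} :=
    (hf.measurable (measurableSet_singleton 0).compl : MeasurableSet (f ⁻¹' {(0:ℝ)}ᶜ))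
  have h1 : μ.restrict (Icc (0:ℝ) 1) {x | f x ≠ 0} = 0 := by
    have := MeasureTheory.ae_iff.mp h0
    simpa using this
  rwa [Measure.restrict_apply hmeas] at h1

/-- `v` is a positive, `L²`-normalized principal eigenfunction (in the transformed
variable `w = e^{s m} φ`) associated with the eigenvalue `lam` and parameter `s`. -/
def IsPrincipalEigenfunction (m c : ℝ → ℝ) (lam s : ℝ) (v : ℝ → ℝ) : Prop :=
  ContDiff ℝ 2 v ∧ (∀ x ∈ Set.Icc (0:ℝ) 1, 0 < v x) ∧
  (∀ x ∈ Set.Ioo (0:ℝ) 1,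
    -(deriv (deriv v) x) + (s ^ 2 * (deriv m x) ^ 2 + s * deriv (deriv m) x + c x) * v x
      = lam * v x) ∧
  deriv v 0 = s * v 0 * deriv m 0 ∧ deriv v 1 = s * v 1 * deriv m 1 ∧
  (∫ x in (0:ℝ)..1, (v x) ^ 2) = 1

lemma eta_integral_zero (m c : ℝ → ℝ) (hm : ContDiff ℝ 2 m) (hc : Continuous c)
    (w : ℝ → ℝ → ℝ)
    (hw : ∀ s > (0:ℝ), IsPrincipalEigenfunction m c (lambdaN m c s) s (w s))
    (μ : Measure ℝ) [IsProbabilityMeasure μ]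
    (sj : ℕ → ℝ) (hsjpos : ∀ j, 0 < sj j) (hsj : Tendsto sj atTop atTop)
    (hweak : ∀ ζ : ℝ → ℝ, Continuous ζ →
      Tendsto (fun j => ∫ x in (0:ℝ)..1, (w (sj j) x) ^ 2 * ζ x) atTop
        (nhds (∫ x in Set.Icc (0:ℝ) 1, ζ x ∂μ)))
    (η : ℝ → ℝ) (hη : ContDiff ℝ 1 η)
    (hη0 : 0 ≤ deriv m 0 * η 0 ^ 2) (hη1 : deriv m 1 * η 1 ^ 2 ≤ 0) :
    ∫ x in Icc (0:ℝ) 1, (deriv m x)^2 * η x ^ 2 ∂μ = 0 := by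
  have hm'c : Continuous (deriv m) := (hm.iterate_deriv' 1 1).continuous
  have hm''c : Continuous (deriv (deriv m)) := by
    have := (hm.iterate_deriv' 0 2).continuous
    simpa [Function.iterate_succ, Function.comp] using this
  have hηc : Continuous η := hη.continuous
  have hη'c : Continuous (deriv η) := (hη.iterate_deriv' 0 1).continuous
  -- bounds on [0,1]
  obtain ⟨Mc, hMc⟩ := isCompact_Icc.exists_bound_of_continuousOn
    (hc.continuousOn : ContinuousOn c (Icc (0:ℝ) 1))
  obtain ⟨B1, hB1⟩ := isCompact_Icc.exists_bound_of_continuousOn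
    (((hm''c.mul (hηc.pow 2))).continuousOn : ContinuousOn (fun x => deriv (deriv m) x * η x ^ 2) (Icc (0:ℝ) 1))
  obtain ⟨B2, hB2⟩ := isCompact_Icc.exists_bound_of_continuousOn
    ((hc.mul (hηc.pow 2)).continuousOn : ContinuousOn (fun x => c x * η x ^ 2) (Icc (0:ℝ) 1))
  obtain ⟨B3, hB3⟩ := isCompact_Icc.exists_bound_of_continuousOn
    ((hηc.pow 2).continuousOn : ContinuousOn (fun x => η x ^ 2) (Icc (0:ℝ) 1))
  obtain ⟨B4, hB4⟩ := isCompact_Icc.exists_bound_of_continuousOn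
    ((hη'c.pow 2).continuousOn : ContinuousOn (fun x => (deriv η x) ^ 2) (Icc (0:ℝ) 1))
  simp only [Real.norm_eq_abs] at hMc hB1 hB2 hB3 hB4
  have hMc' : ∀ x ∈ Icc (0:ℝ) 1, |c x| ≤ Mc := hMc
  have hMc0 : 0 ≤ Mc := le_trans (abs_nonneg _) (hMc 0 (by norm_num))
  set C0 : ℝ := B2 + Mc * B3 + B4 with hC0
  set I : ℕ → ℝ := fun j => ∫ x in (0:ℝ)..1, (deriv m x)^2 * (w (sj j) x)^2 * (η x)^2 with hIdef
  have hInonneg : ∀ j, 0 ≤ I j := fun j =>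
    intervalIntegral.integral_nonneg zero_le_one (fun x _ => by positivity)
  have hIbound : ∀ j, (sj j)^2 * I j ≤ sj j * B1 + C0 := by
    intro j
    obtain ⟨hw2, _, hode, hbc0, hbc1, hnorm⟩ := hw (sj j) (hsjpos j)
    have hlam : |lambdaN m c (sj j)| ≤ Mc := lambda_abs_le m c hm.continuous hc Mc hMc' (sj j)
    refine key_estimate m c hm hc (sj j) (lambdaN m c (sj j)) (hsjpos j) (w (sj j))
      hw2 hode hbc0 hbc1 hnorm η hη hη0 hη1 (sj j * B1 + C0) (fun x hx => ?_)
    have e1 : -((sj j * deriv (deriv m) x + c x - lambdaN m c (sj j)) * η x ^ 2)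
        + (deriv η x)^2
        = -(sj j * (deriv (deriv m) x * η x ^ 2)) - c x * η x ^ 2
          + lambdaN m c (sj j) * η x ^ 2 + (deriv η x)^2 := by ring
    have t1 : -(sj j * (deriv (deriv m) x * η x ^ 2)) ≤ sj j * B1 := by
      have h := (abs_le.mp (hB1 x hx)).1
      have := mul_le_mul_of_nonneg_left (neg_le.mp h) (hsjpos j).le
      simp only [Pi.mul_apply, Pi.pow_apply] at this
      linarith [this]
    have t2 : -(c x * η x ^ 2) ≤ B2 := by
      have := (abs_le.mp (hB2 x hx)).1; simp only [Pi.mul_apply, Pi.pow_apply] at this; linarith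
    have t3 : lambdaN m c (sj j) * η x ^ 2 ≤ Mc * B3 := by
      have h1 : lambdaN m c (sj j) * η x ^ 2 ≤ |lambdaN m c (sj j)| * η x ^ 2 :=
        mul_le_mul_of_nonneg_right (le_abs_self _) (sq_nonneg _)
      have h2 : |lambdaN m c (sj j)| * η x ^ 2 ≤ Mc * η x ^ 2 :=
        mul_le_mul_of_nonneg_right hlam (sq_nonneg _)
      have h3 : η x ^ 2 ≤ B3 := le_trans (le_abs_self _) (hB3 x hx)
      have h4 : Mc * η x ^ 2 ≤ Mc * B3 := mul_le_mul_of_nonneg_left h3 hMc0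
      linarith
    have t4 : (deriv η x)^2 ≤ B4 := le_trans (le_abs_self _) (hB4 x hx)
    rw [e1]; linarith
  -- squeeze
  set g : ℕ → ℝ := fun j => C0 * (sj j)⁻¹ * (sj j)⁻¹ + B1 * (sj j)⁻¹ with hg
  have hIleg : ∀ j, I j ≤ g j := by
    intro j
    have hsp := hsjpos j
    have hb := hIbound j
    have hne : sj j ≠ 0 := ne_of_gt hsp
    have h1 : I j ≤ (sj j * B1 + C0) / (sj j)^2 := by
      rw [le_div_iff₀ (by positivity)]
      linarith [hb]
    have h2 : (sj j * B1 + C0) / (sj j)^2 = g j := by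
      simp only [hg]; field_simp; ring
    exact h2 ▸ h1
  have hgzero : Tendsto g atTop (nhds 0) := by
    have hinv : Tendsto (fun j => (sj j)⁻¹) atTop (nhds 0) := hsj.inv_tendsto_atTop
    have := ((hinv.const_mul C0).mul hinv).add (hinv.const_mul B1)
    simpa using this
  have hIzero : Tendsto I atTop (nhds 0) :=
    squeeze_zero hInonneg hIleg hgzero
  -- identify the limit with the μ-integral
  have hζ : Continuous (fun x => (deriv m x)^2 * η x ^ 2) := (hm'c.pow 2).mul (hηc.pow 2)
  have hJ := hweak (fun x => (deriv m x)^2 * η x ^ 2) hζ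
  have hJI : (fun j => ∫ x in (0:ℝ)..1, (w (sj j) x) ^ 2 * ((deriv m x)^2 * η x ^ 2)) = I := by
    funext j
    exact intervalIntegral.integral_congr (fun x _ => by ring)
  rw [hJI] at hJ
  simpa using tendsto_nhds_unique hJ hIzero

/-- Lemma 2.2: the weak limit measure `μ` gives no mass to
`Ω₁ = {x ∈ (0,1) : m'(x) ≠ 0} ∪ {0 if m'(0) > 0} ∪ {1 if m'(1) < 0}`. -/
theorem measure_zero_on_nondegenerate_set
    (m c : ℝ → ℝ) (hm : ContDiff ℝ 2 m) (hc : Continuous c)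
    (w : ℝ → ℝ → ℝ)
    (hw : ∀ s > (0:ℝ), IsPrincipalEigenfunction m c (lambdaN m c s) s (w s))
    (μ : Measure ℝ) [IsProbabilityMeasure μ] (hμsupp : μ (Set.Icc (0:ℝ) 1)ᶜ = 0)
    (sj : ℕ → ℝ) (hsjpos : ∀ j, 0 < sj j) (hsj : Tendsto sj atTop atTop)
    (hweak : ∀ ζ : ℝ → ℝ, Continuous ζ →
      Tendsto (fun j => ∫ x in (0:ℝ)..1, (w (sj j) x) ^ 2 * ζ x) atTop
        (nhds (∫ x in Set.Icc (0:ℝ) 1, ζ x ∂μ))) :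
    μ {x ∈ Set.Ioo (0:ℝ) 1 | deriv m x ≠ 0} = 0 ∧
    (0 < deriv m 0 → μ {0} = 0) ∧
    (deriv m 1 < 0 → μ {1} = 0) := by
  have hm'c : Continuous (deriv m) := (hm.iterate_deriv' 1 1).continuous
  refine ⟨?_, ?_, ?_⟩
  · -- interior part
    have hS : ∀ n : ℕ, μ ({x | deriv m x ≠ 0}
        ∩ Icc (2/((n:ℝ)+5)) (1 - 2/((n:ℝ)+5)) ∩ Icc 0 1) = 0 := by
      intro n
      set k : ℝ := (n:ℝ)+5 with hk
      have hk0 : (0:ℝ) < k := by positivity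
      have hk4 : (4:ℝ) < k := by simp only [hk]; push_cast; linarith [Nat.cast_nonneg (α := ℝ) n]
      have hrin : (0:ℝ) < 1/2 - 2/k := by
        rw [sub_pos, div_lt_div_iff₀ hk0 (by norm_num)]; linarith
      have hio : (1:ℝ)/2 - 2/k < 1/2 - 1/k := by
        have h12 : (2:ℝ)/k - 1/k = 1/k := by ring
        have h13 : (0:ℝ) < 1/k := by positivity
        linarith
      set b : ContDiffBump ((1:ℝ)/2) := ⟨1/2 - 2/k, 1/2 - 1/k, hrin, hio⟩ with hbdef
      have hb0 : (b : ℝ → ℝ) 0 = 0 := by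
        apply b.zero_of_le_dist
        rw [Real.dist_eq]
        have : b.rOut = 1/2 - 1/k := rfl
        rw [this]
        have : (0:ℝ) < 1/k := by positivity
        rw [abs_of_nonpos (by norm_num)]
        linarith
      have hb1 : (b : ℝ → ℝ) 1 = 0 := by
        apply b.zero_of_le_dist
        rw [Real.dist_eq]
        have : b.rOut = 1/2 - 1/k := rfl
        rw [this]
        have : (0:ℝ) < 1/k := by positivity
        rw [abs_of_nonneg (by norm_num)]
        linarith
      have hint := eta_integral_zero m c hm hc w hw μ sj hsjpos hsj hweak b
        (b.contDiff (n := 1)) (by rw [hb0]; norm_num) (by rw [hb1]; norm_num)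
      have hμf := measure_support_zero μ (fun x => (deriv m x)^2 * (b x)^2)
        ((hm'c.pow 2).mul (b.continuous.pow 2)) (fun x => by positivity) hint
      refine measure_mono_null ?_ hμf
      rintro x ⟨⟨hmx, hxK⟩, hxI⟩
      refine ⟨?_, hxI⟩
      have hball : x ∈ Metric.closedBall ((1:ℝ)/2) b.rIn := by
        have : b.rIn = 1/2 - 2/k := rfl
        rw [this, Real.closedBall_eq_Icc]
        constructor
        · have := hxK.1; linarith
        · have := hxK.2; linarith
      have hone : (b : ℝ → ℝ) x = 1 := b.one_of_mem_closedBall hball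
      simp only [mem_setOf_eq, hone]
      intro hcon
      apply hmx
      have : (deriv m x)^2 = 0 := by nlinarith [hcon]
      exact pow_eq_zero_iff (n := 2) (by norm_num) |>.mp this
    have hsub : {x ∈ Set.Ioo (0:ℝ) 1 | deriv m x ≠ 0}
        ⊆ ⋃ n : ℕ, ({x | deriv m x ≠ 0}
          ∩ Icc (2/((n:ℝ)+5)) (1 - 2/((n:ℝ)+5)) ∩ Icc 0 1) := by
      rintro x ⟨hxo, hmx⟩
      have hx0 : 0 < x := hxo.1
      have hx1 : x < 1 := hxo.2
      obtain ⟨n, hn⟩ := exists_nat_gt (max (2/x) (2/(1-x)))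
      refine mem_iUnion.mpr ⟨n, ⟨⟨hmx, ?_, ?_⟩, ⟨hx0.le, hx1.le⟩⟩⟩
      · have h1 : 2/x < (n:ℝ)+5 := lt_of_le_of_lt (le_max_left _ _) (by linarith)
        have h2 : 2 < ((n:ℝ)+5) * x := by
          rwa [div_lt_iff₀ hx0] at h1
        rw [div_le_iff₀ (by positivity)]
        linarith
      · have h1 : 2/(1-x) < (n:ℝ)+5 := lt_of_le_of_lt (le_max_right _ _) (by linarith)
        have h2 : 2 < ((n:ℝ)+5) * (1-x) := by
          rwa [div_lt_iff₀ (by linarith)] at h1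
        have h3 : 2/((n:ℝ)+5) ≤ 1 - x := by
          rw [div_le_iff₀ (by positivity)]; linarith
        linarith
    exact measure_mono_null hsub (measure_iUnion_null hS)
  · -- point 0
    intro h0
    set b : ContDiffBump ((0:ℝ)) := ⟨1/4, 1/2, by norm_num, by norm_num⟩ with hbdef
    have hb0 : (b : ℝ → ℝ) 0 = 1 := by
      apply b.one_of_mem_closedBall
      have : b.rIn = 1/4 := rfl
      simp [Metric.mem_closedBall, this]
    have hb1 : (b : ℝ → ℝ) 1 = 0 := by
      apply b.zero_of_le_dist
      have : b.rOut = 1/2 := rfl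
      rw [this, Real.dist_eq]; norm_num
    have hint := eta_integral_zero m c hm hc w hw μ sj hsjpos hsj hweak b
      (b.contDiff (n := 1)) (by rw [hb0]; nlinarith) (by rw [hb1]; norm_num)
    have hμf := measure_support_zero μ (fun x => (deriv m x)^2 * (b x)^2)
      ((hm'c.pow 2).mul (b.continuous.pow 2)) (fun x => by positivity) hint
    refine measure_mono_null ?_ hμf
    intro x hx
    rw [mem_singleton_iff] at hx
    subst hx
    refine ⟨?_, by norm_num⟩
    simp only [mem_setOf_eq, hb0]
    positivity
  · -- point 1
    intro h1
    set b : ContDiffBump ((1:ℝ)) := ⟨1/4, 1/2, by norm_num, by norm_num⟩ with hbdef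
    have hb1' : (b : ℝ → ℝ) 1 = 1 := by
      apply b.one_of_mem_closedBall
      have : b.rIn = 1/4 := rfl
      simp [Metric.mem_closedBall, this]
    have hb0' : (b : ℝ → ℝ) 0 = 0 := by
      apply b.zero_of_le_dist
      have : b.rOut = 1/2 := rfl
      rw [this, Real.dist_eq]; norm_num
    have hint := eta_integral_zero m c hm hc w hw μ sj hsjpos hsj hweak b
      (b.contDiff (n := 1)) (by rw [hb0']; norm_num) (by rw [hb1']; nlinarith)
    have hμf := measure_support_zero μ (fun x => (deriv m x)^2 * (b x)^2)
      ((hm'c.pow 2).mul (b.continuous.pow 2)) (fun x => by positivity) hint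
    refine measure_mono_null ?_ hμf
    intro x hx
    rw [mem_singleton_iff] at hx
    subst hx
    refine ⟨?_, by norm_num⟩
    simp only [mem_setOf_eq, hb1']
    have : deriv m 1 ≠ 0 := ne_of_lt h1
    positivity
end
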